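/- arXiv:1005.2248 — 3 statements merged into one kernel-verified Lean document; each statement's English description precedes it below -/
import Mathlib

section
/- Let G be a graph with maximum degree Δ and let c be a proper k-edge-colouring of G with k ≥ Δ + 1. Then there exists a proper edge-colouring c′ of G using at most Δ + 1 colours such that c and c′ are Kempe equivalent as k-edge-colourings. -/
open SimpleGraph

/-- A proper `k`-edge-colouring of `G`: distinct edges sharing a vertex receive
different colours. -/
def IsProperEdgeColoring {V : Type*} (G : SimpleGraph V) (k : ℕ)
    (φ : G.edgeSet → Fin k) : Prop :=
  ∀ e₁ e₂ : G.edgeSet, e₁ ≠ e₂ →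
    (∃ v : V, v ∈ (e₁ : Sym2 V) ∧ v ∈ (e₂ : Sym2 V)) → φ e₁ ≠ φ e₂

/-- The spanning subgraph of `G` consisting of the edges coloured `a` or `b` under `φ`. -/
def kempeGraph {V : Type*} (G : SimpleGraph V) {k : ℕ} (φ : G.edgeSet → Fin k)
    (a b : Fin k) : SimpleGraph V where
  Adj u v := ∃ h : G.Adj u v, φ ⟨s(u, v), h⟩ = a ∨ φ ⟨s(u, v), h⟩ = b
  symm := by
    constructor
    rintro u v ⟨h, hc⟩
    refine ⟨h.symm, ?_⟩
    have he : (⟨s(v, u), h.symm⟩ : G.edgeSet) = ⟨s(u, v), h⟩ :=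
      Subtype.ext (Sym2.eq_swap)
    rw [he]
    exact hc
  loopless := by
    constructor
    rintro v ⟨h, _⟩
    exact G.loopless.irrefl v h

/-- The edge `e` lies in the Kempe chain determined by the colours `a, b` and the
connected component of the vertex `w` in the `(a,b)`-subgraph. -/
def InKempeChain {V : Type*} (G : SimpleGraph V) {k : ℕ} (φ : G.edgeSet → Fin k)
    (a b : Fin k) (w : V) (e : G.edgeSet) : Prop :=
  (φ e = a ∨ φ e = b) ∧ ∃ u ∈ (e : Sym2 V), (kempeGraph G φ a b).Reachable w u

/-- `ψ` is obtained from `φ` by a single Kempe change: the colours `a` and `b` are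
swapped on one connected component of the subgraph induced by the edges coloured
`a` or `b`, and all other edges keep their colour. -/
def KempeChange {V : Type*} (G : SimpleGraph V) (k : ℕ)
    (φ ψ : G.edgeSet → Fin k) : Prop :=
  ∃ (a b : Fin k) (w : V), ∀ e : G.edgeSet,
    (InKempeChain G φ a b w e → ψ e = Equiv.swap a b (φ e)) ∧
    (¬ InKempeChain G φ a b w e → ψ e = φ e)

/-- Kempe equivalence: `ψ` is obtained from `φ` by a finite sequence of Kempe changes. -/
def KempeEquiv {V : Type*} (G : SimpleGraph V) (k : ℕ)
    (φ ψ : G.edgeSet → Fin k) : Prop :=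
  Relation.ReflTransGen (KempeChange G k) φ ψ

namespace KempeAux

open scoped Classical
set_option linter.unusedSectionVars false
set_option linter.unusedVariables false

variable {V : Type*} [Fintype V] [DecidableEq V] {G : SimpleGraph V} [DecidableRel G.Adj]
  {k : ℕ}

/-- colour `c` appears at vertex `y`. -/
def HasCol (G : SimpleGraph V) {k : ℕ} (φ : G.edgeSet → Fin k) (y : V) (c : Fin k) : Prop :=
  ∃ e : G.edgeSet, y ∈ (e : Sym2 V) ∧ φ e = c

/-- swap colours a,b on the Kempe chain through w. -/
noncomputable def swapCol (G : SimpleGraph V) [DecidableRel G.Adj] {k : ℕ}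
    (φ : G.edgeSet → Fin k) (a b : Fin k) (w : V) : G.edgeSet → Fin k :=
  fun e => if InKempeChain G φ a b w e then Equiv.swap a b (φ e) else φ e

lemma uniq_col {φ : G.edgeSet → Fin k} (hφ : IsProperEdgeColoring G k φ)
    {e₁ e₂ : G.edgeSet} {y : V} (h1 : y ∈ (e₁ : Sym2 V)) (h2 : y ∈ (e₂ : Sym2 V))
    (hc : φ e₁ = φ e₂) : e₁ = e₂ := by
  by_contra hne
  exact hφ e₁ e₂ hne ⟨y, h1, h2⟩ hc

lemma edge_repr {e : G.edgeSet} {y : V} (hy : y ∈ (e : Sym2 V)) :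
    ∃ (z : V) (hadj : G.Adj y z), e = ⟨s(y, z), hadj⟩ := by
  obtain ⟨z, hz⟩ := Sym2.mem_iff_exists.mp hy
  have hadj : G.Adj y z := G.mem_edgeSet.mp (hz ▸ e.prop)
  exact ⟨z, hadj, Subtype.ext hz⟩

lemma chain_reach {φ : G.edgeSet → Fin k} {a b : Fin k} {w : V} {e : G.edgeSet}
    (he : InKempeChain G φ a b w e) {y : V} (hy : y ∈ (e : Sym2 V)) :
    (kempeGraph G φ a b).Reachable w y := by
  obtain ⟨hcol, z, hz, hr⟩ := he
  obtain ⟨y', hadj, rfl⟩ := edge_repr hz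
  have hK : (kempeGraph G φ a b).Adj z y' := ⟨hadj, hcol⟩
  rcases Sym2.mem_iff.mp hy with rfl | rfl
  · exact hr
  · exact hr.trans ⟨hK.toWalk⟩

lemma reach_closed {K : SimpleGraph V} {S : Set V} (hS : ∀ x ∈ S, ∀ z, K.Adj x z → z ∈ S) :
    ∀ {x y : V}, x ∈ S → K.Reachable x y → y ∈ S := by
  have : ∀ {x y : V} (p : K.Walk x y), x ∈ S → y ∈ S := by
    intro x y p
    induction p with
    | nil => exact id
    | cons h q ih => intro hx; exact ih (hS _ hx _ h)
  intro x y hx hr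
  obtain ⟨p⟩ := hr
  exact this p hx

lemma kempeChange_swapCol (φ : G.edgeSet → Fin k) (a b : Fin k) (w : V) :
    KempeChange G k φ (swapCol G φ a b w) :=
  ⟨a, b, w, fun e => ⟨fun h => if_pos h, fun h => if_neg h⟩⟩

lemma swapCol_eq_of_not_col {φ : G.edgeSet → Fin k} {a b : Fin k} {w : V} {e : G.edgeSet}
    (h1 : φ e ≠ a) (h2 : φ e ≠ b) : swapCol G φ a b w e = φ e := by
  unfold swapCol
  rw [if_neg]
  rintro ⟨hc, -⟩
  tauto

lemma swapCol_cases (φ : G.edgeSet → Fin k) (a b : Fin k) (w : V) (e : G.edgeSet) :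
    swapCol G φ a b w e = φ e ∨ (φ e = a ∧ swapCol G φ a b w e = b) ∨
      (φ e = b ∧ swapCol G φ a b w e = a) := by
  unfold swapCol
  by_cases h : InKempeChain G φ a b w e
  · rw [if_pos h]
    rcases h.1 with hc | hc
    · exact Or.inr (Or.inl ⟨hc, by rw [hc, Equiv.swap_apply_left]⟩)
    · exact Or.inr (Or.inr ⟨hc, by rw [hc, Equiv.swap_apply_right]⟩)
  · rw [if_neg h]; exact Or.inl rfl

lemma swapCol_col_iff {φ : G.edgeSet → Fin k} {a b : Fin k} {w : V} {e : G.edgeSet} {c : Fin k}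
    (h1 : c ≠ a) (h2 : c ≠ b) : swapCol G φ a b w e = c ↔ φ e = c := by
  constructor
  · intro h
    rcases swapCol_cases φ a b w e with he | ⟨he, he'⟩ | ⟨he, he'⟩
    · rw [← he, h]
    · exact absurd (he'.symm.trans h) h2.symm
    · exact absurd (he'.symm.trans h) h1.symm
  · intro h
    rw [swapCol_eq_of_not_col (by rw [h]; exact h1) (by rw [h]; exact h2), h]

lemma proper_swapCol {φ : G.edgeSet → Fin k} (hφ : IsProperEdgeColoring G k φ)
    (a b : Fin k) (w : V) : IsProperEdgeColoring G k (swapCol G φ a b w) := by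
  intro e₁ e₂ hne hshare heq
  obtain ⟨y, hy1, hy2⟩ := hshare
  have key : ∀ (f₁ f₂ : G.edgeSet) (z : V), z ∈ (f₁ : Sym2 V) → z ∈ (f₂ : Sym2 V) →
      InKempeChain G φ a b w f₁ → ¬ InKempeChain G φ a b w f₂ →
      swapCol G φ a b w f₁ ≠ swapCol G φ a b w f₂ := by
    intro f₁ f₂ z hz1 hz2 h1 h2 he
    unfold swapCol at he
    rw [if_pos h1, if_neg h2] at he
    have hc2 : φ f₂ = a ∨ φ f₂ = b := by
      rcases h1.1 with hc | hc
      · rw [hc, Equiv.swap_apply_left] at he; exact Or.inr he.symm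
      · rw [hc, Equiv.swap_apply_right] at he; exact Or.inl he.symm
    exact h2 ⟨hc2, z, hz2, chain_reach h1 hz1⟩
  by_cases h1 : InKempeChain G φ a b w e₁ <;> by_cases h2 : InKempeChain G φ a b w e₂
  · unfold swapCol at heq
    rw [if_pos h1, if_pos h2] at heq
    exact hφ e₁ e₂ hne ⟨y, hy1, hy2⟩ ((Equiv.swap a b).injective heq)
  · exact key e₁ e₂ y hy1 hy2 h1 h2 heq
  · exact key e₂ e₁ y hy2 hy1 h2 h1 heq.symm
  · unfold swapCol at heq
    rw [if_neg h1, if_neg h2] at heq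
    exact hφ e₁ e₂ hne ⟨y, hy1, hy2⟩ heq

lemma swapCol_eq_of_not_reach {φ : G.edgeSet → Fin k} {a b : Fin k} {w : V} {e : G.edgeSet}
    {y : V} (hy : y ∈ (e : Sym2 V)) (hr : ¬ (kempeGraph G φ a b).Reachable w y) :
    swapCol G φ a b w e = φ e :=
  if_neg (fun hc => hr (chain_reach hc hy))

lemma hasCol_of_not_reach {φ : G.edgeSet → Fin k} {a b : Fin k} {w : V} {y : V}
    (hr : ¬ (kempeGraph G φ a b).Reachable w y) (c : Fin k) :
    HasCol G (swapCol G φ a b w) y c ↔ HasCol G φ y c := by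
  constructor
  · rintro ⟨e, hy, he⟩
    exact ⟨e, hy, by rw [← swapCol_eq_of_not_reach hy hr]; exact he⟩
  · rintro ⟨e, hy, he⟩
    exact ⟨e, hy, by rw [swapCol_eq_of_not_reach hy hr]; exact he⟩

lemma hasCol_gain {φ : G.edgeSet → Fin k} {a b : Fin k} {w : V} {y : V} {c : Fin k}
    (h : HasCol G (swapCol G φ a b w) y c) : c = a ∨ c = b ∨ HasCol G φ y c := by
  obtain ⟨e, hy, he⟩ := h
  rcases swapCol_cases φ a b w e with h' | ⟨h', h''⟩ | ⟨h', h''⟩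
  · exact Or.inr (Or.inr ⟨e, hy, by rw [← h', he]⟩)
  · rw [h''] at he; exact Or.inr (Or.inl he.symm)
  · rw [h''] at he; exact Or.inl he.symm

lemma hasCol_iff_of_ne {φ : G.edgeSet → Fin k} {a b : Fin k} {w : V} {y : V} {c : Fin k}
    (h1 : c ≠ a) (h2 : c ≠ b) :
    HasCol G (swapCol G φ a b w) y c ↔ HasCol G φ y c := by
  constructor <;> rintro ⟨e, hy, he⟩ <;> exact ⟨e, hy, by
    first
      | exact (swapCol_col_iff h1 h2).mp he
      | exact (swapCol_col_iff h1 h2).mpr he⟩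


lemma singleton_swap {φ : G.edgeSet → Fin k} (hφ : IsProperEdgeColoring G k φ)
    {u v : V} (hadj : G.Adj u v) {a b : Fin k}
    (he : φ ⟨s(u, v), hadj⟩ = a) (hub : ¬ HasCol G φ u b) (hvb : ¬ HasCol G φ v b)
    (hab : a ≠ b) :
    swapCol G φ a b u ⟨s(u, v), hadj⟩ = b ∧
      ∀ f : G.edgeSet, f ≠ ⟨s(u, v), hadj⟩ → swapCol G φ a b u f = φ f := by
  set e₀ : G.edgeSet := ⟨s(u, v), hadj⟩ with he₀
  have hue : u ∈ (e₀ : Sym2 V) := Sym2.mem_iff.mpr (Or.inl rfl)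
  have hve : v ∈ (e₀ : Sym2 V) := Sym2.mem_iff.mpr (Or.inr rfl)
  have hclosed : ∀ x ∈ ({u, v} : Set V), ∀ z, (kempeGraph G φ a b).Adj x z →
      z ∈ ({u, v} : Set V) := by
    rintro x hx z ⟨hadj', hcol⟩
    simp only [Set.mem_insert_iff, Set.mem_singleton_iff] at hx ⊢
    rcases hx with rfl | rfl
    · rcases hcol with hc | hc
      · have : (⟨s(x, z), hadj'⟩ : G.edgeSet) = e₀ :=
          uniq_col hφ (Sym2.mem_iff.mpr (Or.inl rfl)) hue (hc.trans he.symm)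
        have hval : s(x, z) = s(x, v) := congrArg Subtype.val this
        exact Or.inr (Sym2.congr_right.mp hval)
      · exact absurd ⟨_, Sym2.mem_iff.mpr (Or.inl rfl), hc⟩ hub
    · rcases hcol with hc | hc
      · have : (⟨s(x, z), hadj'⟩ : G.edgeSet) = e₀ :=
          uniq_col hφ (Sym2.mem_iff.mpr (Or.inl rfl)) hve (hc.trans he.symm)
        have hval : s(x, z) = s(x, u) := (congrArg Subtype.val this).trans Sym2.eq_swap
        exact Or.inl (Sym2.congr_right.mp hval)
      · exact absurd ⟨_, Sym2.mem_iff.mpr (Or.inl rfl), hc⟩ hvb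
  have chain_iff : ∀ f : G.edgeSet, InKempeChain G φ a b u f ↔ f = e₀ := by
    intro f
    constructor
    · rintro ⟨hcol, z, hz, hr⟩
      have hzS : z ∈ ({u, v} : Set V) := reach_closed hclosed (Set.mem_insert _ _) hr
      simp only [Set.mem_insert_iff, Set.mem_singleton_iff] at hzS
      rcases hcol with hc | hc
      · rcases hzS with rfl | rfl
        · exact uniq_col hφ hz hue (hc.trans he.symm)
        · exact uniq_col hφ hz hve (hc.trans he.symm)
      · rcases hzS with rfl | rfl
        · exact absurd ⟨f, hz, hc⟩ hub
        · exact absurd ⟨f, hz, hc⟩ hvb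
    · rintro rfl
      exact ⟨Or.inl he, u, hue, Reachable.refl u⟩
  constructor
  · show (if _ then _ else _) = b
    rw [if_pos ((chain_iff e₀).mpr rfl), he, Equiv.swap_apply_left]
  · intro f hf
    exact if_neg (fun h => hf ((chain_iff f).mp h))

/-- number of edges coloured with a "high" colour (≥ Δ+1). -/
noncomputable def badCount (G : SimpleGraph V) [DecidableRel G.Adj] {k : ℕ}
    (φ : G.edgeSet → Fin k) : ℕ :=
  (Finset.univ.filter fun e : G.edgeSet => G.maxDegree + 1 ≤ ((φ e : Fin k) : ℕ)).card

lemma badCount_singleton {φ : G.edgeSet → Fin k} (hφ : IsProperEdgeColoring G k φ)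
    {u v : V} (hadj : G.Adj u v) {a b : Fin k}
    (he : φ ⟨s(u, v), hadj⟩ = a) (hub : ¬ HasCol G φ u b) (hvb : ¬ HasCol G φ v b)
    (ha : G.maxDegree + 1 ≤ (a : ℕ)) (hb : (b : ℕ) < G.maxDegree + 1) :
    badCount G (swapCol G φ a b u) < badCount G φ := by
  have hab : a ≠ b := by intro h; rw [h] at ha; omega
  obtain ⟨h1, h2⟩ := singleton_swap hφ hadj he hub hvb hab
  apply Finset.card_lt_card
  rw [Finset.ssubset_iff_of_subset]
  · refine ⟨⟨s(u, v), hadj⟩, ?_, ?_⟩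
    · simp only [Finset.mem_filter, Finset.mem_univ, true_and]
      rw [he]; exact ha
    · simp only [Finset.mem_filter, Finset.mem_univ, true_and]
      rw [h1]; omega
  · intro f hf
    simp only [Finset.mem_filter, Finset.mem_univ, true_and] at hf ⊢
    by_cases hfe : f = ⟨s(u, v), hadj⟩
    · rw [hfe, h1] at hf; omega
    · rw [← h2 f hfe]; exact hf

lemma badCount_low_eq {φ : G.edgeSet → Fin k} {a b : Fin k} {w : V}
    (ha : (a : ℕ) < G.maxDegree + 1) (hb : (b : ℕ) < G.maxDegree + 1) :
    badCount G (swapCol G φ a b w) = badCount G φ := by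
  unfold badCount
  congr 1
  apply Finset.filter_congr
  intro e _
  rcases swapCol_cases φ a b w e with h | ⟨h1, h2⟩ | ⟨h1, h2⟩
  · rw [h]
  · rw [h1, h2]; exact iff_of_false (by omega) (by omega)
  · rw [h1, h2]; exact iff_of_false (by omega) (by omega)

lemma exists_missing_low (hk : G.maxDegree + 1 ≤ k) (φ : G.edgeSet → Fin k) (y : V) :
    ∃ β : Fin k, (β : ℕ) < G.maxDegree + 1 ∧ ¬ HasCol G φ y β := by
  set D := G.maxDegree with hD
  set Lows : Finset (Fin k) := Finset.univ.filter (fun c : Fin k => (c : ℕ) < D + 1) with hL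
  have hLcard : Lows.card = D + 1 := by
    have himg : Lows = Finset.univ.image (Fin.castLE hk) := by
      ext c
      simp only [hL, Finset.mem_filter, Finset.mem_univ, true_and, Finset.mem_image]
      constructor
      · intro hc
        exact ⟨⟨(c : ℕ), hc⟩, by apply Fin.ext; simp⟩
      · rintro ⟨j, rfl⟩
        simpa using j.isLt
    rw [himg, Finset.card_image_of_injective _ (Fin.castLE_injective hk), Finset.card_univ,
      Fintype.card_fin]
  set P : Finset (Fin k) := Lows.filter (fun c => HasCol G φ y c) with hP
  have hPcard : P.card ≤ G.degree y := by
    rw [← card_incidenceFinset_eq_degree]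
    apply Finset.card_le_card_of_injOn
      (fun c => if h : HasCol G φ y c then ((h.choose : G.edgeSet) : Sym2 V) else s(y, y))
    · intro c hc
      have h : HasCol G φ y c := (Finset.mem_filter.mp hc).2
      show (if h : HasCol G φ y c then ((h.choose : G.edgeSet) : Sym2 V) else s(y, y)) ∈
        (G.incidenceFinset y : Set (Sym2 V))
      rw [dif_pos h, Finset.mem_coe, mem_incidenceFinset]
      exact (SimpleGraph.edge_mem_incidenceSet_iff G).mpr h.choose_spec.1
    · intro c hc c' hc' heq
      have h : HasCol G φ y c := (Finset.mem_filter.mp hc).2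
      have h' : HasCol G φ y c' := (Finset.mem_filter.mp hc').2
      dsimp only at heq
      rw [dif_pos h, dif_pos h'] at heq
      have hee : h.choose = h'.choose := Subtype.ext heq
      rw [← h.choose_spec.2, ← h'.choose_spec.2, hee]
  have hlt : P.card < Lows.card := by
    have := G.degree_le_maxDegree y
    omega
  have hex : ∃ β ∈ Lows, β ∉ P := by
    by_contra hcon
    push_neg at hcon
    exact absurd (Finset.card_le_card hcon) (by omega)
  obtain ⟨β, hβL, hβP⟩ := hex
  refine ⟨β, ?_, ?_⟩
  · exact (Finset.mem_filter.mp hβL).2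
  · intro hcol
    exact hβP (Finset.mem_filter.mpr ⟨hβL, hcol⟩)


lemma first_edge_mem {K : SimpleGraph V} {x y : V} (w : K.Walk x y) (hw : ¬ w.Nil) :
    s(x, w.getVert 1) ∈ w.edges := by
  cases w with
  | nil => exact absurd Walk.Nil.nil hw
  | cons h p =>
    rw [Walk.getVert_cons_succ, Walk.getVert_zero, Walk.edges_cons]
    exact List.mem_cons_self

lemma getVert_one_mem_support {K : SimpleGraph V} {x y : V} (w : K.Walk x y) (hw : ¬ w.Nil) :
    w.getVert 1 ∈ w.support := by
  cases w with
  | nil => exact absurd Walk.Nil.nil hw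
  | cons h p =>
    rw [Walk.getVert_cons_succ, Walk.getVert_zero, Walk.support_cons]
    exact List.mem_cons_of_mem _ p.start_mem_support

lemma eq_of_same_col {φ : G.edgeSet → Fin k} (hφ : IsProperEdgeColoring G k φ)
    {y z₁ z₂ : V} (h1 : G.Adj y z₁) (h2 : G.Adj y z₂)
    (hc : φ ⟨s(y, z₁), h1⟩ = φ ⟨s(y, z₂), h2⟩) : z₁ = z₂ := by
  have := uniq_col hφ (e₁ := ⟨s(y, z₁), h1⟩) (e₂ := ⟨s(y, z₂), h2⟩)
    (Sym2.mem_iff.mpr (Or.inl rfl)) (Sym2.mem_iff.mpr (Or.inl rfl)) hc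
  exact Sym2.congr_right.mp (congrArg Subtype.val this)

lemma deg_two {φ : G.edgeSet → Fin k} (hφ : IsProperEdgeColoring G k φ) {a b : Fin k}
    {y z₁ z₂ z₃ : V} (h1 : (kempeGraph G φ a b).Adj y z₁)
    (h2 : (kempeGraph G φ a b).Adj y z₂) (h3 : (kempeGraph G φ a b).Adj y z₃) :
    z₁ = z₂ ∨ z₁ = z₃ ∨ z₂ = z₃ := by
  obtain ⟨g1, c1⟩ := h1
  obtain ⟨g2, c2⟩ := h2
  obtain ⟨g3, c3⟩ := h3
  rcases c1 with c1 | c1 <;> rcases c2 with c2 | c2 <;> rcases c3 with c3 | c3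
  · exact Or.inl (eq_of_same_col hφ g1 g2 (c1.trans c2.symm))
  · exact Or.inl (eq_of_same_col hφ g1 g2 (c1.trans c2.symm))
  · exact Or.inr (Or.inl (eq_of_same_col hφ g1 g3 (c1.trans c3.symm)))
  · exact Or.inr (Or.inr (eq_of_same_col hφ g2 g3 (c2.trans c3.symm)))
  · exact Or.inr (Or.inr (eq_of_same_col hφ g2 g3 (c2.trans c3.symm)))
  · exact Or.inr (Or.inl (eq_of_same_col hφ g1 g3 (c1.trans c3.symm)))
  · exact Or.inl (eq_of_same_col hφ g1 g2 (c1.trans c2.symm))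
  · exact Or.inl (eq_of_same_col hφ g1 g2 (c1.trans c2.symm))

lemma leaf_nbr_unique {φ : G.edgeSet → Fin k} (hφ : IsProperEdgeColoring G k φ) {a b : Fin k}
    {y : V} (hy : ¬ HasCol G φ y a ∨ ¬ HasCol G φ y b) {z₁ z₂ : V}
    (h1 : (kempeGraph G φ a b).Adj y z₁) (h2 : (kempeGraph G φ a b).Adj y z₂) : z₁ = z₂ := by
  obtain ⟨g1, c1⟩ := h1
  obtain ⟨g2, c2⟩ := h2
  have hmem : ∀ (z : V) (g : G.Adj y z), y ∈ ((⟨s(y, z), g⟩ : G.edgeSet) : Sym2 V) :=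
    fun z g => Sym2.mem_iff.mpr (Or.inl rfl)
  rcases hy with hy | hy
  · have c1' : φ ⟨s(y, z₁), g1⟩ = b := c1.resolve_left (fun h => hy ⟨_, hmem _ g1, h⟩)
    have c2' : φ ⟨s(y, z₂), g2⟩ = b := c2.resolve_left (fun h => hy ⟨_, hmem _ g2, h⟩)
    exact eq_of_same_col hφ g1 g2 (c1'.trans c2'.symm)
  · have c1' : φ ⟨s(y, z₁), g1⟩ = a := c1.resolve_right (fun h => hy ⟨_, hmem _ g1, h⟩)
    have c2' : φ ⟨s(y, z₂), g2⟩ = a := c2.resolve_right (fun h => hy ⟨_, hmem _ g2, h⟩)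
    exact eq_of_same_col hφ g1 g2 (c1'.trans c2'.symm)

lemma walk_closure {K : SimpleGraph V}
    (hdeg : ∀ (y z₁ z₂ z₃ : V), K.Adj y z₁ → K.Adj y z₂ → K.Adj y z₃ →
      z₁ = z₂ ∨ z₁ = z₃ ∨ z₂ = z₃) :
    ∀ {x c : V} (p : K.Walk x c), p.IsPath →
      (∀ z₁ z₂, K.Adj c z₁ → K.Adj c z₂ → z₁ = z₂) →
      ∀ (prev : Set V), (∀ z, K.Adj x z → z ∈ prev ∨ z ∈ p.support) →
      ∀ y ∈ p.support, ∀ z, K.Adj y z → z ∈ prev ∨ z ∈ p.support := by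
  intro x c p
  induction p with
  | nil =>
    intro hp hc prev hx y hy z hz
    rw [Walk.mem_support_nil_iff] at hy
    subst hy
    exact hx z hz
  | @cons x x₁ c hadj q ih =>
    intro hp hc prev hx y hy z hz
    rw [Walk.support_cons] at hy
    rcases List.mem_cons.mp hy with rfl | hyq
    · exact hx z hz
    · have hx₁ : ∀ z, K.Adj x₁ z → z ∈ (prev ∪ {x} : Set V) ∨ z ∈ q.support := by
        intro z' hz'
        by_cases hq : q.Nil
        · have hxc : x₁ = c := hq.eq
          subst hxc
          have : z' = x := hc z' x hz' hadj.symm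
          exact Or.inl (Or.inr this)
        · have h2 : K.Adj x₁ (q.getVert 1) := q.adj_snd hq
          have hmem1 : q.getVert 1 ∈ q.support := getVert_one_mem_support q hq
          have hxns : x ∉ q.support := ((Walk.cons_isPath_iff hadj q).mp hp).2
          rcases hdeg x₁ z' x (q.getVert 1) hz' hadj.symm h2 with h | h | h
          · exact Or.inl (Or.inr h)
          · exact Or.inr (h ▸ hmem1)
          · exact absurd (h ▸ hmem1) hxns
      have hres := ih ((Walk.cons_isPath_iff hadj q).mp hp).1 hc (prev ∪ {x}) hx₁ y hyq z hz
      rw [Walk.support_cons]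
      rcases hres with (hz' | hz') | hz'
      · exact Or.inl hz'
      · exact Or.inr (List.mem_cons.mpr (Or.inl hz'))
      · exact Or.inr (List.mem_cons.mpr (Or.inr hz'))

lemma three_leaf {φ : G.edgeSet → Fin k} (hφ : IsProperEdgeColoring G k φ) {a b : Fin k}
    {w y₁ y₂ : V}
    (l0 : ¬ HasCol G φ w a ∨ ¬ HasCol G φ w b)
    (l1 : ¬ HasCol G φ y₁ a ∨ ¬ HasCol G φ y₁ b)
    (l2 : ¬ HasCol G φ y₂ a ∨ ¬ HasCol G φ y₂ b)
    (h01 : w ≠ y₁) (h02 : w ≠ y₂) (h12 : y₁ ≠ y₂)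
    (r1 : (kempeGraph G φ a b).Reachable w y₁)
    (r2 : (kempeGraph G φ a b).Reachable w y₂) : False := by
  set K := kempeGraph G φ a b with hK
  have hdeg : ∀ (y z₁ z₂ z₃ : V), K.Adj y z₁ → K.Adj y z₂ → K.Adj y z₃ →
      z₁ = z₂ ∨ z₁ = z₃ ∨ z₂ = z₃ := fun y z₁ z₂ z₃ h1 h2 h3 => deg_two hφ h1 h2 h3
  have hu0 : ∀ z₁ z₂, K.Adj w z₁ → K.Adj w z₂ → z₁ = z₂ := fun _ _ h1 h2 =>
    leaf_nbr_unique hφ l0 h1 h2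
  have hu1 : ∀ z₁ z₂, K.Adj y₁ z₁ → K.Adj y₁ z₂ → z₁ = z₂ := fun _ _ h1 h2 =>
    leaf_nbr_unique hφ l1 h1 h2
  have hu2 : ∀ z₁ z₂, K.Adj y₂ z₁ → K.Adj y₂ z₂ → z₁ = z₂ := fun _ _ h1 h2 =>
    leaf_nbr_unique hφ l2 h1 h2
  obtain ⟨p₀⟩ := r1.symm.trans r2
  set p : K.Walk y₁ y₂ := p₀.toPath.1 with hp
  have hPath : p.IsPath := p₀.toPath.2
  have hnil : ¬ p.Nil := Walk.not_nil_of_ne h12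
  have hx : ∀ z, K.Adj y₁ z → z ∈ (∅ : Set V) ∨ z ∈ p.support := by
    intro z hz
    right
    rw [hu1 z (p.getVert 1) hz (p.adj_snd hnil)]
    exact getVert_one_mem_support p hnil
  have hclos := walk_closure hdeg p hPath hu2 ∅ hx
  have hwmem : w ∈ p.support := by
    have : w ∈ {v : V | v ∈ p.support} := by
      refine reach_closed (K := K) (S := {v : V | v ∈ p.support}) ?_ p.start_mem_support r1.symm
      intro x hxs z hz
      rcases hclos x hxs z hz with h | h
      · exact absurd h (Set.notMem_empty z)
      · exact h
    exact this
  -- split the path at w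
  set q := p.takeUntil w hwmem with hq
  set r := p.dropUntil w hwmem with hr
  have hqn : ¬ q.Nil := Walk.not_nil_of_ne (fun h => h01 h.symm)
  have hrn : ¬ r.Nil := Walk.not_nil_of_ne h02
  have hqrn : ¬ q.reverse.Nil := by
    rw [Walk.not_nil_iff_lt_length, Walk.length_reverse]
    rw [Walk.not_nil_iff_lt_length] at hqn
    exact hqn
  have a1 : K.Adj w (q.reverse.getVert 1) := q.reverse.adj_snd hqrn
  have a2 : K.Adj w (r.getVert 1) := r.adj_snd hrn
  have heq12 : q.reverse.getVert 1 = r.getVert 1 := hu0 _ _ a1 a2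
  have e1 : s(w, q.reverse.getVert 1) ∈ q.edges := by
    have := first_edge_mem q.reverse hqrn
    rw [Walk.edges_reverse] at this
    exact List.mem_reverse.mp this
  have e2 : s(w, r.getVert 1) ∈ r.edges := first_edge_mem r hrn
  have hnd : (q.edges ++ r.edges).Nodup := by
    rw [← Walk.edges_append, p.take_spec hwmem]
    exact hPath.isTrail.edges_nodup
  have hdisj := (List.nodup_append'.mp hnd).2.2
  rw [heq12] at e1
  exact hdisj e1 e2


lemma edge_exists_repr (e : G.edgeSet) : ∃ (p q : V) (h : G.Adj p q), e = ⟨s(p, q), h⟩ := by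
  obtain ⟨e', he'⟩ := e
  revert he'
  refine Sym2.ind ?_ e'
  intro p q he'
  exact ⟨p, q, he', rfl⟩

lemma chain_count {φ : G.edgeSet → Fin k} (hφ : IsProperEdgeColoring G k φ)
    {a b : Fin k} {w : V} (c : Fin k) (hc : c = a ∨ c = b) :
    (Finset.univ.filter fun y : V =>
        (kempeGraph G φ a b).Reachable w y ∧ HasCol G φ y c).card
      = 2 * (Finset.univ.filter fun e : G.edgeSet =>
          φ e = c ∧ InKempeChain G φ a b w e).card := by
  classical
  set S : Finset G.edgeSet :=
    Finset.univ.filter (fun e => φ e = c ∧ InKempeChain G φ a b w e) with hS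
  set W : Finset V :=
    Finset.univ.filter (fun y => (kempeGraph G φ a b).Reachable w y ∧ HasCol G φ y c) with hW
  have claim2 : ∀ y ∈ W, (S.filter (fun e : G.edgeSet => y ∈ (e : Sym2 V))).card = 1 := by
    intro y hy
    rw [hW, Finset.mem_filter] at hy
    obtain ⟨-, hreach, hcol⟩ := hy
    obtain ⟨ey, hym, hyc⟩ := hcol
    have : S.filter (fun e : G.edgeSet => y ∈ (e : Sym2 V)) = ({ey} : Finset G.edgeSet) := by
      ext f
      simp only [Finset.mem_filter, Finset.mem_singleton, hS, Finset.mem_univ, true_and]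
      constructor
      · rintro ⟨⟨hfc, -⟩, hyf⟩
        exact uniq_col hφ hyf hym (hfc.trans hyc.symm)
      · rintro rfl
        refine ⟨⟨hyc, ?_, y, hym, hreach⟩, hym⟩
        rcases hc with rfl | rfl
        · exact Or.inl hyc
        · exact Or.inr hyc
    rw [this, Finset.card_singleton]
  have claim1 : ∀ e ∈ S, (W.filter (fun y : V => y ∈ (e : Sym2 V))).card = 2 := by
    intro e he
    rw [hS, Finset.mem_filter] at he
    obtain ⟨-, hec, hch⟩ := he
    obtain ⟨p, q, hadj, rfl⟩ := edge_exists_repr e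
    have hpq : p ≠ q := G.ne_of_adj hadj
    have hmemp : p ∈ ((⟨s(p, q), hadj⟩ : G.edgeSet) : Sym2 V) := Sym2.mem_iff.mpr (Or.inl rfl)
    have hmemq : q ∈ ((⟨s(p, q), hadj⟩ : G.edgeSet) : Sym2 V) := Sym2.mem_iff.mpr (Or.inr rfl)
    have : W.filter (fun y : V => y ∈ ((⟨s(p, q), hadj⟩ : G.edgeSet) : Sym2 V)) = ({p, q} : Finset V) := by
      ext z
      simp only [Finset.mem_filter, Finset.mem_insert, Finset.mem_singleton, hW,
        Finset.mem_univ, true_and]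
      constructor
      · rintro ⟨-, hz⟩
        exact Sym2.mem_iff.mp hz
      · rintro (rfl | rfl)
        · exact ⟨⟨chain_reach hch hmemp, ⟨_, hmemp, hec⟩⟩, hmemp⟩
        · exact ⟨⟨chain_reach hch hmemq, ⟨_, hmemq, hec⟩⟩, hmemq⟩
    rw [this, Finset.card_insert_of_notMem (by simpa using hpq), Finset.card_singleton]
  have hsum : ∑ y ∈ W, (S.filter (fun e : G.edgeSet => y ∈ (e : Sym2 V))).card
      = ∑ e ∈ S, (W.filter (fun y : V => y ∈ (e : Sym2 V))).card := by
    simp_rw [Finset.card_filter]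
    exact Finset.sum_comm
  calc W.card = ∑ y ∈ W, 1 := by rw [Finset.card_eq_sum_ones]
    _ = ∑ y ∈ W, (S.filter (fun e : G.edgeSet => y ∈ (e : Sym2 V))).card :=
        (Finset.sum_congr rfl (fun y hy => (claim2 y hy).symm))
    _ = ∑ e ∈ S, (W.filter (fun y : V => y ∈ (e : Sym2 V))).card := hsum
    _ = ∑ e ∈ S, 2 := Finset.sum_congr rfl claim1
    _ = 2 * S.card := by rw [Finset.sum_const, smul_eq_mul, mul_comm]

lemma badCount_rot_le {φ : G.edgeSet → Fin k} (hφ : IsProperEdgeColoring G k φ)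
    {a b : Fin k} {w : V}
    (ha : G.maxDegree + 1 ≤ (a : ℕ)) (hb : (b : ℕ) < G.maxDegree + 1)
    (hwa : HasCol G φ w a) (hwb : ¬ HasCol G φ w b) :
    badCount G (swapCol G φ a b w) ≤ badCount G φ := by
  classical
  have hab : a ≠ b := by intro h; rw [h] at ha; omega
  set A : Finset G.edgeSet :=
    Finset.univ.filter (fun e => φ e = a ∧ InKempeChain G φ a b w e) with hA
  set B : Finset G.edgeSet :=
    Finset.univ.filter (fun e => φ e = b ∧ InKempeChain G φ a b w e) with hB
  set Wa : Finset V :=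
    Finset.univ.filter (fun y => (kempeGraph G φ a b).Reachable w y ∧ HasCol G φ y a) with hWa
  set Wb : Finset V :=
    Finset.univ.filter (fun y => (kempeGraph G φ a b).Reachable w y ∧ HasCol G φ y b) with hWb
  have hcountA : Wa.card = 2 * A.card := chain_count hφ a (Or.inl rfl)
  have hcountB : Wb.card = 2 * B.card := chain_count hφ b (Or.inr rfl)
  have hsd1 : (Wb \ Wa).card ≤ 1 := by
    rw [Finset.card_le_one]
    intro y₁ hy₁ y₂ hy₂
    by_contra hne
    have hmem : ∀ y ∈ Wb \ Wa, (kempeGraph G φ a b).Reachable w y ∧ ¬ HasCol G φ y a := by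
      intro y hy
      have h1 := (Finset.mem_sdiff.mp hy).1
      have h2 := (Finset.mem_sdiff.mp hy).2
      rw [hWb, Finset.mem_filter] at h1
      refine ⟨h1.2.1, fun hcol => h2 ?_⟩
      rw [hWa, Finset.mem_filter]
      exact ⟨Finset.mem_univ _, h1.2.1, hcol⟩
    obtain ⟨hr1, hna1⟩ := hmem y₁ hy₁
    obtain ⟨hr2, hna2⟩ := hmem y₂ hy₂
    exact three_leaf hφ (Or.inr hwb) (Or.inl hna1) (Or.inl hna2)
      (by intro h; subst h; exact hna1 hwa) (by intro h; subst h; exact hna2 hwa) hne hr1 hr2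
  have hsd2 : 1 ≤ (Wa \ Wb).card := by
    refine Finset.card_pos.mpr ⟨w, Finset.mem_sdiff.mpr ⟨?_, ?_⟩⟩
    · exact Finset.mem_filter.mpr ⟨Finset.mem_univ _, Reachable.refl w, hwa⟩
    · intro hmem
      rw [hWb, Finset.mem_filter] at hmem
      exact hwb hmem.2.2
  have hWble : Wb.card ≤ Wa.card := by
    have h1 := Finset.card_inter_add_card_sdiff Wb Wa
    have h2 := Finset.card_inter_add_card_sdiff Wa Wb
    rw [Finset.inter_comm] at h1
    omega
  have hBA : B.card ≤ A.card := by omega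
  -- the new bad set
  have hset : (Finset.univ.filter fun e : G.edgeSet =>
        G.maxDegree + 1 ≤ ((swapCol G φ a b w e : Fin k) : ℕ))
      = ((Finset.univ.filter fun e : G.edgeSet =>
          G.maxDegree + 1 ≤ ((φ e : Fin k) : ℕ)) \ A) ∪ B := by
    ext e
    simp only [Finset.mem_union, Finset.mem_sdiff, Finset.mem_filter, Finset.mem_univ, true_and,
      hA, hB]
    by_cases hch : InKempeChain G φ a b w e
    · have hsw : swapCol G φ a b w e = Equiv.swap a b (φ e) := if_pos hch
      rcases hch.1 with hcol | hcol
      · have hswb : swapCol G φ a b w e = b := by rw [hsw, hcol, Equiv.swap_apply_left]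
        rw [hswb]
        constructor
        · intro h; omega
        · rintro (⟨-, h2⟩ | ⟨h1, -⟩)
          · exact absurd ⟨hcol, hch⟩ h2
          · exact absurd (hcol.symm.trans h1) hab
      · have hswa : swapCol G φ a b w e = a := by rw [hsw, hcol, Equiv.swap_apply_right]
        rw [hswa]
        exact iff_of_true ha (Or.inr ⟨hcol, hch⟩)
    · have h0 : swapCol G φ a b w e = φ e := if_neg hch
      rw [h0]
      constructor
      · intro h
        exact Or.inl ⟨h, fun hc => hch hc.2⟩
      · rintro (⟨h, -⟩ | ⟨-, h⟩)
        · exact h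
        · exact absurd h hch
  have hAsub : A ⊆ Finset.univ.filter fun e : G.edgeSet =>
      G.maxDegree + 1 ≤ ((φ e : Fin k) : ℕ) := by
    intro e he
    rw [hA, Finset.mem_filter] at he
    rw [Finset.mem_filter]
    exact ⟨Finset.mem_univ _, by rw [he.2.1]; exact ha⟩
  have hcard1 := Finset.card_union_le ((Finset.univ.filter fun e : G.edgeSet =>
      G.maxDegree + 1 ≤ ((φ e : Fin k) : ℕ)) \ A) B
  have hcard2 := Finset.card_sdiff_of_subset hAsub
  have hcard3 := Finset.card_le_card hAsub
  unfold badCount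
  rw [hset]
  omega


lemma rot_seq {h : Fin k} (hh : G.maxDegree + 1 ≤ (h : ℕ)) :
    ∀ (r : ℕ) (ψ : G.edgeSet → Fin k), IsProperEdgeColoring G k ψ →
    ∀ (u : V) (vv : ℕ → V) (aa : ℕ → Fin k) (hadjs : ∀ i, i ≤ r → G.Adj u (vv i)),
    ψ ⟨s(u, vv 0), hadjs 0 (Nat.zero_le _)⟩ = h →
    (∀ (i : ℕ), 1 ≤ i → ∀ (hir : i ≤ r), ψ ⟨s(u, vv i), hadjs i hir⟩ = aa i) →
    (∀ i < r, ¬ HasCol G ψ (vv i) (aa (i + 1))) →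
    (∀ i, 1 ≤ i → i ≤ r → (aa i : ℕ) < G.maxDegree + 1) →
    (∀ i j, 1 ≤ i → i < j → j ≤ r → aa i ≠ aa j) →
    ∃ ψ' : G.edgeSet → Fin k, Relation.ReflTransGen (KempeChange G k) ψ ψ' ∧
      IsProperEdgeColoring G k ψ' ∧ badCount G ψ' ≤ badCount G ψ ∧
      ψ' ⟨s(u, vv r), hadjs r le_rfl⟩ = h ∧
      (∀ (y : V) (c : Fin k), c ≠ h → (∀ i, 1 ≤ i → i ≤ r → c ≠ aa i) →
        (HasCol G ψ' y c ↔ HasCol G ψ y c)) := by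
  intro r
  induction r with
  | zero =>
    intro ψ hψ u vv aa hadjs h0 _ _ _ _
    exact ⟨ψ, Relation.ReflTransGen.refl, hψ, le_rfl, h0, fun _ _ _ _ => Iff.rfl⟩
  | succ r ih =>
    intro ψ hψ u vv aa hadjs h0 h1 h2 h3 h4
    have hγlow : ((aa 1 : Fin k) : ℕ) < G.maxDegree + 1 := h3 1 le_rfl (by omega)
    have hne_h : ∀ j, 1 ≤ j → j ≤ r + 1 → aa j ≠ h := by
      intro j hj hjr hEq
      have := h3 j hj hjr
      rw [hEq] at this
      omega
    have hchange : KempeChange G k ψ (swapCol G ψ h (aa 1) (vv 0)) :=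
      kempeChange_swapCol ψ h (aa 1) (vv 0)
    have hprop1 : IsProperEdgeColoring G k (swapCol G ψ h (aa 1) (vv 0)) :=
      proper_swapCol hψ h (aa 1) (vv 0)
    have htokmem : (vv 0) ∈ ((⟨s(u, vv 0), hadjs 0 (Nat.zero_le _)⟩ : G.edgeSet) : Sym2 V) :=
      Sym2.mem_iff.mpr (Or.inr rfl)
    have hbad : badCount G (swapCol G ψ h (aa 1) (vv 0)) ≤ badCount G ψ :=
      badCount_rot_le hψ hh hγlow ⟨_, htokmem, h0⟩ (h2 0 (Nat.succ_pos r))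
    have hKadj : (kempeGraph G ψ h (aa 1)).Adj u (vv 0) := ⟨hadjs 0 (Nat.zero_le _), Or.inl h0⟩
    have hreach_u : (kempeGraph G ψ h (aa 1)).Reachable (vv 0) u := ⟨hKadj.symm.toWalk⟩
    have hchain1 : InKempeChain G ψ h (aa 1) (vv 0) ⟨s(u, vv 1), hadjs 1 (by omega)⟩ :=
      ⟨Or.inr (h1 1 le_rfl (by omega)), u, Sym2.mem_iff.mpr (Or.inl rfl), hreach_u⟩
    have htok1 : swapCol G ψ h (aa 1) (vv 0) ⟨s(u, vv 1), hadjs 1 (by omega)⟩ = h := by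
      show (if _ then _ else _) = h
      rw [if_pos hchain1, h1 1 le_rfl (by omega), Equiv.swap_apply_right]
    have H1' : ∀ (i : ℕ), 1 ≤ i → ∀ (hir : i ≤ r),
        swapCol G ψ h (aa 1) (vv 0) ⟨s(u, vv (i + 1)), hadjs (i + 1) (by omega)⟩ = aa (i + 1) := by
      intro i hi hir
      rw [swapCol_eq_of_not_col]
      · exact h1 (i + 1) (by omega) (by omega)
      · rw [h1 (i + 1) (by omega) (by omega)]
        exact hne_h (i + 1) (by omega) (by omega)
      · rw [h1 (i + 1) (by omega) (by omega)]
        exact h4 1 (i + 1) le_rfl (by omega) (by omega) |>.symm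
    have H2' : ∀ i < r, ¬ HasCol G (swapCol G ψ h (aa 1) (vv 0)) (vv (i + 1)) (aa (i + 2)) := by
      intro i hi hcol
      rcases hasCol_gain hcol with hEq | hEq | hc
      · exact hne_h (i + 2) (by omega) (by omega) hEq
      · exact h4 1 (i + 2) le_rfl (by omega) (by omega) hEq.symm
      · exact h2 (i + 1) (by omega) hc
    obtain ⟨ψ', hrtg, hprop', hbad', htok', hiff'⟩ := ih (swapCol G ψ h (aa 1) (vv 0)) hprop1 u
      (fun i => vv (i + 1)) (fun i => aa (i + 1)) (fun i hi => hadjs (i + 1) (by omega))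
      htok1 H1' H2' (fun i hi hir => h3 (i + 1) (by omega) (by omega))
      (fun i j hi hij hjr => h4 (i + 1) (j + 1) (by omega) (by omega) (by omega))
    refine ⟨ψ', Relation.ReflTransGen.head hchange hrtg, hprop', le_trans hbad' hbad, htok', ?_⟩
    intro y c hch hcs
    refine (hiff' y c hch (fun i hi hir => hcs (i + 1) (by omega) (by omega))).trans ?_
    exact hasCol_iff_of_ne hch (hcs 1 le_rfl (by omega))

lemma fan_win {h : Fin k} (hh : G.maxDegree + 1 ≤ (h : ℕ))
    {φ : G.edgeSet → Fin k} (hφ : IsProperEdgeColoring G k φ)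
    {u : V} {vv : ℕ → V} {aa : ℕ → Fin k} {r : ℕ}
    (hadjs : ∀ i, i ≤ r → G.Adj u (vv i))
    (h0 : φ ⟨s(u, vv 0), hadjs 0 (Nat.zero_le _)⟩ = h)
    (h1 : ∀ (i : ℕ), 1 ≤ i → ∀ (hir : i ≤ r), φ ⟨s(u, vv i), hadjs i hir⟩ = aa i)
    (h2 : ∀ i < r, ¬ HasCol G φ (vv i) (aa (i + 1)))
    (h3 : ∀ i, 1 ≤ i → i ≤ r → (aa i : ℕ) < G.maxDegree + 1)
    (h4 : ∀ i j, 1 ≤ i → i < j → j ≤ r → aa i ≠ aa j)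
    {γ : Fin k} (hγlow : (γ : ℕ) < G.maxDegree + 1)
    (hγu : ¬ HasCol G φ u γ) (hγr : ¬ HasCol G φ (vv r) γ)
    (hγfresh : ∀ i, 1 ≤ i → i ≤ r → γ ≠ aa i) :
    ∃ ψ, Relation.ReflTransGen (KempeChange G k) φ ψ ∧ IsProperEdgeColoring G k ψ ∧
      badCount G ψ < badCount G φ := by
  obtain ⟨ψ₁, hrtg, hprop, hbad, htok, hiff⟩ := rot_seq hh r φ hφ u vv aa hadjs h0 h1 h2 h3 h4
  have hγh : γ ≠ h := by
    intro hEq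
    rw [hEq] at hγlow
    omega
  have hγu' : ¬ HasCol G ψ₁ u γ := fun hc => hγu ((hiff u γ hγh hγfresh).mp hc)
  have hγr' : ¬ HasCol G ψ₁ (vv r) γ := fun hc => hγr ((hiff _ γ hγh hγfresh).mp hc)
  refine ⟨swapCol G ψ₁ h γ u, ?_, proper_swapCol hprop h γ u, ?_⟩
  · exact hrtg.tail (kempeChange_swapCol ψ₁ h γ u)
  · exact lt_of_lt_of_le (badCount_singleton hprop (hadjs r le_rfl) htok hγu' hγr' hh hγlow) hbad


lemma fan_endgame {h : Fin k} (hh : G.maxDegree + 1 ≤ (h : ℕ)) (hk : G.maxDegree + 1 ≤ k)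
    {φ : G.edgeSet → Fin k} (hφ : IsProperEdgeColoring G k φ)
    {u : V} {vv : ℕ → V} {aa : ℕ → Fin k} {q : ℕ}
    (hadjs : ∀ i, i ≤ q → G.Adj u (vv i))
    (h0 : φ ⟨s(u, vv 0), hadjs 0 (Nat.zero_le _)⟩ = h)
    (h1 : ∀ (i : ℕ), 1 ≤ i → ∀ (hir : i ≤ q), φ ⟨s(u, vv i), hadjs i hir⟩ = aa i)
    (h2 : ∀ i < q, ¬ HasCol G φ (vv i) (aa (i + 1)))
    (h3 : ∀ i, 1 ≤ i → i ≤ q → (aa i : ℕ) < G.maxDegree + 1)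
    (h4 : ∀ i j, 1 ≤ i → i < j → j ≤ q → aa i ≠ aa j)
    {γ : Fin k} {s : ℕ} (hs1 : 1 ≤ s) (hsq : s ≤ q) (hγs : γ = aa s)
    (hγq : ¬ HasCol G φ (vv q) γ) :
    ∃ ψ, Relation.ReflTransGen (KempeChange G k) φ ψ ∧ IsProperEdgeColoring G k ψ ∧
      badCount G ψ < badCount G φ := by
  obtain ⟨β, hβlow, hβu⟩ := exists_missing_low hk φ u
  have hγlow : (γ : ℕ) < G.maxDegree + 1 := by rw [hγs]; exact h3 s hs1 hsq
  have hβfresh : ∀ i, 1 ≤ i → i ≤ q → β ≠ aa i := by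
    intro i hi hiq hEq
    exact hβu ⟨⟨s(u, vv i), hadjs i hiq⟩, Sym2.mem_iff.mpr (Or.inl rfl),
      by rw [h1 i hi hiq, ← hEq]⟩
  have hγu : HasCol G φ u γ :=
    ⟨⟨s(u, vv s), hadjs s hsq⟩, Sym2.mem_iff.mpr (Or.inl rfl), by rw [h1 s hs1 hsq, hγs]⟩
  have hβγ : β ≠ γ := fun hEq => hβu (hEq ▸ hγu)
  have hI2s : ¬ HasCol G φ (vv (s - 1)) γ := by
    have h2' := h2 (s - 1) (by omega)
    rw [show s - 1 + 1 = s by omega] at h2'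
    rw [hγs]
    exact h2'
  -- distinctness of fan vertices
  have hvvne : ∀ i j, i < j → j ≤ q → 1 ≤ j → vv i ≠ vv j := by
    intro i j hij hjq hj1 hEq
    have hedge : (⟨s(u, vv i), hadjs i (by omega)⟩ : G.edgeSet)
        = ⟨s(u, vv j), hadjs j hjq⟩ := Subtype.ext (show s(u, vv i) = s(u, vv j) by rw [hEq])
    by_cases hi0 : i = 0
    · subst hi0
      have hcj : φ ⟨s(u, vv j), hadjs j hjq⟩ = aa j := h1 j hj1 hjq
      have hhj : h = aa j := by rw [← h0, hedge, hcj]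
      have hval : (h : ℕ) = ((aa j : Fin k) : ℕ) := congrArg Fin.val hhj
      have := h3 j hj1 hjq
      omega
    · have hci : φ ⟨s(u, vv i), hadjs i (by omega)⟩ = aa i := h1 i (by omega) (by omega)
      have : aa i = aa j := by rw [← hci, hedge, h1 j hj1 hjq]
      exact h4 i j (by omega) hij hjq this
  by_cases hsb : HasCol G φ (vv (s - 1)) β
  · by_cases hreach : (kempeGraph G φ β γ).Reachable (vv (s - 1)) u
    · -- (b2)
      by_cases hqb : HasCol G φ (vv q) β
      · have hqreach : ¬ (kempeGraph G φ β γ).Reachable (vv q) u := by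
          intro hr
          exact three_leaf hφ (Or.inl hβu) (Or.inr hI2s) (Or.inr hγq)
            (G.ne_of_adj (hadjs (s - 1) (by omega)))
            (G.ne_of_adj (hadjs q le_rfl))
            (hvvne (s - 1) q (by omega) le_rfl (by omega))
            hreach.symm hr.symm
        have hrtg1 : KempeChange G k φ (swapCol G φ β γ (vv q)) :=
          kempeChange_swapCol φ β γ (vv q)
        have hprop1 : IsProperEdgeColoring G k (swapCol G φ β γ (vv q)) :=
          proper_swapCol hφ β γ (vv q)
        have hbadeq : badCount G (swapCol G φ β γ (vv q)) = badCount G φ :=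
          badCount_low_eq hβlow hγlow
        have huedge : ∀ (x : V) (hadj : G.Adj u x),
            swapCol G φ β γ (vv q) ⟨s(u, x), hadj⟩ = φ ⟨s(u, x), hadj⟩ := fun x hadj =>
          swapCol_eq_of_not_reach (Sym2.mem_iff.mpr (Or.inl rfl)) hqreach
        have h0' : swapCol G φ β γ (vv q) ⟨s(u, vv 0), hadjs 0 (Nat.zero_le _)⟩ = h := by
          rw [huedge]
          exact h0
        have h1' : ∀ (i : ℕ), 1 ≤ i → ∀ (hir : i ≤ q),
            swapCol G φ β γ (vv q) ⟨s(u, vv i), hadjs i hir⟩ = aa i := by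
          intro i hi hir
          rw [huedge]
          exact h1 i hi hir
        have hnr : ¬ (kempeGraph G φ β γ).Reachable (vv q) (vv (s - 1)) :=
          fun hr => hqreach (hr.trans hreach)
        have h2' : ∀ i < q, ¬ HasCol G (swapCol G φ β γ (vv q)) (vv i) (aa (i + 1)) := by
          intro i hiq hcol
          by_cases his : i = s - 1
          · rw [his] at hcol
            have hcol' := (hasCol_of_not_reach hnr (aa (s - 1 + 1))).mp hcol
            rw [show s - 1 + 1 = s by omega] at hcol'
            exact hI2s (by rw [hγs]; exact hcol')
          · rcases hasCol_gain hcol with hEq | hEq | hc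
            · exact hβfresh (i + 1) (by omega) (by omega) hEq.symm
            · have hne : i + 1 ≠ s := by omega
              rcases Nat.lt_or_ge (i + 1) s with hlt | hge
              · exact h4 (i + 1) s (by omega) hlt hsq (hEq.trans hγs)
              · exact h4 s (i + 1) hs1 (by omega) (by omega) (hγs.symm.trans hEq.symm)
            · exact h2 i hiq hc
        have hβu' : ¬ HasCol G (swapCol G φ β γ (vv q)) u β :=
          fun hc => hβu ((hasCol_of_not_reach hqreach β).mp hc)
        have hβq' : ¬ HasCol G (swapCol G φ β γ (vv q)) (vv q) β := by
          rintro ⟨e, hmem, hcol⟩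
          rcases swapCol_cases φ β γ (vv q) e with hcase | ⟨hc1, hc2⟩ | ⟨hc1, hc2⟩
          · have hfe : φ e = β := by rw [← hcase]; exact hcol
            have hch : InKempeChain G φ β γ (vv q) e :=
              ⟨Or.inl hfe, vv q, hmem, Reachable.refl _⟩
            have hgam : swapCol G φ β γ (vv q) e = γ := by
              show (if _ then _ else _) = γ
              rw [if_pos hch, hfe, Equiv.swap_apply_left]
            exact hβγ (hcol.symm.trans hgam)
          · exact hβγ (hcol.symm.trans hc2)
          · exact hγq ⟨e, hmem, hc1⟩
        obtain ⟨ψ, hrtgw, hpropw, hbadw⟩ := fan_win hh hprop1 hadjs h0' h1' h2' h3 h4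
          hβlow hβu' hβq' hβfresh
        exact ⟨ψ, Relation.ReflTransGen.head hrtg1 hrtgw, hpropw, by rw [← hbadeq]; exact hbadw⟩
      · exact fan_win hh hφ hadjs h0 h1 h2 h3 h4 hβlow hβu hqb hβfresh
    · -- (b1)
      have hrtg1 : KempeChange G k φ (swapCol G φ β γ (vv (s - 1))) :=
        kempeChange_swapCol φ β γ (vv (s - 1))
      have hprop1 : IsProperEdgeColoring G k (swapCol G φ β γ (vv (s - 1))) :=
        proper_swapCol hφ β γ (vv (s - 1))
      have hbadeq : badCount G (swapCol G φ β γ (vv (s - 1))) = badCount G φ :=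
        badCount_low_eq hβlow hγlow
      have huedge : ∀ (x : V) (hadj : G.Adj u x),
          swapCol G φ β γ (vv (s - 1)) ⟨s(u, x), hadj⟩ = φ ⟨s(u, x), hadj⟩ := fun x hadj =>
        swapCol_eq_of_not_reach (Sym2.mem_iff.mpr (Or.inl rfl)) hreach
      have hadjs' : ∀ i, i ≤ s - 1 → G.Adj u (vv i) := fun i hi => hadjs i (by omega)
      have h0' : swapCol G φ β γ (vv (s - 1)) ⟨s(u, vv 0), hadjs' 0 (Nat.zero_le _)⟩ = h := by
        rw [huedge]
        exact h0
      have h1' : ∀ (i : ℕ), 1 ≤ i → ∀ (hir : i ≤ s - 1),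
          swapCol G φ β γ (vv (s - 1)) ⟨s(u, vv i), hadjs' i hir⟩ = aa i := by
        intro i hi hir
        rw [huedge]
        exact h1 i hi (by omega)
      have h2' : ∀ i < s - 1, ¬ HasCol G (swapCol G φ β γ (vv (s - 1))) (vv i) (aa (i + 1)) := by
        intro i hiq hcol
        rcases hasCol_gain hcol with hEq | hEq | hc
        · exact hβfresh (i + 1) (by omega) (by omega) hEq.symm
        · exact h4 (i + 1) s (by omega) (by omega) hsq (hEq.trans hγs)
        · exact h2 i (by omega) hc
      have hβu' : ¬ HasCol G (swapCol G φ β γ (vv (s - 1))) u β :=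
        fun hc => hβu ((hasCol_of_not_reach hreach β).mp hc)
      have hβs' : ¬ HasCol G (swapCol G φ β γ (vv (s - 1))) (vv (s - 1)) β := by
        rintro ⟨e, hmem, hcol⟩
        rcases swapCol_cases φ β γ (vv (s - 1)) e with hcase | ⟨hc1, hc2⟩ | ⟨hc1, hc2⟩
        · have hfe : φ e = β := by rw [← hcase]; exact hcol
          have hch : InKempeChain G φ β γ (vv (s - 1)) e :=
            ⟨Or.inl hfe, vv (s - 1), hmem, Reachable.refl _⟩
          have hgam : swapCol G φ β γ (vv (s - 1)) e = γ := by
            show (if _ then _ else _) = γ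
            rw [if_pos hch, hfe, Equiv.swap_apply_left]
          exact hβγ (hcol.symm.trans hgam)
        · exact hβγ (hcol.symm.trans hc2)
        · exact hI2s ⟨e, hmem, hc1⟩
      obtain ⟨ψ, hrtgw, hpropw, hbadw⟩ := fan_win hh hprop1 hadjs' h0' h1'
        h2' (fun i hi hir => h3 i hi (by omega))
        (fun i j hi hij hjr => h4 i j hi hij (by omega))
        hβlow hβu' hβs' (fun i hi hir => hβfresh i hi (by omega))
      exact ⟨ψ, Relation.ReflTransGen.head hrtg1 hrtgw, hpropw, by rw [← hbadeq]; exact hbadw⟩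
  · exact fan_win hh hφ (fun i hi => hadjs i (by omega)) h0
      (fun i hi hir => h1 i hi (by omega)) (fun i hi => h2 i (by omega))
      (fun i hi hir => h3 i hi (by omega))
      (fun i j hi hij hjr => h4 i j hi hij (by omega))
      hβlow hβu hsb (fun i hi hir => hβfresh i hi (by omega))


lemma fan_core {h : Fin k} (hh : G.maxDegree + 1 ≤ (h : ℕ)) (hk : G.maxDegree + 1 ≤ k)
    {φ : G.edgeSet → Fin k} (hφ : IsProperEdgeColoring G k φ)
    {u : V} {vv : ℕ → V} {aa : ℕ → Fin k} {q : ℕ}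
    (hadjs : ∀ i, i ≤ q → G.Adj u (vv i))
    (h0 : φ ⟨s(u, vv 0), hadjs 0 (Nat.zero_le _)⟩ = h)
    (h1 : ∀ (i : ℕ), 1 ≤ i → ∀ (hir : i ≤ q), φ ⟨s(u, vv i), hadjs i hir⟩ = aa i)
    (h2 : ∀ i < q, ¬ HasCol G φ (vv i) (aa (i + 1)))
    (h3 : ∀ i, 1 ≤ i → i ≤ q → (aa i : ℕ) < G.maxDegree + 1)
    (h4 : ∀ i j, 1 ≤ i → i < j → j ≤ q → aa i ≠ aa j)
    (hext : ∀ γ : Fin k, (γ : ℕ) < G.maxDegree + 1 → (∀ i, 1 ≤ i → i ≤ q → γ ≠ aa i) →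
      HasCol G φ u γ → ¬ HasCol G φ (vv q) γ →
      ∃ ψ, Relation.ReflTransGen (KempeChange G k) φ ψ ∧ IsProperEdgeColoring G k ψ ∧
        badCount G ψ < badCount G φ) :
    ∃ ψ, Relation.ReflTransGen (KempeChange G k) φ ψ ∧ IsProperEdgeColoring G k ψ ∧
      badCount G ψ < badCount G φ := by
  obtain ⟨γ, hγlow, hγq⟩ := exists_missing_low hk φ (vv q)
  by_cases hrep : ∃ s, 1 ≤ s ∧ s ≤ q ∧ γ = aa s
  · obtain ⟨s, hs1, hsq, hγs⟩ := hrep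
    exact fan_endgame hh hk hφ hadjs h0 h1 h2 h3 h4 hs1 hsq hγs hγq
  · push_neg at hrep
    have hfresh : ∀ i, 1 ≤ i → i ≤ q → γ ≠ aa i := fun i hi hiq => hrep i hi hiq
    by_cases hγu : HasCol G φ u γ
    · exact hext γ hγlow hfresh hγu hγq
    · exact fan_win hh hφ hadjs h0 h1 h2 h3 h4 hγlow hγu hγq hfresh

lemma fan_rec {h : Fin k} (hh : G.maxDegree + 1 ≤ (h : ℕ)) (hk : G.maxDegree + 1 ≤ k)
    {φ : G.edgeSet → Fin k} (hφ : IsProperEdgeColoring G k φ) (u : V) :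
    ∀ (fuel q : ℕ) (vv : ℕ → V) (aa : ℕ → Fin k)
      (hadjs : ∀ i, i ≤ q → G.Adj u (vv i)),
      φ ⟨s(u, vv 0), hadjs 0 (Nat.zero_le _)⟩ = h →
      (∀ (i : ℕ), 1 ≤ i → ∀ (hir : i ≤ q), φ ⟨s(u, vv i), hadjs i hir⟩ = aa i) →
      (∀ i < q, ¬ HasCol G φ (vv i) (aa (i + 1))) →
      (∀ i, 1 ≤ i → i ≤ q → (aa i : ℕ) < G.maxDegree + 1) →
      (∀ i j, 1 ≤ i → i < j → j ≤ q → aa i ≠ aa j) →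
      (k - (Finset.image aa (Finset.Icc 1 q)).card ≤ fuel) →
      ∃ ψ, Relation.ReflTransGen (KempeChange G k) φ ψ ∧ IsProperEdgeColoring G k ψ ∧
        badCount G ψ < badCount G φ := by
  intro fuel
  induction fuel with
  | zero =>
    intro q vv aa hadjs h0 h1 h2 h3 h4 hfuel
    refine fan_core hh hk hφ hadjs h0 h1 h2 h3 h4 ?_
    intro γ hγlow hfresh hγu hγq
    exfalso
    have hγnm : γ ∉ Finset.image aa (Finset.Icc 1 q) := by
      intro hmem
      obtain ⟨i, hi, hEq⟩ := Finset.mem_image.mp hmem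
      rw [Finset.mem_Icc] at hi
      exact hfresh i hi.1 hi.2 hEq.symm
    have hins : (insert γ (Finset.image aa (Finset.Icc 1 q))).card ≤ k :=
      le_trans (Finset.card_le_univ _) (by simp)
    rw [Finset.card_insert_of_notMem hγnm] at hins
    omega
  | succ n ihn =>
    intro q vv aa hadjs h0 h1 h2 h3 h4 hfuel
    refine fan_core hh hk hφ hadjs h0 h1 h2 h3 h4 ?_
    intro γ hγlow hfresh hγu hγq
    obtain ⟨e, hue, hec⟩ := hγu
    obtain ⟨x, hadjx, hEq⟩ := edge_repr hue
    have hex : φ ⟨s(u, x), hadjx⟩ = γ := by rw [← hEq]; exact hec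
    set vv' : ℕ → V := fun i => if i = q + 1 then x else vv i with hvv'
    set aa' : ℕ → Fin k := fun i => if i = q + 1 then γ else aa i with haa'
    have hvv'le : ∀ i, i ≤ q → vv' i = vv i := fun i hi => if_neg (by omega)
    have haa'le : ∀ i, i ≤ q → aa' i = aa i := fun i hi => if_neg (by omega)
    have hvv'top : vv' (q + 1) = x := if_pos rfl
    have haa'top : aa' (q + 1) = γ := if_pos rfl
    have hadjs' : ∀ i, i ≤ q + 1 → G.Adj u (vv' i) := by
      intro i hi
      by_cases hiq : i = q + 1
      · rw [hiq, hvv'top]; exact hadjx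
      · rw [hvv'le i (by omega)]; exact hadjs i (by omega)
    have hcong : ∀ (x₁ x₂ : V) (hx₁ : G.Adj u x₁) (hx₂ : G.Adj u x₂), x₁ = x₂ →
        φ ⟨s(u, x₁), hx₁⟩ = φ ⟨s(u, x₂), hx₂⟩ := by
      intro x₁ x₂ hx₁ hx₂ hx
      subst hx
      rfl
    have H0 : φ ⟨s(u, vv' 0), hadjs' 0 (Nat.zero_le _)⟩ = h :=
      (hcong _ _ _ (hadjs 0 (Nat.zero_le _)) (hvv'le 0 (by omega))).trans h0
    have H1 : ∀ (i : ℕ), 1 ≤ i → ∀ (hir : i ≤ q + 1), φ ⟨s(u, vv' i), hadjs' i hir⟩ = aa' i := by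
      intro i hi hir
      by_cases hiq : i = q + 1
      · subst hiq
        rw [haa'top]
        exact (hcong _ _ _ hadjx hvv'top).trans hex
      · rw [haa'le i (by omega)]
        exact (hcong _ _ _ (hadjs i (by omega)) (hvv'le i (by omega))).trans (h1 i hi (by omega))
    have H2 : ∀ i < q + 1, ¬ HasCol G φ (vv' i) (aa' (i + 1)) := by
      intro i hi
      by_cases hiq : i = q
      · rw [hiq, hvv'le q le_rfl, haa'top]
        exact hγq
      · rw [hvv'le i (by omega), haa'le (i + 1) (by omega)]
        exact h2 i (by omega)
    have H3 : ∀ i, 1 ≤ i → i ≤ q + 1 → ((aa' i : Fin k) : ℕ) < G.maxDegree + 1 := by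
      intro i hi hiq
      by_cases htop : i = q + 1
      · rw [htop, haa'top]; exact hγlow
      · rw [haa'le i (by omega)]; exact h3 i hi (by omega)
    have H4 : ∀ i j, 1 ≤ i → i < j → j ≤ q + 1 → aa' i ≠ aa' j := by
      intro i j hi hij hjq
      by_cases htop : j = q + 1
      · rw [htop, haa'top, haa'le i (by omega)]
        exact fun hEq2 => hfresh i hi (by omega) hEq2.symm
      · rw [haa'le i (by omega), haa'le j (by omega)]
        exact h4 i j hi hij (by omega)
    have hγnm : γ ∉ Finset.image aa (Finset.Icc 1 q) := by
      intro hmem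
      obtain ⟨i, hi, hEq⟩ := Finset.mem_image.mp hmem
      rw [Finset.mem_Icc] at hi
      exact hfresh i hi.1 hi.2 hEq.symm
    have himg : Finset.image aa' (Finset.Icc 1 (q + 1))
        = insert γ (Finset.image aa (Finset.Icc 1 q)) := by
      ext col
      simp only [Finset.mem_image, Finset.mem_insert, Finset.mem_Icc]
      constructor
      · rintro ⟨i, ⟨hi1, hi2⟩, hEq⟩
        by_cases hiq : i = q + 1
        · subst hiq
          rw [haa'top] at hEq
          exact Or.inl hEq.symm
        · right
          exact ⟨i, ⟨hi1, by omega⟩, by rw [← haa'le i (by omega)]; exact hEq⟩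
      · rintro (rfl | ⟨i, ⟨hi1, hi2⟩, hEq⟩)
        · exact ⟨q + 1, ⟨by omega, le_rfl⟩, haa'top⟩
        · exact ⟨i, ⟨hi1, by omega⟩, by rw [haa'le i (by omega)]; exact hEq⟩
    have Hfuel : k - (Finset.image aa' (Finset.Icc 1 (q + 1))).card ≤ n := by
      rw [himg, Finset.card_insert_of_notMem hγnm]
      omega
    exact ihn (q + 1) vv' aa' hadjs' H0 H1 H2 H3 H4 Hfuel

lemma all_low_of_badCount_zero {φ : G.edgeSet → Fin k} (hz : badCount G φ = 0) :
    ∀ e : G.edgeSet, ((φ e : Fin k) : ℕ) < G.maxDegree + 1 := by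
  intro e
  by_contra hcon
  push_neg at hcon
  have hmem : e ∈ Finset.univ.filter
      (fun e : G.edgeSet => G.maxDegree + 1 ≤ ((φ e : Fin k) : ℕ)) :=
    Finset.mem_filter.mpr ⟨Finset.mem_univ _, hcon⟩
  have := Finset.card_pos.mpr ⟨e, hmem⟩
  unfold badCount at hz
  omega

lemma main_aux (hk : G.maxDegree + 1 ≤ k) :
    ∀ (n : ℕ) (φ : G.edgeSet → Fin k), IsProperEdgeColoring G k φ → badCount G φ ≤ n →
      ∃ ψ : G.edgeSet → Fin k, IsProperEdgeColoring G k ψ ∧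
        (∀ e : G.edgeSet, ((ψ e : Fin k) : ℕ) < G.maxDegree + 1) ∧
        Relation.ReflTransGen (KempeChange G k) φ ψ := by
  intro n
  induction n with
  | zero =>
    intro φ hφ hbad
    exact ⟨φ, hφ, all_low_of_badCount_zero (by omega), Relation.ReflTransGen.refl⟩
  | succ n ihn =>
    intro φ hφ hbad
    by_cases h0 : badCount G φ = 0
    · exact ⟨φ, hφ, all_low_of_badCount_zero h0, Relation.ReflTransGen.refl⟩
    · have hpos : 0 < (Finset.univ.filter
          (fun e : G.edgeSet => G.maxDegree + 1 ≤ ((φ e : Fin k) : ℕ))).card := by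
        have h0' := h0
        unfold badCount at h0'
        omega
      obtain ⟨e₀, he₀⟩ := Finset.card_pos.mp hpos
      obtain ⟨p, x, hadj, rfl⟩ := edge_exists_repr e₀
      have hh : G.maxDegree + 1 ≤ ((φ ⟨s(p, x), hadj⟩ : Fin k) : ℕ) :=
        (Finset.mem_filter.mp he₀).2
      obtain ⟨ψ, hrtg, hprop, hlt⟩ := fan_rec hh hk hφ p k 0 (fun _ => x)
        (fun _ => φ ⟨s(p, x), hadj⟩) (fun _ _ => hadj) rfl
        (fun i hi hir => absurd hi (by omega)) (fun i hi => absurd hi (by omega))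
        (fun i hi hir => absurd hi (by omega)) (fun i j hi hij hjr => absurd hjr (by omega))
        (Nat.sub_le _ _)
      obtain ⟨ψ', hp1, hp2, hp3⟩ := ihn ψ hprop (by omega)
      exact ⟨ψ', hp1, hp2, hrtg.trans hp3⟩

end KempeAux

/-- **Lemma.** If `c` is a proper `k`-edge-colouring of `G` with `k ≥ Δ + 1`, then there
is a proper edge-colouring `c'` of `G` using at most `Δ + 1` colours (i.e. only colours
from `{0, …, Δ}`) such that `c` and `c'` are Kempe equivalent as `k`-edge-colourings. -/
theorem kempe_equiv_to_deltaPlusOne_colouring {V : Type*} [Fintype V]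
    (G : SimpleGraph V) [DecidableRel G.Adj] (k : ℕ) (hk : G.maxDegree + 1 ≤ k)
    (c : G.edgeSet → Fin k) (hc : IsProperEdgeColoring G k c) :
    ∃ c' : G.edgeSet → Fin k, IsProperEdgeColoring G k c' ∧
      (∀ e : G.edgeSet, (c' e : ℕ) < G.maxDegree + 1) ∧
      KempeEquiv G k c c' := by
  classical
  obtain ⟨ψ, h1, h2, h3⟩ := KempeAux.main_aux hk (KempeAux.badCount G c) c hc le_rfl
  exact ⟨ψ, h1, h2, h3⟩
end

section
/- For every prime p ≥ 3, the complete graph K_{2p−1} has a proper (2p−1)-edge-colouring in which the union of any two colour classes forms a Hamiltonian path of K_{2p−1}; consequently there exist proper (2p−1)-edge-colourings of K_{2p−1} that are not Kempe equivalent, i.e. κ_E(K_{2p−1}, 2p−1) > 1. -/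
open SimpleGraph

/-- Two edge-colourings differ only by a permutation of the colour set. -/
def PermRelated {V : Type*} (G : SimpleGraph V) (k : ℕ)
    (φ ψ : G.edgeSet → Fin k) : Prop :=
  ∃ σ : Equiv.Perm (Fin k), ∀ e : G.edgeSet, ψ e = σ (φ e)

/-- Kempe equivalence with colourings differing by a permutation of colours identified. -/
def KempePermEquiv {V : Type*} (G : SimpleGraph V) (k : ℕ)
    (φ ψ : G.edgeSet → Fin k) : Prop :=
  ∃ ψ' : G.edgeSet → Fin k, PermRelated G k ψ ψ' ∧ KempeEquiv G k φ ψ'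


set_option linter.unusedSectionVars false
set_option linter.unusedVariables false

namespace KappaAux

variable (p : ℕ)

abbrev W := ZMod p × Bool

def vstar : W p := (0, true)

variable {p}

def col (u v : W p) : W p :=
  if u.2 = v.2 then ((u.1 + v.1) * (2 : ZMod p)⁻¹, false)
  else
    let a := if u.2 then v.1 else u.1
    let b := if u.2 then u.1 else v.1
    if a = b then (a, false) else (b - a, true)

@[simp] lemma col_ff (x y : ZMod p) :
    col (x, false) (y, false) = ((x + y) * (2 : ZMod p)⁻¹, false) := by simp [col]

@[simp] lemma col_tt (x y : ZMod p) :
    col (x, true) (y, true) = ((x + y) * (2 : ZMod p)⁻¹, false) := by simp [col]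

@[simp] lemma col_ft (x y : ZMod p) :
    col (x, false) (y, true) = if x = y then (x, false) else (y - x, true) := by
  simp [col]

@[simp] lemma col_tf (x y : ZMod p) :
    col (x, true) (y, false) = if y = x then (y, false) else (x - y, true) := by
  simp [col]

lemma col_symm (u v : W p) : col u v = col v u := by
  obtain ⟨x, ε⟩ := u; obtain ⟨y, δ⟩ := v
  cases ε <;> cases δ <;> simp [add_comm, eq_comm]

lemma two_ne_zero' (hp3 : 3 ≤ p) : (2 : ZMod p) ≠ 0 := by
  have : ((2 : ℕ) : ZMod p) ≠ 0 := by
    rw [Ne, ZMod.natCast_eq_zero_iff]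
    intro h
    have := Nat.le_of_dvd (by norm_num) h
    omega
  simpa using this

lemma col_ne_vstar {u v : W p} (h : u ≠ v) : col u v ≠ vstar p := by
  obtain ⟨x, ε⟩ := u; obtain ⟨y, δ⟩ := v
  cases ε <;> cases δ <;> simp only [col_ff, col_tt, col_ft, col_tf, vstar]
  · simp
  · split_ifs with hxy
    · simp
    · simp only [Ne, Prod.mk.injEq, not_and]
      intro h' _
      exact hxy (sub_eq_zero.mp h').symm
  · split_ifs with hxy
    · simp
    · simp only [Ne, Prod.mk.injEq, not_and]
      intro h' _
      exact hxy (sub_eq_zero.mp h').symm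
  · simp

lemma col_inj (hp : p.Prime) (hp3 : 3 ≤ p) {u v w : W p}
    (hv : v ≠ u) (hw : w ≠ u) (h : col u v = col u w) : v = w := by
  have h2 : (2 : ZMod p) ≠ 0 := two_ne_zero' hp3
  haveI : Fact p.Prime := ⟨hp⟩
  have hi2 : (2 : ZMod p)⁻¹ ≠ 0 := inv_ne_zero h2
  have hdiv : ∀ a b : ZMod p, a * (2:ZMod p)⁻¹ = b ↔ a = b * 2 := fun a b => by
    rw [← div_eq_mul_inv, div_eq_iff h2]
  have key : ∀ x y z : ZMod p, (x + y) * (2:ZMod p)⁻¹ = (x + z) * (2:ZMod p)⁻¹ → y = z := by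
    intro x y z hh
    have := mul_right_cancel₀ hi2 hh
    linear_combination this
  obtain ⟨x, ε⟩ := u; obtain ⟨y, δ⟩ := v; obtain ⟨z, γ⟩ := w
  cases ε <;> cases δ <;> cases γ <;>
    simp only [col_ff, col_tt, col_ft, col_tf] at h
  -- (F,F,F)
  · exact Prod.ext (key x y z (congrArg Prod.fst h)) rfl
  -- (F,F,T)
  · split_ifs at h with hxz
    · exfalso
      apply hv
      have h1 : (x + y) * (2:ZMod p)⁻¹ = x := congrArg Prod.fst h
      rw [hdiv] at h1
      have : y = x := by linear_combination h1
      rw [this]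
    · exact absurd (congrArg Prod.snd h) (by simp)
  -- (F,T,F)
  · split_ifs at h with hxy
    · exfalso
      apply hw
      have h1 : (x + z) * (2:ZMod p)⁻¹ = x := (congrArg Prod.fst h).symm
      rw [hdiv] at h1
      have : z = x := by linear_combination h1
      rw [this]
    · exact absurd (congrArg Prod.snd h) (by simp)
  -- (F,T,T)
  · split_ifs at h with hxy hxz hxz
    · rw [← hxy, ← hxz]
    · exact absurd (congrArg Prod.snd h) (by simp)
    · exact absurd (congrArg Prod.snd h) (by simp)
    · have h1 : y - x = z - x := congrArg Prod.fst h
      have : y = z := by linear_combination h1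
      rw [this]
  -- (T,F,F)
  · split_ifs at h with hyx hzx hzx
    · rw [hyx, hzx]
    · exact absurd (congrArg Prod.snd h) (by simp)
    · exact absurd (congrArg Prod.snd h) (by simp)
    · have h1 : x - y = x - z := congrArg Prod.fst h
      have : y = z := by linear_combination -h1
      rw [this]
  -- (T,F,T)
  · split_ifs at h with hyx
    · exfalso
      apply hw
      have h1 : (x + z) * (2:ZMod p)⁻¹ = y := (congrArg Prod.fst h).symm
      rw [hdiv] at h1
      have : z = x := by rw [hyx] at h1; linear_combination h1
      rw [this]
    · exact absurd (congrArg Prod.snd h) (by simp)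
  -- (T,T,F)
  · split_ifs at h with hzx
    · exfalso
      apply hv
      have h1 : (x + y) * (2:ZMod p)⁻¹ = z := congrArg Prod.fst h
      rw [hdiv] at h1
      have : y = x := by rw [hzx] at h1; linear_combination h1
      rw [this]
    · exact absurd (congrArg Prod.snd h) (by simp)
  -- (T,T,T)
  · exact Prod.ext (key x y z (congrArg Prod.fst h)) rfl


/-! ### walk building machinery -/

variable {V : Type*}

def buildWalk (G : SimpleGraph V) (g : ℕ → V) :
    (m : ℕ) → (∀ k, k < m → G.Adj (g k) (g (k+1))) → G.Walk (g 0) (g m)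
  | 0, _ => SimpleGraph.Walk.nil
  | (m+1), h =>
    (buildWalk G g m (fun k hk => h k (Nat.lt_succ_of_lt hk))).concat (h m (Nat.lt_succ_self m))

lemma buildWalk_support (G : SimpleGraph V) (g : ℕ → V) (m : ℕ)
    (h : ∀ k, k < m → G.Adj (g k) (g (k+1))) :
    (buildWalk G g m h).support = (List.range (m+1)).map g := by
  induction m with
  | zero => simp [buildWalk, List.range_succ]
  | succ m ih =>
    rw [buildWalk, SimpleGraph.Walk.support_concat, ih, List.range_succ]
    simp [List.range_succ]

lemma buildWalk_edges (G : SimpleGraph V) (g : ℕ → V) (m : ℕ)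
    (h : ∀ k, k < m → G.Adj (g k) (g (k+1))) :
    (buildWalk G g m h).edges = (List.range m).map (fun k => s(g k, g (k+1))) := by
  induction m with
  | zero => simp [buildWalk]
  | succ m ih =>
    rw [buildWalk, SimpleGraph.Walk.edges_concat, ih, List.range_succ]
    simp

/-! ### encoding -/

section Enc

variable (p : ℕ) [NeZero p]

lemma card_aux (hp3 : 3 ≤ p) :
    Fintype.card {w : W p // w ≠ vstar p} = Fintype.card (Fin (2*p-1)) := by
  have h1 : Fintype.card {w : W p // w ≠ vstar p} = Fintype.card (W p) - 1 := by
    simpa using Fintype.card_subtype_compl (fun w : W p => w = vstar p)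
  rw [h1]
  simp [ZMod.card]
  omega

noncomputable def ev (hp3 : 3 ≤ p) : Fin (2*p-1) ≃ {w : W p // w ≠ vstar p} :=
  (Fintype.equivOfCardEq (card_aux p hp3)).symm

variable (hp3 : 3 ≤ p)

noncomputable def dV : Fin (2*p-1) → W p := fun i => (ev p hp3 i).val

lemma dV_inj : Function.Injective (dV p hp3) := fun i j h =>
  (ev p hp3).injective (Subtype.ext h)

lemma dV_ne_vstar (i : Fin (2*p-1)) : dV p hp3 i ≠ vstar p := (ev p hp3 i).prop

/-- colour of an abstract edge -/
def colSym : Sym2 (W p) → W p := Sym2.lift ⟨col, fun u v => col_symm u v⟩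

@[simp] lemma colSym_mk (u v : W p) : colSym p s(u, v) = col u v := rfl

local notation "G" => completeGraph (Fin (2*p-1))

lemma edge_nondiag (e : Sym2 (Fin (2*p-1))) (he : e ∈ (G).edgeSet) : ¬ e.IsDiag := by
  rw [completeGraph_eq_top, SimpleGraph.edgeSet_top] at he
  exact he

lemma map_nondiag {α β : Type*} {f : α → β} (hf : Function.Injective f) {e : Sym2 α}
    (he : ¬ e.IsDiag) : ¬ (Sym2.map f e).IsDiag := by
  induction e using Sym2.ind with
  | _ u v =>
    rw [Sym2.map_pair_eq, Sym2.mk_isDiag_iff] at *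
    exact fun h => he (hf h)

lemma colSym_map_ne_vstar (e : (G).edgeSet) :
    colSym p (Sym2.map (dV p hp3) e.val) ≠ vstar p := by
  obtain ⟨e, he⟩ := e
  have hd : ¬ e.IsDiag := edge_nondiag p e he
  induction e using Sym2.ind with
  | _ u v =>
    rw [Sym2.mk_isDiag_iff] at hd
    rw [Sym2.map_pair_eq, colSym_mk]
    exact col_ne_vstar (fun h => hd (dV_inj p hp3 h))

/-- the perfect edge colouring of `K_{2p-1}` -/
noncomputable def phiCol : (G).edgeSet → Fin (2*p-1) := fun e =>
  (ev p hp3).symm ⟨colSym p (Sym2.map (dV p hp3) e.val), colSym_map_ne_vstar p hp3 e⟩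

include hp3 in
lemma colSym_inj (hp : p.Prime) {e f : Sym2 (W p)} (he : ¬ e.IsDiag) (hf : ¬ f.IsDiag)
    (hef : e ≠ f) (u : W p) (hue : u ∈ e) (huf : u ∈ f) : colSym p e ≠ colSym p f := by
  intro hcol
  have h1 := Sym2.other_spec hue
  have h2 := Sym2.other_spec huf
  rw [← h1, ← h2] at hcol
  simp only [colSym_mk] at hcol
  have := col_inj hp hp3 (Sym2.other_ne he hue) (Sym2.other_ne hf huf) hcol
  rw [← h1, ← h2] at hef
  exact hef (by rw [this])

lemma phiCol_proper (hp : p.Prime) :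
    IsProperEdgeColoring (G) (2*p-1) (phiCol p hp3) := by
  intro e₁ e₂ hne ⟨v, hv1, hv2⟩ heq
  have hval : colSym p (Sym2.map (dV p hp3) e₁.val) = colSym p (Sym2.map (dV p hp3) e₂.val) := by
    have := (ev p hp3).symm.injective heq
    exact congrArg Subtype.val this
  have hvne : e₁.val ≠ e₂.val := fun h => hne (Subtype.ext h)
  have hmapne : Sym2.map (dV p hp3) e₁.val ≠ Sym2.map (dV p hp3) e₂.val :=
    fun h => hvne (Sym2.map.injective (dV_inj p hp3) h)
  refine colSym_inj p hp3 hp ?_ ?_ hmapne (dV p hp3 v) ?_ ?_ hval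
  · exact map_nondiag (dV_inj p hp3) (edge_nondiag p _ e₁.prop)
  · exact map_nondiag (dV_inj p hp3) (edge_nondiag p _ e₂.prop)
  · exact Sym2.mem_map.2 ⟨v, hv1, rfl⟩
  · exact Sym2.mem_map.2 ⟨v, hv2, rfl⟩

noncomputable local instance : Fintype ((G).edgeSet) := Fintype.ofFinite _

open Finset in
/-- each colour class of a proper colouring of `K_{2p-1}` is small -/
lemma class_card_le (φ : (G).edgeSet → Fin (2*p-1))
    (hφ : IsProperEdgeColoring (G) (2*p-1) φ) (a : Fin (2*p-1)) :
    (Finset.univ.filter fun e : (G).edgeSet => φ e = a).card ≤ p - 1 := by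
  classical
  set M := Finset.univ.filter fun e : (G).edgeSet => φ e = a with hM
  set f : (G).edgeSet → Finset (Fin (2*p-1)) := fun e => Finset.univ.filter (· ∈ e.val) with hf
  have hcard2 : ∀ e : (G).edgeSet, (f e).card = 2 := by
    rintro ⟨e, he⟩
    have hd : ¬ e.IsDiag := edge_nondiag p e he
    induction e using Sym2.ind with
    | _ u v =>
      rw [Sym2.mk_isDiag_iff] at hd
      have : f ⟨s(u,v), he⟩ = {u, v} := by
        ext x
        simp [hf, Sym2.mem_iff]
      rw [this, Finset.card_pair hd]
  have hdisj : ∀ x ∈ M, ∀ y ∈ M, x ≠ y → Disjoint (f x) (f y) := by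
    intro x hx y hy hxy
    rw [Finset.disjoint_left]
    intro v hv1 hv2
    rw [hf] at hv1 hv2
    simp only [Finset.mem_filter, Finset.mem_univ, true_and] at hv1 hv2
    rw [hM] at hx hy
    simp only [Finset.mem_filter, Finset.mem_univ, true_and] at hx hy
    exact hφ x y hxy ⟨v, hv1, hv2⟩ (hx.trans hy.symm)
  have hbound : (M.biUnion f).card ≤ 2*p - 1 := by
    refine le_trans (Finset.card_le_univ _) ?_
    simp
  rw [Finset.card_biUnion hdisj] at hbound
  have hsum : ∑ e ∈ M, (f e).card = 2 * M.card := by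
    rw [Finset.sum_congr rfl (fun e _ => hcard2 e), Finset.sum_const, smul_eq_mul]
    ring
  omega

/-- the statement of the first part, for a fixed pair of colours. -/
def HamPair (φ : (G).edgeSet → Fin (2*p-1)) (a b : Fin (2*p-1)) : Prop :=
  ∃ (u v : Fin (2*p-1)) (w : (G).Walk u v), w.IsPath ∧ w.IsHamiltonian ∧
    ∀ e : (G).edgeSet, ((e : Sym2 (Fin (2*p-1))) ∈ w.edges ↔ (φ e = a ∨ φ e = b))

lemma pairGood (hp : p.Prime) (c1 c2 : W p) (h1 : c1 ≠ vstar p) (h2 : c2 ≠ vstar p)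
    (c : ℕ → W p)
    (hinj : ∀ s, s < 2*p → ∀ t, t < 2*p → c s = c t → s = t)
    (hedge : ∀ t, t < 2*p → c t ≠ c ((t+1) % (2*p)) ∧
      (col (c t) (c ((t+1) % (2*p))) = c1 ∨ col (c t) (c ((t+1) % (2*p))) = c2)) :
    HamPair p (phiCol p hp3) ((ev p hp3).symm ⟨c1, h1⟩) ((ev p hp3).symm ⟨c2, h2⟩) := by
  classical
  -- surjectivity of the cycle
  have csurj : ∀ w : W p, ∃ t, t < 2*p ∧ c t = w := by
    have hbij : Function.Bijective (fun t : Fin (2*p) => c t.val) := by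
      rw [Fintype.bijective_iff_injective_and_card]
      refine ⟨fun s t h => Fin.ext (hinj s.val s.isLt t.val t.isLt h), ?_⟩
      simp [ZMod.card]
      ring
    intro w
    obtain ⟨t, ht⟩ := hbij.2 w
    exact ⟨t.val, t.isLt, ht⟩
  obtain ⟨t0, ht0lt, ht0⟩ := csurj (vstar p)
  have hmod : ∀ m, m < 4*p → m % (2*p) = if 2*p ≤ m then m - (2*p) else m := by
    intro m hm
    split_ifs with h
    · rw [Nat.mod_eq_sub_mod h, Nat.mod_eq_of_lt (by omega)]
    · exact Nat.mod_eq_of_lt (by omega)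
  set τ : ℕ → ℕ := fun k => (t0 + 1 + k) % (2*p) with hτ
  have hτlt : ∀ k, τ k < 2*p := fun k => Nat.mod_lt _ (by omega)
  have hτval : ∀ k, k < 2*p - 1 → τ k ≠ t0 := by
    intro k hk h
    simp only [hτ] at h
    rw [hmod _ (by omega)] at h
    split_ifs at h <;> omega
  have hτinj : ∀ k, k < 2*p - 1 → ∀ l, l < 2*p - 1 → τ k = τ l → k = l := by
    intro k hk l hl h
    simp only [hτ] at h
    rw [hmod _ (by omega), hmod _ (by omega)] at h
    split_ifs at h <;> omega
  have hτsucc : ∀ k, τ (k+1) = (τ k + 1) % (2*p) := by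
    intro k
    simp only [hτ]
    have h1 : t0+1+(k+1) = (t0+1+k)+1 := by ring
    rw [h1, Nat.add_mod (t0+1+k) 1, Nat.mod_eq_of_lt (show (1:ℕ) < 2*p by omega)]
  have hcτ : ∀ k, k < 2*p - 1 → c (τ k) ≠ vstar p := by
    intro k hk h
    exact hτval k hk (hinj _ (hτlt k) _ ht0lt (h.trans ht0.symm))
  set g : ℕ → Fin (2*p-1) := fun k =>
    (ev p hp3).symm (if h : c (τ k) ≠ vstar p then ⟨c (τ k), h⟩ else ⟨c1, h1⟩) with hg
  have hgval : ∀ k, k < 2*p - 1 → dV p hp3 (g k) = c (τ k) := by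
    intro k hk
    simp only [hg, dif_pos (hcτ k hk), dV]
    rw [Equiv.apply_symm_apply]
  have hadj : ∀ k, k < 2*p - 2 → (G).Adj (g k) (g (k+1)) := by
    intro k hk
    have h1k := hgval k (by omega)
    have h2k := hgval (k+1) (by omega)
    have hne : c (τ k) ≠ c (τ (k+1)) := by
      rw [hτsucc k]; exact (hedge (τ k) (hτlt k)).1
    rw [completeGraph_eq_top, SimpleGraph.top_adj]
    intro h
    apply hne
    rw [← h1k, ← h2k, h]
  set w : (G).Walk (g 0) (g (2*p-2)) := buildWalk (G) g (2*p-2) hadj with hw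
  have h21 : 2*p-2+1 = 2*p-1 := by omega
  have hsupp : w.support = (List.range (2*p-1)).map g := by
    rw [hw, buildWalk_support, h21]
  have hginj : ∀ k ∈ List.range (2*p-1), ∀ l ∈ List.range (2*p-1), g k = g l → k = l := by
    intro k hk l hl h
    rw [List.mem_range] at hk hl
    apply hτinj k hk l hl
    apply hinj _ (hτlt k) _ (hτlt l)
    rw [← hgval k hk, ← hgval l hl, h]
  have hpath : w.IsPath := by
    rw [SimpleGraph.Walk.isPath_def, hsupp]
    exact List.Nodup.map_on hginj List.nodup_range
  have hsurj : ∀ x : Fin (2*p-1), ∃ k, k < 2*p-1 ∧ g k = x := by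
    intro x
    obtain ⟨t, htlt, htx⟩ := csurj ((ev p hp3 x).val)
    have htne : t ≠ t0 := by
      intro h
      apply (ev p hp3 x).prop
      rw [← htx, h, ht0]
    set k := if t0 < t then t - t0 - 1 else t + 2*p - t0 - 1 with hk
    have hklt : k < 2*p - 1 := by rw [hk]; split_ifs <;> omega
    have hτk : τ k = t := by
      simp only [hτ, hk]
      split_ifs with h
      · have he : t0+1+(t-t0-1) = t := by omega
        rw [he, Nat.mod_eq_of_lt htlt]
      · have he : t0+1+(t+2*p-t0-1) = t + 2*p := by omega
        rw [he, Nat.add_mod_right, Nat.mod_eq_of_lt htlt]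
    refine ⟨k, hklt, ?_⟩
    apply dV_inj p hp3
    rw [hgval k hklt, hτk, htx]
    rfl
  have hham : w.IsHamiltonian := by
    intro x
    obtain ⟨k, hk, hgk⟩ := hsurj x
    rw [hsupp]
    refine List.count_eq_one_of_mem (List.Nodup.map_on hginj List.nodup_range) ?_
    exact List.mem_map.2 ⟨k, List.mem_range.2 hk, hgk⟩
  have hedges : w.edges = (List.range (2*p-2)).map (fun k => s(g k, g (k+1))) := by
    rw [hw, buildWalk_edges]
  have hfwd : ∀ e : (G).edgeSet, (e : Sym2 (Fin (2*p-1))) ∈ w.edges →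
      (phiCol p hp3 e = (ev p hp3).symm ⟨c1, h1⟩ ∨ phiCol p hp3 e = (ev p hp3).symm ⟨c2, h2⟩) := by
    intro e he
    rw [hedges, List.mem_map] at he
    obtain ⟨k, hk, hek⟩ := he
    rw [List.mem_range] at hk
    have hcolv : colSym p (Sym2.map (dV p hp3) e.val) = col (c (τ k)) (c (τ (k+1))) := by
      have hmap := congrArg (fun z => colSym p (Sym2.map (dV p hp3) z)) hek.symm
      simp only [Sym2.map_pair_eq, colSym_mk] at hmap
      rw [hgval k (by omega), hgval (k+1) (by omega)] at hmap
      exact hmap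
    have hcc := (hedge (τ k) (hτlt k)).2
    rw [← hτsucc k] at hcc
    rcases hcc with h | h
    · left
      simp only [phiCol]
      exact congrArg (ev p hp3).symm (Subtype.ext (hcolv.trans h))
    · right
      simp only [phiCol]
      exact congrArg (ev p hp3).symm (Subtype.ext (hcolv.trans h))
  refine ⟨g 0, g (2*p-2), w, hpath, hham, fun e => ⟨hfwd e, ?_⟩⟩
  intro he'
  set a := (ev p hp3).symm ⟨c1, h1⟩
  set b := (ev p hp3).symm ⟨c2, h2⟩
  set U : Finset ((G).edgeSet) :=
    Finset.univ.filter (fun e : (G).edgeSet => phiCol p hp3 e = a ∨ phiCol p hp3 e = b) with hUdef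
  have hUcard : U.card ≤ 2*p - 2 := by
    rw [hUdef, Finset.filter_or]
    refine le_trans (Finset.card_union_le _ _) ?_
    have ha := class_card_le p (phiCol p hp3) (phiCol_proper p hp3 hp) a
    have hb := class_card_le p (phiCol p hp3) (phiCol_proper p hp3 hp) b
    omega
  have hlen : w.edges.length = 2*p - 2 := by rw [hedges]; simp
  have hnodup : w.edges.Nodup := hpath.edges_nodup
  have hEcard : w.edges.toFinset.card = 2*p - 2 := by
    rw [List.toFinset_card_of_nodup hnodup, hlen]
  set I := U.image (Subtype.val) with hI
  have hIcard : I.card = U.card := Finset.card_image_of_injective _ Subtype.val_injective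
  have hEI : w.edges.toFinset ⊆ I := by
    intro x hx
    rw [List.mem_toFinset] at hx
    have hxe : x ∈ (G).edgeSet := w.edges_subset_edgeSet hx
    have hmem := hfwd ⟨x, hxe⟩ hx
    exact Finset.mem_image.2 ⟨⟨x, hxe⟩, Finset.mem_filter.2 ⟨Finset.mem_univ _, hmem⟩, rfl⟩
  have hEeq : w.edges.toFinset = I := Finset.eq_of_subset_of_card_le hEI (by omega)
  have heI : (e : Sym2 (Fin (2*p-1))) ∈ I :=
    Finset.mem_image.2 ⟨e, Finset.mem_filter.2 ⟨Finset.mem_univ _, he'⟩, rfl⟩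
  rw [← hEeq, List.mem_toFinset] at heI
  exact heI

/-! ### the three cycle families -/

include hp3 in
lemma half_two (z : ZMod p) (hp : p.Prime) : (2*z) * (2:ZMod p)⁻¹ = z := by
  haveI : Fact p.Prime := ⟨hp⟩
  have h2 : (2 : ZMod p) ≠ 0 := two_ne_zero' hp3
  field_simp

lemma cast_pred (h3 : 1 ≤ p) : ((p - 1 : ℕ) : ZMod p) = -1 := by
  rw [Nat.cast_sub h3]
  simp

include hp3 in
lemma famGG (hp : p.Prime) (j k : ZMod p) (hj : j ≠ 0) (hk : k ≠ 0) (hjk : j ≠ k) :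
    ∃ c : ℕ → W p, (∀ s, s < 2*p → ∀ t, t < 2*p → c s = c t → s = t) ∧
      (∀ t, t < 2*p → c t ≠ c ((t+1) % (2*p)) ∧
        (col (c t) (c ((t+1) % (2*p))) = (j, true) ∨
          col (c t) (c ((t+1) % (2*p))) = (k, true))) := by
  haveI : Fact p.Prime := ⟨hp⟩
  have hjk' : j - k ≠ 0 := sub_ne_zero.2 hjk
  refine ⟨fun t => if t % 2 = 0 then (((t/2 : ℕ) : ZMod p) * (j-k), false)
    else (((t/2 : ℕ) : ZMod p) * (j-k) + j, true), ?_, ?_⟩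
  · intro s hs t ht h
    dsimp only at h
    split_ifs at h with hs2 ht2
    · rw [Prod.mk.injEq] at h
      have hc : ((s/2 : ℕ) : ZMod p) = ((t/2 : ℕ) : ZMod p) := mul_right_cancel₀ hjk' h.1
      have := congrArg ZMod.val hc
      rw [ZMod.val_cast_of_lt (by omega), ZMod.val_cast_of_lt (by omega)] at this
      omega
    · simp at h
    · simp at h
    · rw [Prod.mk.injEq] at h
      have hc : ((s/2 : ℕ) : ZMod p) = ((t/2 : ℕ) : ZMod p) :=
        mul_right_cancel₀ hjk' (add_right_cancel h.1)
      have := congrArg ZMod.val hc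
      rw [ZMod.val_cast_of_lt (by omega), ZMod.val_cast_of_lt (by omega)] at this
      omega
  · intro t ht
    by_cases hlast : t = 2*p-1
    · subst hlast
      have hm : (2*p-1+1) % (2*p) = 0 := by
        rw [show 2*p-1+1 = 2*p by omega, Nat.mod_self]
      rw [hm]
      have h1 : ¬ ((2*p-1) % 2 = 0) := by omega
      have h0 : (0:ℕ) % 2 = 0 := rfl
      dsimp only
      rw [if_neg h1, if_pos h0]
      have hd : (2*p-1)/2 = p - 1 := by omega
      have hx : (((2*p-1)/2 : ℕ) : ZMod p) * (j-k) + j = k := by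
        rw [hd, cast_pred p (by omega)]; ring
      have h0' : (((0/2 : ℕ) : ZMod p)) * (j-k) = 0 := by norm_num
      constructor
      · simp
      · right
        rw [col_tf, hx, h0']
        rw [if_neg (by simpa using hk.symm)]
        simp
    · rw [Nat.mod_eq_of_lt (by omega)]
      by_cases ht2 : t % 2 = 0
      · have ht2' : ¬ ((t+1) % 2 = 0) := by omega
        have hd : (t+1)/2 = t/2 := by omega
        dsimp only
        rw [if_pos ht2, if_neg ht2', hd]
        have hne : (((t/2 : ℕ) : ZMod p)) * (j-k) ≠ ((t/2 : ℕ) : ZMod p) * (j-k) + j :=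
          fun h => hj (left_eq_add.mp h)
        constructor
        · simp only [Ne, Prod.mk.injEq]
          tauto
        · left
          rw [col_ft, if_neg hne]
          exact Prod.ext (by ring) rfl
      · have ht2' : (t+1) % 2 = 0 := by omega
        have hd : (t+1)/2 = t/2 + 1 := by omega
        dsimp only
        rw [if_neg ht2, if_pos ht2', hd]
        have hne : (((t/2 + 1 : ℕ) : ZMod p)) * (j-k) ≠ ((t/2 : ℕ) : ZMod p) * (j-k) + j := by
          intro h
          apply hk
          push_cast at h
          linear_combination -h
        constructor
        · simp only [Ne, Prod.mk.injEq]
          tauto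
        · right
          rw [col_tf, if_neg hne]
          refine Prod.ext ?_ rfl
          push_cast
          ring

include hp3 in
lemma famFF (hp : p.Prime) (i i' : ZMod p) (hii : i ≠ i') :
    ∃ c : ℕ → W p, (∀ s, s < 2*p → ∀ t, t < 2*p → c s = c t → s = t) ∧
      (∀ t, t < 2*p → c t ≠ c ((t+1) % (2*p)) ∧
        (col (c t) (c ((t+1) % (2*p))) = (i', false) ∨
          col (c t) (c ((t+1) % (2*p))) = (i, false))) := by
  haveI : Fact p.Prime := ⟨hp⟩
  have hodd : p % 2 = 1 := by
    rcases hp.eq_two_or_odd with h | h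
    · omega
    · exact h
  have he : (i' - i) ≠ 0 := sub_ne_zero.2 (Ne.symm hii)
  have h2 : (2 : ZMod p) ≠ 0 := two_ne_zero' hp3
  set U : ℕ → ℤ := fun t => if t % 2 = 0 then -((t/2 : ℕ) : ℤ) else ((t/2 : ℕ) : ℤ) + 1 with hU
  set x : ℕ → ZMod p := fun t => i + 2 * ((U t : ℤ) : ZMod p) * (i' - i) with hx
  have hUinj : ∀ s, s < p → ∀ t, t < p → U s = U t → s = t := by
    intro s hs t ht h
    rw [hU] at h; dsimp only at h
    split_ifs at h <;> omega
  have hxinj : ∀ s, s < p → ∀ t, t < p → x s = x t → s = t := by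
    intro s hs t ht h
    rw [hx] at h; dsimp only at h
    apply hUinj s hs t ht
    have hc : ((U s : ℤ) : ZMod p) = ((U t : ℤ) : ZMod p) := by
      have h' : (2:ZMod p) * ((U s : ℤ) : ZMod p) * (i'-i) = 2 * ((U t : ℤ) : ZMod p) * (i'-i) := by
        linear_combination h
      exact mul_left_cancel₀ h2 (mul_right_cancel₀ he h')
    have hd : (p:ℤ) ∣ (U s - U t) := by
      rwa [← ZMod.intCast_zmod_eq_zero_iff_dvd, Int.cast_sub, sub_eq_zero]
    have hz : U s - U t = 0 := by
      apply Int.eq_zero_of_abs_lt_dvd hd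
      rw [hU]; dsimp only
      have hb : |(if s % 2 = 0 then -((s/2 : ℕ) : ℤ) else ((s/2 : ℕ) : ℤ) + 1) -
          (if t % 2 = 0 then -((t/2 : ℕ) : ℤ) else ((t/2 : ℕ) : ℤ) + 1)| < p := by
        rw [abs_lt]
        split_ifs <;> constructor <;> push_cast <;> omega
      exact hb
    exact sub_eq_zero.mp hz
  have hsum : ∀ m, m + 1 ≤ p - 1 → (x m ≠ x (m+1)) ∧
      ((x m + x (m+1)) = if m % 2 = 0 then 2*i' else 2*i) := by
    intro m hm
    constructor
    · intro hxx
      have := hxinj m (by omega) (m+1) (by omega) hxx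
      omega
    · by_cases hm2 : m % 2 = 0
      · rw [if_pos hm2]
        have hU1 : U m = -((m/2 : ℕ) : ℤ) := by rw [hU]; dsimp only; rw [if_pos hm2]
        have hU2 : U (m+1) = (((m+1)/2 : ℕ) : ℤ) + 1 := by
          rw [hU]; dsimp only; rw [if_neg (by omega)]
        have hd : (m+1)/2 = m/2 := by omega
        rw [hx]; dsimp only
        rw [hU1, hU2, hd]
        push_cast
        ring
      · rw [if_neg hm2]
        have hU1 : U m = ((m/2 : ℕ) : ℤ) + 1 := by
          rw [hU]; dsimp only; rw [if_neg hm2]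
        have hU2 : U (m+1) = -(((m+1)/2 : ℕ) : ℤ) := by
          rw [hU]; dsimp only; rw [if_pos (by omega)]
        have hd : (m+1)/2 = m/2 + 1 := by omega
        rw [hx]; dsimp only
        rw [hU1, hU2, hd]
        push_cast
        ring
  refine ⟨fun t => if t < p then (x t, false) else (x (2*p-1-t), true), ?_, ?_⟩
  · intro s hs t ht h
    dsimp only at h
    split_ifs at h with h1 h2'
    · rw [Prod.mk.injEq] at h
      exact hxinj s h1 t h2' h.1
    · simp at h
    · simp at h
    · rw [Prod.mk.injEq] at h
      have := hxinj _ (by omega) _ (by omega) h.1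
      omega
  · intro t ht
    by_cases hA : t < p - 1
    · rw [Nat.mod_eq_of_lt (by omega)]
      dsimp only
      rw [if_pos (show t < p by omega), if_pos (show t+1 < p by omega)]
      obtain ⟨hne, hsum'⟩ := hsum t (by omega)
      constructor
      · simp only [Ne, Prod.mk.injEq, and_true]
        exact hne
      · rw [col_ff]
        by_cases ht2 : t % 2 = 0
        · left
          refine Prod.ext ?_ rfl
          rw [hsum', if_pos ht2]
          exact half_two p hp3 i' hp
        · right
          refine Prod.ext ?_ rfl
          rw [hsum', if_neg ht2]
          exact half_two p hp3 i hp
    · by_cases hB : t = p - 1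
      · subst hB
        rw [Nat.mod_eq_of_lt (by omega)]
        have hp1 : p - 1 + 1 = p := by omega
        rw [hp1]
        dsimp only
        rw [if_pos (show p-1 < p by omega), if_neg (show ¬ p < p by omega)]
        have hd : 2*p-1-p = p-1 := by omega
        rw [hd]
        have hm2 : (p-1) % 2 = 0 := by omega
        have key : (2 : ZMod p) * (((p-1)/2 : ℕ) : ZMod p) = -1 := by
          have hcast : ((2*((p-1)/2) : ℕ) : ZMod p) = ((p-1:ℕ) : ZMod p) :=
            congrArg Nat.cast (by omega)
          push_cast at hcast
          rw [cast_pred p (by omega)] at hcast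
          exact hcast
        have hxp : x (p-1) = i' := by
          have hUcast : ((U (p-1) : ℤ) : ZMod p) = -((((p-1)/2 : ℕ) : ℤ) : ZMod p) := by
            rw [hU]; dsimp only; rw [if_pos hm2]; push_cast; ring
          rw [hx]; dsimp only
          rw [hUcast, Int.cast_natCast]
          linear_combination (-(i'-i)) * key
        constructor
        · simp
        · left
          rw [col_ft, if_pos rfl, hxp]
      · by_cases hD : t = 2*p-1
        · subst hD
          have hm : (2*p-1+1) % (2*p) = 0 := by
            rw [show 2*p-1+1 = 2*p from by omega, Nat.mod_self]
          rw [hm]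
          dsimp only
          rw [if_neg (show ¬(2*p-1 < p) by omega), if_pos (show 0 < p by omega)]
          have hd : 2*p-1-(2*p-1) = 0 := by omega
          rw [hd]
          have hx0 : x 0 = i := by
            rw [hx]; dsimp only; rw [hU]; dsimp only; norm_num
          constructor
          · simp
          · right
            rw [col_tf, if_pos rfl, hx0]
        · rw [Nat.mod_eq_of_lt (by omega)]
          dsimp only
          rw [if_neg (show ¬(t<p) by omega), if_neg (show ¬(t+1<p) by omega)]
          set s' := 2*p-1-(t+1) with hs'
          have hd : 2*p-1-t = s'+1 := by omega
          rw [hd]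
          obtain ⟨hne, hsum'⟩ := hsum s' (by omega)
          constructor
          · simp only [Ne, Prod.mk.injEq, and_true]
            exact fun h => hne h.symm
          · rw [col_tt]
            by_cases hs2 : s' % 2 = 0
            · left
              refine Prod.ext ?_ rfl
              rw [add_comm, hsum', if_pos hs2]
              exact half_two p hp3 i' hp
            · right
              refine Prod.ext ?_ rfl
              rw [add_comm, hsum', if_neg hs2]
              exact half_two p hp3 i hp

lemma dvd_small_even' (hodd : p % 2 = 1) (h3 : 3 ≤ p) {z : ℤ} (hdvd : (p:ℤ) ∣ z)
    (hb : |z| < 2*(p:ℤ)) (hev : z % 2 = 0) : z = 0 := by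
  obtain ⟨d, rfl⟩ := hdvd
  have hp0 : (0:ℤ) < (p:ℤ) := by exact_mod_cast (by omega : 0 < p)
  have hb' := abs_lt.mp hb
  obtain ⟨hdl, hdr⟩ : -2 < d ∧ d < 2 := by
    constructor <;> nlinarith [hb'.1, hb'.2]
  have hp2 : (p:ℤ) % 2 = 1 := by omega
  interval_cases d <;> omega

lemma not_dvd_small (hodd : p % 2 = 1) (h3 : 3 ≤ p) {n : ℕ} (hn : 0 < n) (h2 : n < 2*p)
    (hev : n % 2 = 0) : ¬ p ∣ n := by
  rintro ⟨d, rfl⟩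
  have hd2 : d < 2 := Nat.lt_of_mul_lt_mul_left (a := p) (by omega)
  interval_cases d <;> omega

include hp3 in
lemma famFG (hp : p.Prime) (i j : ZMod p) (hj : j ≠ 0) :
    ∃ c : ℕ → W p, (∀ s, s < 2*p → ∀ t, t < 2*p → c s = c t → s = t) ∧
      (∀ t, t < 2*p → c t ≠ c ((t+1) % (2*p)) ∧
        (col (c t) (c ((t+1) % (2*p))) = (i, false) ∨
          col (c t) (c ((t+1) % (2*p))) = (j, true))) := by
  haveI : Fact p.Prime := ⟨hp⟩
  have hodd : p % 2 = 1 := by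
    rcases hp.eq_two_or_odd with h | h
    · omega
    · exact h
  have h2 : (2 : ZMod p) ≠ 0 := two_ne_zero' hp3
  set V : ℕ → ℤ := fun t => if t % 4 = 0 then -((t/2 : ℕ) : ℤ)
    else if t % 4 = 1 then -(((t+1)/2 : ℕ) : ℤ)
    else if t % 4 = 2 then ((t/2 : ℕ) : ℤ) else (((t+1)/2 : ℕ) : ℤ) with hVdef
  set ε : ℕ → Bool := fun t => decide (t % 4 = 0 ∨ t % 4 = 3) with hεdef
  have hVpar : ∀ u, V u % 2 = (if u % 4 = 0 ∨ u % 4 = 3 then 0 else 1) := by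
    intro u
    simp only [hVdef]
    split_ifs <;> push_cast <;> omega
  have hVbdd : ∀ u, u < 2*p → -(p:ℤ) ≤ V u ∧ V u ≤ (p:ℤ) - 1 := by
    intro u hu
    simp only [hVdef]
    split_ifs <;> constructor <;> push_cast <;> omega
  refine ⟨fun t => (i + ((V t : ℤ) : ZMod p) * j, ε t), ?_, ?_⟩
  · intro s hs t ht h
    dsimp only at h
    rw [Prod.mk.injEq] at h
    obtain ⟨h1, h2'⟩ := h
    have hiff : (s % 4 = 0 ∨ s % 4 = 3) ↔ (t % 4 = 0 ∨ t % 4 = 3) := by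
      simp only [hεdef] at h2'
      exact decide_eq_decide.mp h2'
    -- the coordinates give divisibility
    have hcast : ((V s - V t : ℤ) : ZMod p) * j = 0 := by
      push_cast
      linear_combination h1
    have hdvd : (p:ℤ) ∣ (V s - V t) := by
      rcases mul_eq_zero.mp hcast with hc | hc
      · rwa [← ZMod.intCast_zmod_eq_zero_iff_dvd]
      · exact absurd hc hj
    have hpar : (V s - V t) % 2 = 0 := by
      have h1p := hVpar s
      have h2p := hVpar t
      by_cases hc : s % 4 = 0 ∨ s % 4 = 3
      · rw [if_pos hc] at h1p
        rw [if_pos (hiff.mp hc)] at h2p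
        omega
      · rw [if_neg hc] at h1p
        rw [if_neg (fun hh => hc (hiff.mpr hh))] at h2p
        omega
    have hb : |V s - V t| < 2*(p:ℤ) := by
      have hb1 := hVbdd s hs
      have hb2 := hVbdd t ht
      rw [abs_lt]
      omega
    have hzero : V s - V t = 0 := dvd_small_even' p hodd (by omega) hdvd hb hpar
    have hVeq : V s = V t := by omega
    simp only [hVdef] at hVeq
    split_ifs at hVeq <;> push_cast at hVeq <;> omega
  · intro t ht
    have hne_of : ∀ (a b : ZMod p), a - b = j → a ≠ b := by
      intro a b hab h
      exact hj (by rw [← hab, h, sub_self])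
    by_cases hD : t = 2*p-1
    · subst hD
      have hm : (2*p-1+1) % (2*p) = 0 := by
        rw [show 2*p-1+1 = 2*p from by omega, Nat.mod_self]
      rw [hm]
      have hr : (2*p-1) % 4 = 1 := by omega
      have hV1 : V (2*p-1) = -((p : ℕ) : ℤ) := by
        simp only [hVdef]
        rw [if_neg (by omega), if_pos hr]
        congr 1
        congr 1
        omega
      have hV0 : V 0 = 0 := by simp [hVdef]
      have hε1 : ε (2*p-1) = false := by
        simp only [hεdef, decide_eq_false_iff_not]
        omega
      have hε0 : ε 0 = true := by simp [hεdef]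
      dsimp only
      rw [hε1, hε0, hV1, hV0]
      have hc1 : (((-((p:ℕ):ℤ) : ℤ)) : ZMod p) = 0 := by push_cast; simp
      rw [hc1]
      have hc0 : ((0 : ℤ) : ZMod p) = 0 := by norm_num
      rw [hc0]
      simp only [zero_mul, add_zero]
      constructor
      · simp
      · left
        rw [col_ft, if_pos rfl]
    · rw [Nat.mod_eq_of_lt (by omega)]
      dsimp only
      have hr4 : t % 4 = 0 ∨ t % 4 = 1 ∨ t % 4 = 2 ∨ t % 4 = 3 := by omega
      rcases hr4 with hr | hr | hr | hr
      · -- r = 0 : G_j edge, from part true to part false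
        have hεt : ε t = true := by
          simp only [hεdef, decide_eq_true_eq]; omega
        have hεt1 : ε (t+1) = false := by
          simp only [hεdef, decide_eq_false_iff_not]; omega
        have hdiff : V t - V (t+1) = 1 := by
          simp only [hVdef]
          rw [if_pos hr, if_neg (show ¬((t+1) % 4 = 0) by omega),
            if_pos (show (t+1) % 4 = 1 by omega)]
          push_cast
          omega
        have hcast : ((V t : ℤ) : ZMod p) - ((V (t+1) : ℤ) : ZMod p) = 1 := by
          rw [← Int.cast_sub, hdiff, Int.cast_one]
        have hsub : (i + ((V t : ℤ) : ZMod p) * j) - (i + ((V (t+1) : ℤ) : ZMod p) * j) = j := by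
          linear_combination j * hcast
        have hne := hne_of _ _ hsub
        rw [hεt, hεt1]
        constructor
        · simp only [Ne, Prod.mk.injEq]
          tauto
        · right
          rw [col_tf, if_neg (fun hh => hne hh.symm), hsub]
      · -- r = 1 : F_i edge inside part false
        have hεt : ε t = false := by
          simp only [hεdef, decide_eq_false_iff_not]; omega
        have hεt1 : ε (t+1) = false := by
          simp only [hεdef, decide_eq_false_iff_not]; omega
        have hdiff : V t + V (t+1) = 0 := by
          simp only [hVdef]
          rw [if_neg (show ¬(t % 4 = 0) by omega), if_pos hr,
            if_neg (show ¬((t+1) % 4 = 0) by omega),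
            if_neg (show ¬((t+1) % 4 = 1) by omega),
            if_pos (show (t+1) % 4 = 2 by omega)]
          push_cast
          omega
        have hdiff2 : V t - V (t+1) = -((t:ℤ)+1) := by
          simp only [hVdef]
          rw [if_neg (show ¬(t % 4 = 0) by omega), if_pos hr,
            if_neg (show ¬((t+1) % 4 = 0) by omega),
            if_neg (show ¬((t+1) % 4 = 1) by omega),
            if_pos (show (t+1) % 4 = 2 by omega)]
          push_cast
          omega
        have hcast0 : ((V t : ℤ) : ZMod p) + ((V (t+1) : ℤ) : ZMod p) = 0 := by
          rw [← Int.cast_add, hdiff, Int.cast_zero]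
        have hne : (i + ((V t : ℤ) : ZMod p) * j) ≠ (i + ((V (t+1) : ℤ) : ZMod p) * j) := by
          intro hh
          have hc : ((V t - V (t+1) : ℤ) : ZMod p) * j = 0 := by
            push_cast
            linear_combination hh
          rcases mul_eq_zero.mp hc with hc' | hc'
          · rw [ZMod.intCast_zmod_eq_zero_iff_dvd, hdiff2] at hc'
            have : (p:ℤ) ∣ ((t+1 : ℕ) : ℤ) := by
              rw [Int.dvd_neg] at hc'
              exact_mod_cast hc'
            have := Int.natCast_dvd_natCast.mp this
            exact not_dvd_small p hodd (by omega) (by omega) (by omega) (by omega) this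
          · exact hj hc'
        have hsum2 : (i + ((V t : ℤ) : ZMod p) * j) + (i + ((V (t+1) : ℤ) : ZMod p) * j)
            = 2*i := by
          linear_combination j * hcast0
        rw [hεt, hεt1]
        constructor
        · simp only [Ne, Prod.mk.injEq, and_true]
          exact hne
        · left
          rw [col_ff, hsum2]
          exact Prod.ext (half_two p hp3 i hp) rfl
      · -- r = 2 : G_j edge, from part false to part true
        have hεt : ε t = false := by
          simp only [hεdef, decide_eq_false_iff_not]; omega
        have hεt1 : ε (t+1) = true := by
          simp only [hεdef, decide_eq_true_eq]; omega
        have hdiff : V (t+1) - V t = 1 := by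
          simp only [hVdef]
          rw [if_neg (show ¬(t % 4 = 0) by omega), if_neg (show ¬(t % 4 = 1) by omega),
            if_pos hr, if_neg (show ¬((t+1) % 4 = 0) by omega),
            if_neg (show ¬((t+1) % 4 = 1) by omega),
            if_neg (show ¬((t+1) % 4 = 2) by omega)]
          push_cast
          omega
        have hcast : ((V (t+1) : ℤ) : ZMod p) - ((V t : ℤ) : ZMod p) = 1 := by
          rw [← Int.cast_sub, hdiff, Int.cast_one]
        have hsub : (i + ((V (t+1) : ℤ) : ZMod p) * j) - (i + ((V t : ℤ) : ZMod p) * j) = j := by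
          linear_combination j * hcast
        have hne := hne_of _ _ hsub
        rw [hεt, hεt1]
        constructor
        · simp only [Ne, Prod.mk.injEq]
          tauto
        · right
          rw [col_ft, if_neg (fun hh => hne hh.symm), hsub]
      · -- r = 3 : F_i edge inside part true
        have hεt : ε t = true := by
          simp only [hεdef, decide_eq_true_eq]; omega
        have hεt1 : ε (t+1) = true := by
          simp only [hεdef, decide_eq_true_eq]; omega
        have hdiff : V t + V (t+1) = 0 := by
          simp only [hVdef]
          rw [if_neg (show ¬(t % 4 = 0) by omega), if_neg (show ¬(t % 4 = 1) by omega),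
            if_neg (show ¬(t % 4 = 2) by omega),
            if_pos (show (t+1) % 4 = 0 by omega)]
          push_cast
          omega
        have hdiff2 : V t - V (t+1) = ((t:ℤ)+1) := by
          simp only [hVdef]
          rw [if_neg (show ¬(t % 4 = 0) by omega), if_neg (show ¬(t % 4 = 1) by omega),
            if_neg (show ¬(t % 4 = 2) by omega),
            if_pos (show (t+1) % 4 = 0 by omega)]
          push_cast
          omega
        have hcast0 : ((V t : ℤ) : ZMod p) + ((V (t+1) : ℤ) : ZMod p) = 0 := by
          rw [← Int.cast_add, hdiff, Int.cast_zero]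
        have hne : (i + ((V t : ℤ) : ZMod p) * j) ≠ (i + ((V (t+1) : ℤ) : ZMod p) * j) := by
          intro hh
          have hc : ((V t - V (t+1) : ℤ) : ZMod p) * j = 0 := by
            push_cast
            linear_combination hh
          rcases mul_eq_zero.mp hc with hc' | hc'
          · rw [ZMod.intCast_zmod_eq_zero_iff_dvd, hdiff2] at hc'
            have : (p:ℤ) ∣ ((t+1 : ℕ) : ℤ) := by exact_mod_cast hc'
            have := Int.natCast_dvd_natCast.mp this
            exact not_dvd_small p hodd (by omega) (by omega) (by omega) (by omega) this
          · exact hj hc'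
        have hsum2 : (i + ((V t : ℤ) : ZMod p) * j) + (i + ((V (t+1) : ℤ) : ZMod p) * j)
            = 2*i := by
          linear_combination j * hcast0
        rw [hεt, hεt1]
        constructor
        · simp only [Ne, Prod.mk.injEq, and_true]
          exact hne
        · left
          rw [col_tt, hsum2]
          exact Prod.ext (half_two p hp3 i hp) rfl

lemma HamPair_symm {φ : (G).edgeSet → Fin (2*p-1)} {a b : Fin (2*p-1)}
    (h : HamPair p φ a b) : HamPair p φ b a := by
  obtain ⟨u, v, w, h1, h2, h3⟩ := h
  exact ⟨u, v, w, h1, h2, fun e => (h3 e).trans or_comm⟩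

include hp3 in
lemma pairGood' (hp : p.Prime) (c1 c2 : W p) (h1 : c1 ≠ vstar p) (h2 : c2 ≠ vstar p)
    (hne : c1 ≠ c2) :
    HamPair p (phiCol p hp3) ((ev p hp3).symm ⟨c1, h1⟩) ((ev p hp3).symm ⟨c2, h2⟩) := by
  obtain ⟨x, εx⟩ := c1
  obtain ⟨y, εy⟩ := c2
  cases εx <;> cases εy
  · have hxy : y ≠ x := fun h => hne (by rw [h])
    obtain ⟨c, hi, he⟩ := famFF p hp3 hp y x hxy
    exact pairGood p hp3 hp _ _ h1 h2 c hi he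
  · have hy : y ≠ 0 := fun h => h2 (by rw [h]; rfl)
    obtain ⟨c, hi, he⟩ := famFG p hp3 hp x y hy
    exact pairGood p hp3 hp _ _ h1 h2 c hi he
  · have hx : x ≠ 0 := fun h => h1 (by rw [h]; rfl)
    obtain ⟨c, hi, he⟩ := famFG p hp3 hp y x hx
    exact HamPair_symm p (pairGood p hp3 hp _ _ h2 h1 c hi he)
  · have hx : x ≠ 0 := fun h => h1 (by rw [h]; rfl)
    have hy : y ≠ 0 := fun h => h2 (by rw [h]; rfl)
    have hxy : x ≠ y := fun h => hne (by rw [h])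
    obtain ⟨c, hi, he⟩ := famGG p hp3 hp x y hx hy hxy
    exact pairGood p hp3 hp _ _ h1 h2 c hi he

include hp3 in
lemma part1 (hp : p.Prime) : ∀ a b : Fin (2*p-1), a ≠ b → HamPair p (phiCol p hp3) a b := by
  intro a b hab
  have hvne : (ev p hp3 a).val ≠ (ev p hp3 b).val := by
    intro h
    exact hab ((ev p hp3).injective (Subtype.ext h))
  have := pairGood' p hp3 hp (ev p hp3 a).val (ev p hp3 b).val
    (ev p hp3 a).prop (ev p hp3 b).prop hvne
  have ha : (ev p hp3).symm ⟨(ev p hp3 a).val, (ev p hp3 a).prop⟩ = a := by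
    rw [Subtype.coe_eta, Equiv.symm_apply_apply]
  have hb : (ev p hp3).symm ⟨(ev p hp3 b).val, (ev p hp3 b).prop⟩ = b := by
    rw [Subtype.coe_eta, Equiv.symm_apply_apply]
  rwa [ha, hb] at this

/-! ### Part 2 : Kempe rigidity -/

/-- all two-colour subgraphs are connected -/
def Pconn (φ : (G).edgeSet → Fin (2*p-1)) : Prop :=
  ∀ a b : Fin (2*p-1), a ≠ b → (kempeGraph (G) φ a b).Preconnected

lemma hamPair_preconnected (φ : (G).edgeSet → Fin (2*p-1)) (a b : Fin (2*p-1))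
    (h : HamPair p φ a b) : (kempeGraph (G) φ a b).Preconnected := by
  classical
  obtain ⟨u0, v0, w, hpath, hham, hiff⟩ := h
  have hsub : ∀ e ∈ w.edges, e ∈ (kempeGraph (G) φ a b).edgeSet := by
    intro e he
    have hee : e ∈ (G).edgeSet := w.edges_subset_edgeSet he
    have hcol := (hiff ⟨e, hee⟩).mp he
    revert hee hcol he
    induction e using Sym2.ind with
    | _ x y =>
      intro he hee hcol
      rw [SimpleGraph.mem_edgeSet]
      exact ⟨hee, hcol⟩
  set w' := w.transfer (kempeGraph (G) φ a b) hsub with hw'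
  have hsupp : w'.support = w.support := SimpleGraph.Walk.support_transfer w hsub
  have hmem : ∀ x : Fin (2*p-1), x ∈ w'.support := by
    intro x
    rw [hsupp]
    have := hham x
    exact List.count_pos_iff.mp (by omega)
  intro x y
  have hx := SimpleGraph.Walk.takeUntil w' x (hmem x)
  have hy := SimpleGraph.Walk.takeUntil w' y (hmem y)
  exact ⟨hx.reverse.append hy⟩

lemma pconn_comp (φ : (G).edgeSet → Fin (2*p-1)) (σ : Equiv.Perm (Fin (2*p-1)))
    (h : Pconn p φ) : Pconn p (fun e => σ (φ e)) := by
  intro a b hab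
  have hG : kempeGraph (G) (fun e => σ (φ e)) a b = kempeGraph (G) φ (σ.symm a) (σ.symm b) := by
    refine SimpleGraph.ext ?_
    ext u v
    constructor
    · rintro ⟨hadj, hc⟩
      refine ⟨hadj, ?_⟩
      rcases hc with hc | hc
      · left; rw [← hc, Equiv.symm_apply_apply]
      · right; rw [← hc, Equiv.symm_apply_apply]
    · rintro ⟨hadj, hc⟩
      refine ⟨hadj, ?_⟩
      rcases hc with hc | hc
      · left; show σ _ = a; rw [hc, Equiv.apply_symm_apply]
      · right; show σ _ = b; rw [hc, Equiv.apply_symm_apply]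
  rw [hG]
  exact h (σ.symm a) (σ.symm b) (fun hh => hab (by
    have := congrArg σ hh
    rwa [Equiv.apply_symm_apply, Equiv.apply_symm_apply] at this))

lemma sym2_exists_mem (e : Sym2 (Fin (2*p-1))) : ∃ u, u ∈ e := by
  induction e using Sym2.ind with
  | _ x y => exact ⟨x, Sym2.mem_mk_left x y⟩

lemma kempeChange_perm (φ ψ : (G).edgeSet → Fin (2*p-1)) (hP : Pconn p φ)
    (h : KempeChange (G) (2*p-1) φ ψ) : ∃ σ : Equiv.Perm (Fin (2*p-1)), ∀ e, ψ e = σ (φ e) := by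
  obtain ⟨a, b, wv, hch⟩ := h
  by_cases hab : a = b
  · refine ⟨Equiv.refl _, fun e => ?_⟩
    simp only [Equiv.refl_apply]
    by_cases hin : InKempeChain (G) φ a b wv e
    · rw [(hch e).1 hin, hab, Equiv.swap_self]
      rfl
    · exact (hch e).2 hin
  · refine ⟨Equiv.swap a b, fun e => ?_⟩
    by_cases hc : φ e = a ∨ φ e = b
    · apply (hch e).1
      obtain ⟨u, hu⟩ := sym2_exists_mem p (e : Sym2 (Fin (2*p-1)))
      exact ⟨hc, u, hu, hP a b hab wv u⟩
    · push_neg at hc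
      rw [(hch e).2 (fun hin => (hin.1.elim (fun h1 => hc.1 h1) (fun h2 => hc.2 h2) : False)),
        Equiv.swap_apply_of_ne_of_ne hc.1 hc.2]

lemma kempeEquiv_perm (φ χ : (G).edgeSet → Fin (2*p-1)) (hP : Pconn p φ)
    (h : KempeEquiv (G) (2*p-1) φ χ) : ∃ σ : Equiv.Perm (Fin (2*p-1)), ∀ e, χ e = σ (φ e) := by
  induction h with
  | refl => exact ⟨Equiv.refl _, fun e => rfl⟩
  | tail hsteps hstep ih =>
    obtain ⟨σ, hσ⟩ := ih
    rename_i χ1 χ2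
    have hχ1 : χ1 = fun e => σ (φ e) := funext hσ
    have hPχ : Pconn p χ1 := by
      rw [hχ1]
      exact pconn_comp p φ σ hP
    obtain ⟨τ, hτ⟩ := kempeChange_perm p χ1 χ2 hPχ hstep
    exact ⟨σ.trans τ, fun e => by rw [hτ e, hσ e]; rfl⟩

include hp3 in
lemma part2 (hp : p.Prime) :
    ∃ ψ : (G).edgeSet → Fin (2*p-1),
      IsProperEdgeColoring (G) (2*p-1) ψ ∧
      ¬ KempePermEquiv (G) (2*p-1) (phiCol p hp3) ψ := by
  classical
  haveI : Fact p.Prime := ⟨hp⟩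
  have h2 : (2:ZMod p) ≠ 0 := two_ne_zero' hp3
  have hi2 : (2:ZMod p)⁻¹ ≠ 0 := inv_ne_zero h2
  have h1m : (1:ZMod p) ≠ -1 := fun h => h2 (by linear_combination h)
  have h0m : (0:ZMod p) ≠ -1 := fun h => h2 (by linear_combination 2*h)
  have h01 : (0:ZMod p) ≠ 1 := fun h => one_ne_zero h.symm
  -- the five special vertices
  set A := (ev p hp3).symm ⟨((1:ZMod p), false), show ((1:ZMod p), false) ≠ vstar p from by simp [vstar]⟩ with hA
  set B := (ev p hp3).symm ⟨((-1:ZMod p), false), show ((-1:ZMod p), false) ≠ vstar p from by simp [vstar]⟩ with hB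
  set C := (ev p hp3).symm ⟨((1:ZMod p), true), show ((1:ZMod p), true) ≠ vstar p from by simp [vstar, one_ne_zero]⟩ with hC
  set D := (ev p hp3).symm ⟨((-1:ZMod p), true), fun hh => h0m (congrArg Prod.fst hh).symm⟩ with hD
  set O := (ev p hp3).symm ⟨((0:ZMod p), false), show ((0:ZMod p), false) ≠ vstar p from by simp [vstar]⟩ with hO
  have encinj : ∀ (w1 w2 : W p) (hh1 : w1 ≠ vstar p) (hh2 : w2 ≠ vstar p),
      (ev p hp3).symm ⟨w1,hh1⟩ = (ev p hp3).symm ⟨w2,hh2⟩ → w1 = w2 :=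
    fun w1 w2 hh1 hh2 h => congrArg Subtype.val ((ev p hp3).symm.injective h)
  have encval : ∀ (w : W p) (hh : w ≠ vstar p), dV p hp3 ((ev p hp3).symm ⟨w, hh⟩) = w := by
    intro w hh
    simp only [dV, Equiv.apply_symm_apply]
  have hAB : A ≠ B := fun h => h1m (congrArg Prod.fst (encinj _ _ _ _ h))
  have hCD : C ≠ D := fun h => h1m (congrArg Prod.fst (encinj _ _ _ _ h))
  have hOB : O ≠ B := fun h => h0m (congrArg Prod.fst (encinj _ _ _ _ h))
  have hBA : B ≠ A := hAB.symm
  have hBO : B ≠ O := fun h => h0m (congrArg Prod.fst (encinj _ _ _ _ h)).symm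
  have hCA : C ≠ A := fun h => by simpa using congrArg Prod.snd (encinj _ _ _ _ h)
  have hCO : C ≠ O := fun h => by simpa using congrArg Prod.snd (encinj _ _ _ _ h)
  have hDA : D ≠ A := fun h => by simpa using congrArg Prod.snd (encinj _ _ _ _ h)
  have hDO : D ≠ O := fun h => by simpa using congrArg Prod.snd (encinj _ _ _ _ h)
  have hadjAB : (G).Adj A B := by rw [completeGraph_eq_top, SimpleGraph.top_adj]; exact hAB
  have hadjCD : (G).Adj C D := by rw [completeGraph_eq_top, SimpleGraph.top_adj]; exact hCD
  have hadjOB : (G).Adj O B := by rw [completeGraph_eq_top, SimpleGraph.top_adj]; exact hOB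
  set eE : (G).edgeSet := ⟨s(A,B), hadjAB⟩ with heE
  set fE : (G).edgeSet := ⟨s(C,D), hadjCD⟩ with hfE
  set E1 : (G).edgeSet := ⟨s(O,B), hadjOB⟩ with hE1
  -- colours of the special edges
  have hcol_e : colSym p (Sym2.map (dV p hp3) (eE : Sym2 (Fin (2*p-1)))) = ((0:ZMod p), false) := by
    show colSym p (Sym2.map (dV p hp3) s(A,B)) = _
    rw [Sym2.map_pair_eq, hA, hB, encval, encval, colSym_mk, col_ff]
    norm_num
  have hcol_f : colSym p (Sym2.map (dV p hp3) (fE : Sym2 (Fin (2*p-1)))) = ((0:ZMod p), false) := by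
    show colSym p (Sym2.map (dV p hp3) s(C,D)) = _
    rw [Sym2.map_pair_eq, hC, hD, encval, encval, colSym_mk, col_tt]
    norm_num
  have hcol_E1 : colSym p (Sym2.map (dV p hp3) (E1 : Sym2 (Fin (2*p-1)))) = (-(2:ZMod p)⁻¹, false) := by
    show colSym p (Sym2.map (dV p hp3) s(O,B)) = _
    rw [Sym2.map_pair_eq, hO, hB, encval, encval, colSym_mk, col_ff]
    refine Prod.ext ?_ rfl
    ring
  have hef : phiCol p hp3 eE = phiCol p hp3 fE := by
    simp only [phiCol]
    exact congrArg (ev p hp3).symm (Subtype.ext (hcol_e.trans hcol_f.symm))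
  have hE1f : phiCol p hp3 E1 ≠ phiCol p hp3 fE := by
    intro h
    simp only [phiCol] at h
    have hvv : colSym p (Sym2.map (dV p hp3) (E1 : Sym2 (Fin (2*p-1))))
        = colSym p (Sym2.map (dV p hp3) (fE : Sym2 (Fin (2*p-1)))) :=
      congrArg Subtype.val ((ev p hp3).symm.injective h)
    rw [hcol_E1, hcol_f] at hvv
    have hfst := congrArg Prod.fst hvv
    simp only at hfst
    exact hi2 (by linear_combination -hfst)
  -- the vertex swap
  set π : Equiv.Perm (Fin (2*p-1)) := Equiv.swap A O with hπ
  have hΘmem : ∀ e : (G).edgeSet, Sym2.map π (e : Sym2 (Fin (2*p-1))) ∈ (G).edgeSet := by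
    rintro ⟨e, he⟩
    have hd : ¬ e.IsDiag := edge_nondiag p e he
    show Sym2.map π e ∈ (G).edgeSet
    induction e using Sym2.ind with
    | _ x y =>
      rw [Sym2.mk_isDiag_iff] at hd
      rw [Sym2.map_pair_eq, SimpleGraph.mem_edgeSet, completeGraph_eq_top, SimpleGraph.top_adj]
      exact fun h => hd (π.injective h)
  set Θ : (G).edgeSet → (G).edgeSet := fun e => ⟨Sym2.map π (e : Sym2 (Fin (2*p-1))), hΘmem e⟩
    with hΘ
  set ψ : (G).edgeSet → Fin (2*p-1) := fun e => phiCol p hp3 (Θ e) with hψ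
  refine ⟨ψ, ?_, ?_⟩
  · intro e1 e2 hne ⟨v, hv1, hv2⟩
    apply phiCol_proper p hp3 hp (Θ e1) (Θ e2)
    · intro h
      apply hne
      apply Subtype.ext
      exact Sym2.map.injective π.injective (congrArg Subtype.val h)
    · exact ⟨π v, Sym2.mem_map.2 ⟨v, hv1, rfl⟩, Sym2.mem_map.2 ⟨v, hv2, rfl⟩⟩
  · rintro ⟨ψ', ⟨τ, hτ⟩, hKE⟩
    have hP : Pconn p (phiCol p hp3) := fun a b hab =>
      hamPair_preconnected p (phiCol p hp3) a b (part1 p hp3 hp a b hab)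
    obtain ⟨σ, hσ⟩ := kempeEquiv_perm p (phiCol p hp3) ψ' hP hKE
    -- Θ E1 = eE and Θ fE = fE
    have hΘE1 : Θ E1 = eE := by
      apply Subtype.ext
      show Sym2.map π s(O,B) = s(A,B)
      rw [Sym2.map_pair_eq, hπ]
      rw [Equiv.swap_apply_right, Equiv.swap_apply_of_ne_of_ne hBA hBO]
    have hΘf : Θ fE = fE := by
      apply Subtype.ext
      show Sym2.map π s(C,D) = s(C,D)
      rw [Sym2.map_pair_eq, hπ]
      rw [Equiv.swap_apply_of_ne_of_ne hCA hCO, Equiv.swap_apply_of_ne_of_ne hDA hDO]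
    have hψE1 : ψ E1 = phiCol p hp3 eE := by rw [hψ]; dsimp only; rw [hΘE1]
    have hψf : ψ fE = phiCol p hp3 fE := by rw [hψ]; dsimp only; rw [hΘf]
    -- ψ e = τ.symm (σ (phiCol e))
    have hcomb : ∀ e, ψ e = τ.symm (σ (phiCol p hp3 e)) := by
      intro e
      have h3 : τ (ψ e) = σ (phiCol p hp3 e) := by
        rw [← hτ e]
        exact hσ e
      rw [← h3, Equiv.symm_apply_apply]
    have hkey : τ.symm (σ (phiCol p hp3 E1)) = τ.symm (σ (phiCol p hp3 fE)) := by
      rw [← hcomb, ← hcomb, hψE1, hψf, hef]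
    exact hE1f (σ.injective (τ.symm.injective hkey))

end Enc

end KappaAux


/-- **Proposition.** For every prime `p ≥ 3`, the complete graph `K_{2p-1}` has a proper
`(2p-1)`-edge-colouring in which the union of any two colour classes forms a Hamiltonian
path; consequently there exist proper `(2p-1)`-edge-colourings of `K_{2p-1}` that are
not Kempe equivalent (even after identifying colourings differing by a permutation of
the colours), i.e. `κ_E(K_{2p-1}, 2p-1) > 1`. -/
theorem kappa_complete_odd_gt_one (p : ℕ) (hp : p.Prime) (hp3 : 3 ≤ p) :
    (∃ φ : (completeGraph (Fin (2 * p - 1))).edgeSet → Fin (2 * p - 1),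
      IsProperEdgeColoring (completeGraph (Fin (2 * p - 1))) (2 * p - 1) φ ∧
      ∀ a b : Fin (2 * p - 1), a ≠ b →
        ∃ (u v : Fin (2 * p - 1))
          (w : (completeGraph (Fin (2 * p - 1))).Walk u v),
          w.IsPath ∧ w.IsHamiltonian ∧
          ∀ e : (completeGraph (Fin (2 * p - 1))).edgeSet,
            (e : Sym2 (Fin (2 * p - 1))) ∈ w.edges ↔ (φ e = a ∨ φ e = b)) ∧
    (∃ φ ψ : (completeGraph (Fin (2 * p - 1))).edgeSet → Fin (2 * p - 1),
      IsProperEdgeColoring (completeGraph (Fin (2 * p - 1))) (2 * p - 1) φ ∧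
      IsProperEdgeColoring (completeGraph (Fin (2 * p - 1))) (2 * p - 1) ψ ∧
      ¬ KempePermEquiv (completeGraph (Fin (2 * p - 1))) (2 * p - 1) φ ψ) := by
  haveI : NeZero p := ⟨by omega⟩
  constructor
  · exact ⟨KappaAux.phiCol p hp3, KappaAux.phiCol_proper p hp3 hp,
      fun a b hab => KappaAux.part1 p hp3 hp a b hab⟩
  · obtain ⟨ψ, hψp, hψn⟩ := KappaAux.part2 p hp3 hp
    exact ⟨KappaAux.phiCol p hp3, ψ, KappaAux.phiCol_proper p hp3 hp, hψp, hψn⟩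
end

section
/- For every prime n = p, the complete graph K_{2p} can be decomposed into 2p − 1 perfect matchings such that the union of any two of these matchings forms a Hamiltonian cycle of K_{2p}. -/
open SimpleGraph

/-- A set of edges of `G` is a matching if its edges are pairwise non-adjacent
(no two distinct edges share a vertex). -/
def IsMatchingSet {V : Type*} (G : SimpleGraph V) (M : Set (Sym2 V)) : Prop :=
  M ⊆ G.edgeSet ∧
    ∀ e₁ ∈ M, ∀ e₂ ∈ M, e₁ ≠ e₂ → ∀ v : V, v ∈ e₁ → v ∉ e₂

/-- A vertex is covered by a set of edges if it is an endpoint of one of them. -/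
def CoveredBy {V : Type*} (M : Set (Sym2 V)) (v : V) : Prop :=
  ∃ e ∈ M, v ∈ e

/-- `M` is a maximum matching of `G`: a matching of largest possible size. -/
def IsMaximumMatching {V : Type*} (G : SimpleGraph V) (M : Set (Sym2 V)) : Prop :=
  IsMatchingSet G M ∧ ∀ M' : Set (Sym2 V), IsMatchingSet G M' → M'.ncard ≤ M.ncard

/-- A perfect matching of `G` as a set of edges: a matching covering every vertex. -/
def IsPerfectMatchingSet {V : Type*} (G : SimpleGraph V) (M : Set (Sym2 V)) : Prop :=
  IsMatchingSet G M ∧ ∀ v : V, CoveredBy M v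


namespace KotzigAux

variable {V : Type*}

lemma natCast_zmod_inj {n t t' : ℕ} (ht : t < n) (ht' : t' < n)
    (h : ((t : ℕ) : ZMod n) = ((t' : ℕ) : ZMod n)) : t = t' := by
  rw [ZMod.natCast_eq_natCast_iff'] at h
  rwa [Nat.mod_eq_of_lt ht, Nat.mod_eq_of_lt ht'] at h

lemma natCast_succ_zmod_inj {n t t' : ℕ} (ht : t < n) (ht' : t' < n)
    (h : ((t + 1 : ℕ) : ZMod n) = ((t' + 1 : ℕ) : ZMod n)) : t = t' := by
  rw [ZMod.natCast_eq_natCast_iff'] at h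
  by_cases h1 : t + 1 = n <;> by_cases h2 : t' + 1 = n
  · omega
  · rw [h1, Nat.mod_self, Nat.mod_eq_of_lt (by omega)] at h; omega
  · rw [h2, Nat.mod_self, Nat.mod_eq_of_lt (by omega)] at h; omega
  · rw [Nat.mod_eq_of_lt (by omega), Nat.mod_eq_of_lt (by omega)] at h; omega

lemma two_ne_zero_zmod {n : ℕ} (hn : 3 ≤ n) : ((2 : ℕ) : ZMod n) ≠ 0 := by
  intro h
  have : NeZero n := ⟨by omega⟩
  have h2 : ((2 : ℕ) : ZMod n).val = 2 := ZMod.val_cast_of_lt (by omega)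
  rw [h, ZMod.val_zero] at h2
  omega

/-- Build the closed walk visiting `c 0, c 1, ..., c (n-1), c 0`. -/
lemma exists_cycle_walk {n : ℕ} (c : ZMod n → V)
    (hne : ∀ k : ZMod n, c k ≠ c (k + 1)) :
    ∃ w : (completeGraph V).Walk (c 0) (c 0),
      w.support = (List.range (n + 1)).map (fun t => c (t : ℕ)) ∧
      w.edges = (List.range n).map (fun t => s(c (t : ℕ), c ((t : ℕ) + 1))) := by
  have key : ∀ m : ℕ, m ≤ n →
      ∃ w : (completeGraph V).Walk (c ((n - m : ℕ) : ZMod n)) (c 0),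
        w.support = (List.range' (n - m) (m + 1)).map (fun t => c (t : ℕ)) ∧
        w.edges = (List.range' (n - m) m).map
          (fun t => s(c (t : ℕ), c ((t : ℕ) + 1))) := by
    intro m
    induction m with
    | zero =>
      intro _
      rw [show ((n - 0 : ℕ) : ZMod n) = 0 by simp]
      refine ⟨Walk.nil, ?_, ?_⟩
      · show _ = List.map _ (List.range' n 1)
        rw [List.range'_succ]
        simp [ZMod.natCast_self]
      · simp
    | succ m ih =>
      intro hm
      obtain ⟨w, hs, he⟩ := ih (by omega)
      have harith : (n - (m + 1)) + 1 = n - m := by omega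
      have hcast : (((n - (m + 1) : ℕ) : ZMod n) + 1) = ((n - m : ℕ) : ZMod n) := by
        rw [← harith]; push_cast; ring
      have hadj : (completeGraph V).Adj (c ((n - (m + 1) : ℕ) : ZMod n))
          (c ((n - m : ℕ) : ZMod n)) := by
        have := hne ((n - (m + 1) : ℕ) : ZMod n)
        rw [hcast] at this
        exact this
      have hr1 : List.range' (n - (m + 1)) (m + 1 + 1) = (n - (m + 1)) :: List.range' (n - m) (m + 1) := by
        rw [List.range'_succ, harith]
      have hr2 : List.range' (n - (m + 1)) (m + 1) = (n - (m + 1)) :: List.range' (n - m) m := by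
        rw [List.range'_succ, harith]
      refine ⟨Walk.cons hadj w, ?_, ?_⟩
      · rw [Walk.support_cons, hs, hr1, List.map_cons]
      · rw [Walk.edges_cons, he, hr2, List.map_cons, ← hcast]
  obtain ⟨w, hs, he⟩ := key n le_rfl
  have h0 : (n - n : ℕ) = 0 := by omega
  refine ⟨w.copy (by rw [h0]; simp) rfl, ?_, ?_⟩
  · rw [Walk.support_copy, hs, h0, ← List.range_eq_range']
  · rw [Walk.edges_copy, he, h0, ← List.range_eq_range']


lemma one_ne_zero_zmod {n : ℕ} (hn : 3 ≤ n) : ((1 : ℕ) : ZMod n) ≠ 0 := by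
  intro h
  have : NeZero n := ⟨by omega⟩
  have h2 : ((1 : ℕ) : ZMod n).val = 1 := ZMod.val_cast_of_lt (by omega)
  rw [h, ZMod.val_zero] at h2
  omega

lemma matching_shared {G : SimpleGraph V} {M : Set (Sym2 V)} (hM : IsMatchingSet G M)
    {e1 e2 : Sym2 V} (m1 : e1 ∈ M) (m2 : e2 ∈ M) {u : V} (hu1 : u ∈ e1) (hu2 : u ∈ e2) :
    e1 = e2 := by
  by_contra h
  exact hM.2 e1 m1 e2 m2 h u hu1 hu2

lemma ham_cycle_of_zmod_cycle {n : ℕ} (hn : 3 ≤ n) [Fintype V] [DecidableEq V]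
    (M1 M2 : Set (Sym2 V))
    (h1 : IsPerfectMatchingSet (completeGraph V) M1)
    (h2 : IsPerfectMatchingSet (completeGraph V) M2)
    (c : ZMod n → V) (hc : Function.Bijective c)
    (hedge : ∀ k : ZMod n, s(c k, c (k + 1)) ∈ M1 ∪ M2) :
    ∃ (u : V) (w : (completeGraph V).Walk u u),
      w.IsHamiltonianCycle ∧ ∀ e : Sym2 V, e ∈ w.edges ↔ e ∈ M1 ∪ M2 := by
  have hNZ : NeZero n := ⟨by omega⟩
  have hone : (1 : ZMod n) ≠ 0 := by
    have := one_ne_zero_zmod hn; rwa [Nat.cast_one] at this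
  have htwo : (2 : ZMod n) ≠ 0 := by
    have := two_ne_zero_zmod hn; rwa [Nat.cast_ofNat] at this
  have hsucc_ne : ∀ k : ZMod n, k ≠ k + 1 := by
    intro k h
    exact hone (by linear_combination -h)
  have hne : ∀ k : ZMod n, c k ≠ c (k + 1) := fun k h => hsucc_ne k (hc.injective h)
  obtain ⟨w, hs, he⟩ := exists_cycle_walk c hne
  -- tail of the support
  have htail : w.support.tail = (List.range n).map (fun t => c ((t + 1 : ℕ) : ZMod n)) := by
    rw [hs, List.range_succ_eq_map, List.map_cons, List.tail_cons, List.map_map]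
    rfl
  have htail_nodup : w.support.tail.Nodup := by
    rw [htail]
    refine List.Nodup.map_on ?_ List.nodup_range
    intro t ht t' ht' hcc
    exact natCast_succ_zmod_inj (List.mem_range.mp ht) (List.mem_range.mp ht')
      (hc.injective hcc)
  have hmem_tail : ∀ a : V, a ∈ w.support.tail := by
    intro a
    obtain ⟨k, rfl⟩ := hc.surjective a
    rw [htail, List.mem_map]
    by_cases hk : k.val = 0
    · refine ⟨n - 1, List.mem_range.mpr (by omega), ?_⟩
      have : (n - 1) + 1 = n := by omega
      rw [this, ZMod.natCast_self]
      congr 1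
      have := ZMod.natCast_rightInverse (n := n) k
      rw [hk] at this
      simpa using this
    · refine ⟨k.val - 1, List.mem_range.mpr (by have := ZMod.val_lt k; omega), ?_⟩
      have : (k.val - 1) + 1 = k.val := by omega
      rw [this]
      congr 1
      exact ZMod.natCast_rightInverse k
  have hcyc : w.IsCycle := by
    rw [Walk.isCycle_def]
    refine ⟨⟨?_⟩, ?_, htail_nodup⟩
    · rw [he]
      refine List.Nodup.map_on ?_ List.nodup_range
      intro t ht t' ht' hcc
      rw [Sym2.eq_iff] at hcc
      rcases hcc with ⟨ha, _⟩ | ⟨ha, hb⟩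
      · exact natCast_zmod_inj (List.mem_range.mp ht) (List.mem_range.mp ht') (hc.injective ha)
      · exfalso
        have ha' := hc.injective ha
        have hb' := hc.injective hb
        exact htwo (by linear_combination hb' - ha')
    · intro hnil
      have hlen : w.edges.length = n := by rw [he]; simp
      rw [hnil] at hlen
      simp at hlen
      omega
  refine ⟨c 0, w, ?_, ?_⟩
  · rw [Walk.isHamiltonianCycle_iff_isCycle_and_support_count_tail_eq_one]
    exact ⟨hcyc, fun a => List.count_eq_one_of_mem htail_nodup (hmem_tail a)⟩
  · intro e
    constructor
    · intro hmem
      rw [he, List.mem_map] at hmem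
      obtain ⟨t, _, rfl⟩ := hmem
      exact hedge _
    · intro hmem
      have huv : ∀ u v : V, s(u, v) ∈ M1 ∪ M2 → s(u, v) ∈ w.edges := by
        intro u v hm
        obtain ⟨k, rfl⟩ := hc.surjective u
        have hp := hedge k
        have hq0 := hedge (k - 1)
        rw [sub_add_cancel] at hq0
        -- the three edges share the vertex c k
        have hin : s(c k, v) = s(c k, c (k + 1)) ∨ s(c k, v) = s(c (k - 1), c k) := by
          have hne2 : s(c k, c (k + 1)) ≠ s(c (k - 1), c k) := by
            intro hq
            rw [Sym2.eq_iff] at hq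
            rcases hq with ⟨ha, hb⟩ | ⟨_, hb⟩
            · exact hone (by linear_combination hc.injective ha)
            · exact htwo (by linear_combination hc.injective hb)
          have mk1 : (c k) ∈ s(c k, v) := Sym2.mem_mk_left _ _
          have mk2 : (c k) ∈ s(c k, c (k + 1)) := Sym2.mem_mk_left _ _
          have mk3 : (c k) ∈ s(c (k - 1), c k) := Sym2.mem_mk_right _ _
          rcases hm with hm | hm <;> rcases hp with hp | hp <;> rcases hq0 with hq | hq
          · exact Or.inl (matching_shared h1.1 hm hp mk1 mk2)
          · exact Or.inl (matching_shared h1.1 hm hp mk1 mk2)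
          · exact Or.inr (matching_shared h1.1 hm hq mk1 mk3)
          · exact absurd (matching_shared h2.1 hp hq mk2 mk3) hne2
          · exact absurd (matching_shared h1.1 hp hq mk2 mk3) hne2
          · exact Or.inr (matching_shared h2.1 hm hq mk1 mk3)
          · exact Or.inl (matching_shared h2.1 hm hp mk1 mk2)
          · exact Or.inl (matching_shared h2.1 hm hp mk1 mk2)
        rw [he, List.mem_map]
        rcases hin with hin | hin
        · refine ⟨k.val, List.mem_range.mpr (ZMod.val_lt k), ?_⟩
          rw [ZMod.natCast_rightInverse k, hin]
        · refine ⟨(k - 1).val, List.mem_range.mpr (ZMod.val_lt (k - 1)), ?_⟩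
          rw [ZMod.natCast_rightInverse (k - 1), sub_add_cancel, hin]
      induction e using Sym2.ind with
      | _ u v => exact huv u v hmem

-- chunk2: matchings
variable {p : ℕ}

/-- the `F`-type matching: within-side pairs summing to `2i`, plus the cross edge at `i`. -/
def Fm (p : ℕ) (i : ZMod p) : Set (Sym2 (ZMod p × Bool)) :=
  {e | ∃ x y : ZMod p, ∃ b : Bool, e = s((x, b), (y, b)) ∧ x + y = 2 * i ∧ x ≠ y}
    ∪ {s(((i : ZMod p), false), ((i : ZMod p), true))}

/-- the `G`-type matching: cross pairs with difference `d`. -/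
def Gm (p : ℕ) (d : ZMod p) : Set (Sym2 (ZMod p × Bool)) :=
  {e | ∃ x : ZMod p, e = s((x, false), (x + d, true))}

lemma two_ne_zero' (hp : p.Prime) (hodd : Odd p) : (2 : ZMod p) ≠ 0 := by
  have : NeZero p := ⟨hp.ne_zero⟩
  intro h
  have h2 : ((2 : ℕ) : ZMod p) = 0 := by push_cast; exact h
  rw [ZMod.natCast_eq_zero_iff] at h2
  have := Nat.le_of_dvd (by norm_num) h2
  interval_cases p <;>
    first
    | exact absurd hp (by decide)
    | exact absurd hodd (by decide)

lemma Fm_perfect (hp : p.Prime) (hodd : Odd p) (i : ZMod p) :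
    IsPerfectMatchingSet (completeGraph (ZMod p × Bool)) (Fm p i) := by
  have h2 : (2 : ZMod p) ≠ 0 := two_ne_zero' hp hodd
  haveI := Fact.mk hp
  refine ⟨⟨?_, ?_⟩, ?_⟩
  · rintro e (⟨x, y, b, rfl, hsum, hxy⟩ | he)
    · rw [SimpleGraph.mem_edgeSet]
      simp only [completeGraph, top_adj, ne_eq, Prod.mk.injEq]
      tauto
    · rw [Set.mem_singleton_iff] at he
      subst he
      rw [SimpleGraph.mem_edgeSet]
      simp [completeGraph]
  · rintro e1 (⟨x, y, b, rfl, hsum, hxy⟩ | he1) e2 he2 hne v hv1 hv2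
    · rcases he2 with ⟨x', y', b', rfl, hsum', hxy'⟩ | he2
      · apply hne
        rw [Sym2.mem_iff] at hv1 hv2
        rcases hv1 with rfl | rfl <;> rcases hv2 with h | h <;>
          rw [Prod.mk.injEq] at h <;> obtain ⟨h1, h2'⟩ := h <;> subst h2' <;> subst h1
        · have : y = y' := by linear_combination hsum - hsum'
          rw [this]
        · have : y = x' := by linear_combination hsum - hsum'
          rw [this, Sym2.eq_swap]
        · have : x = y' := by linear_combination hsum - hsum'
          rw [this, Sym2.eq_swap]
        · have : x = x' := by linear_combination hsum - hsum'
          rw [this]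
      · rw [Set.mem_singleton_iff] at he2
        subst he2
        rw [Sym2.mem_iff] at hv1 hv2
        apply hxy
        rcases hv1 with rfl | rfl <;> rcases hv2 with h | h <;>
          rw [Prod.mk.injEq] at h <;> obtain ⟨h1, h2'⟩ := h <;> subst h1 <;>
          first
          | linear_combination hsum
          | linear_combination - hsum
    · rw [Set.mem_singleton_iff] at he1
      subst he1
      rcases he2 with ⟨x', y', b', rfl, hsum', hxy'⟩ | he2
      · rw [Sym2.mem_iff] at hv1 hv2
        apply hxy'
        rcases hv2 with h | h <;> rcases hv1 with rfl | rfl <;>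
          rw [Prod.mk.injEq] at h <;> obtain ⟨h1, h2'⟩ := h <;> subst h1 <;>
          first
          | linear_combination hsum'
          | linear_combination - hsum'
      · rw [Set.mem_singleton_iff] at he2
        exact (hne he2.symm).elim
  · rintro ⟨x, b⟩
    by_cases hx : x = i
    · subst hx
      refine ⟨s((x, false), (x, true)), Or.inr rfl, ?_⟩
      cases b <;> simp
    · refine ⟨s((x, b), (2 * i - x, b)), Or.inl ⟨x, 2 * i - x, b, rfl, by ring, ?_⟩, ?_⟩
      · intro h
        apply hx
        have : 2 * (x - i) = 0 := by linear_combination h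
        rcases mul_eq_zero.mp this with h' | h'
        · exact absurd h' h2
        · linear_combination h'
      · simp

lemma Gm_perfect (hp : p.Prime) (d : ZMod p) :
    IsPerfectMatchingSet (completeGraph (ZMod p × Bool)) (Gm p d) := by
  refine ⟨⟨?_, ?_⟩, ?_⟩
  · rintro e ⟨x, rfl⟩
    rw [SimpleGraph.mem_edgeSet]
    simp [completeGraph]
  · rintro e1 ⟨x, rfl⟩ e2 ⟨x', rfl⟩ hne v hv1 hv2
    apply hne
    rw [Sym2.mem_iff] at hv1 hv2
    rcases hv1 with rfl | rfl <;> rcases hv2 with h | h <;> rw [Prod.mk.injEq] at h <;>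
      obtain ⟨h1, h2'⟩ := h
    · rw [h1]
    · exact absurd h2' (by simp)
    · exact absurd h2' (by simp)
    · rw [add_right_cancel h1]
  · rintro ⟨x, b⟩
    cases b
    · exact ⟨s((x, false), (x + d, true)), ⟨x, rfl⟩, by simp⟩
    · exact ⟨s((x - d, false), (x - d + d, true)), ⟨x - d, rfl⟩, by simp⟩
-- chunk3 : disjointness and coverage
lemma Fm_disj_Fm (hp : p.Prime) (hodd : Odd p) {i i' : ZMod p} (h : i ≠ i') :
    Disjoint (Fm p i) (Fm p i') := by
  have h2 : (2 : ZMod p) ≠ 0 := two_ne_zero' hp hodd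
  haveI := Fact.mk hp
  rw [Set.disjoint_left]
  rintro e (⟨x, y, b, rfl, hsum, hxy⟩ | he1) he2
  · rcases he2 with ⟨x', y', b', heq, hsum', hxy'⟩ | he2
    · apply h
      apply mul_left_cancel₀ h2
      rw [Sym2.eq_iff] at heq
      rcases heq with ⟨h1, h1'⟩ | ⟨h1, h1'⟩ <;> rw [Prod.mk.injEq] at h1 h1' <;>
        rw [← hsum, ← hsum']
      · rw [h1.1, h1'.1]
      · rw [h1.1, h1'.1, add_comm]
    · rw [Set.mem_singleton_iff, Sym2.eq_iff] at he2
      rcases he2 with ⟨h1, h1'⟩ | ⟨h1, h1'⟩ <;> rw [Prod.mk.injEq] at h1 h1' <;>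
        rw [h1.2] at h1' <;> exact Bool.noConfusion h1'.2
  · rw [Set.mem_singleton_iff] at he1
    subst he1
    rcases he2 with ⟨x', y', b', heq, hsum', hxy'⟩ | he2
    · rw [Sym2.eq_iff] at heq
      rcases heq with ⟨h1, h1'⟩ | ⟨h1, h1'⟩ <;> rw [Prod.mk.injEq] at h1 h1' <;>
        rw [← h1.2] at h1' <;> exact Bool.noConfusion h1'.2
    · rw [Set.mem_singleton_iff, Sym2.eq_iff] at he2
      apply h
      rcases he2 with ⟨h1, h1'⟩ | ⟨h1, h1'⟩ <;> rw [Prod.mk.injEq] at h1 h1'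
      · exact h1.1
      · exact Bool.noConfusion h1.2
lemma Fm_disj_Gm {i d : ZMod p} (hd : d ≠ 0) :
    Disjoint (Fm p i) (Gm p d) := by
  rw [Set.disjoint_left]
  rintro e (⟨x, y, b, rfl, hsum, hxy⟩ | he1) ⟨x', heq⟩
  · rw [Sym2.eq_iff] at heq
    rcases heq with ⟨h1, h1'⟩ | ⟨h1, h1'⟩ <;> rw [Prod.mk.injEq] at h1 h1' <;>
      obtain ⟨-, hb⟩ := h1 <;> obtain ⟨-, hb'⟩ := h1' <;> rw [hb] at hb' <;>
      exact Bool.noConfusion hb'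
  · rw [Set.mem_singleton_iff] at he1
    subst he1
    rw [Sym2.eq_iff] at heq
    rcases heq with ⟨h1, h1'⟩ | ⟨h1, h1'⟩ <;> rw [Prod.mk.injEq] at h1 h1'
    · apply hd
      have : x' = i := h1.1.symm
      have h2 : x' + d = i := h1'.1.symm
      rw [this] at h2
      linear_combination h2
    · exact Bool.noConfusion h1.2
lemma Gm_disj_Gm {d e : ZMod p} (h : d ≠ e) :
    Disjoint (Gm p d) (Gm p e) := by
  rw [Set.disjoint_left]
  rintro ed ⟨x, rfl⟩ ⟨x', heq⟩
  rw [Sym2.eq_iff] at heq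
  rcases heq with ⟨h1, h1'⟩ | ⟨h1, h1'⟩ <;> rw [Prod.mk.injEq] at h1 h1'
  · apply h
    have hx : x = x' := h1.1
    have h2 : x + d = x' + e := h1'.1
    rw [hx] at h2
    exact add_left_cancel h2
  · exact Bool.noConfusion h1.2
lemma mem_type (hp : p.Prime) (hodd : Odd p) (e : Sym2 (ZMod p × Bool))
    (he : e ∈ (completeGraph (ZMod p × Bool)).edgeSet) :
    (∃ i, e ∈ Fm p i) ∨ (∃ d, d ≠ 0 ∧ e ∈ Gm p d) := by
  have h2 : (2 : ZMod p) ≠ 0 := two_ne_zero' hp hodd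
  haveI := Fact.mk hp
  induction e using Sym2.ind with
  | _ u v =>
    obtain ⟨x, b⟩ := u
    obtain ⟨y, b'⟩ := v
    rw [SimpleGraph.mem_edgeSet] at he
    have hne : (x, b) ≠ (y, b') := he
    cases b <;> cases b'
    · left
      refine ⟨(x + y) * 2⁻¹, Or.inl ⟨x, y, false, rfl, ?_, fun hxy => hne (by rw [hxy])⟩⟩
      field_simp
    · by_cases hxy : x = y
      · subst hxy
        exact Or.inl ⟨x, Or.inr rfl⟩
      · refine Or.inr ⟨y - x, fun hd => hxy (by linear_combination - hd), x, ?_⟩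
        rw [show x + (y - x) = y from by ring]
    · by_cases hxy : x = y
      · subst hxy
        exact Or.inl ⟨x, Or.inr (Sym2.eq_swap)⟩
      · refine Or.inr ⟨x - y, fun hd => hxy (by linear_combination hd), y, ?_⟩
        rw [show y + (x - y) = x from by ring, Sym2.eq_swap]
    · left
      refine ⟨(x + y) * 2⁻¹, Or.inl ⟨x, y, true, rfl, ?_, fun hxy => hne (by rw [hxy])⟩⟩
      field_simp
-- chunk4 : cycle helpers
lemma modeq_resolve {q a b : ℕ} (hq : 0 < q) (hba : b ≤ a) (hab : a < b + 4 * q)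
    (h : a % q = b % q) : a = b ∨ a = b + q ∨ a = b + 2 * q ∨ a = b + 3 * q := by
  have hd : q ∣ a - b := (Nat.modEq_iff_dvd' hba).mp (Nat.ModEq.symm h)
  obtain ⟨m, hm⟩ := hd
  have hm4 : m < 4 := by
    by_contra hc
    push_neg at hc
    have : q * 4 ≤ q * m := Nat.mul_le_mul_left q hc
    omega
  interval_cases m <;> omega

lemma val_inj' {n : ℕ} [NeZero n] {k k' : ZMod n} (h : k.val = k'.val) : k = k' := by
  rw [← ZMod.natCast_rightInverse k, ← ZMod.natCast_rightInverse k', h]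

lemma val_succ {n : ℕ} [NeZero n] (k : ZMod n) :
    (k + 1).val = if k.val + 1 = n then 0 else k.val + 1 := by
  have h1 : k + 1 = ((k.val + 1 : ℕ) : ZMod n) := by
    push_cast
    rw [ZMod.natCast_rightInverse k]
  rw [h1]
  split_ifs with h
  · rw [h, ZMod.natCast_self, ZMod.val_zero]
  · exact ZMod.val_cast_of_lt (by have := ZMod.val_lt k; omega)

lemma cast_mod_p_inj {q a b : ℕ} (ha : a < q) (hb : b < q)
    (h : ((a : ℕ) : ZMod q) = ((b : ℕ) : ZMod q)) : a = b := by
  rw [ZMod.natCast_eq_natCast_iff'] at h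
  rwa [Nat.mod_eq_of_lt ha, Nat.mod_eq_of_lt hb] at h

lemma odd_prime_ge3 (hp : p.Prime) (hodd : Odd p) : 3 ≤ p := by
  have h2 := hp.two_le
  rcases hodd with ⟨m, hm⟩
  omega

lemma GG_cycle (hp : p.Prime) (hodd : Odd p) {d e : ZMod p} (hde : d ≠ e) :
    ∃ c : ZMod (2 * p) → ZMod p × Bool, Function.Bijective c ∧
      ∀ k, s(c k, c (k + 1)) ∈ Gm p d ∪ Gm p e := by
  haveI := Fact.mk hp
  have hp3 : 3 ≤ p := odd_prime_ge3 hp hodd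
  haveI : NeZero p := ⟨by omega⟩
  haveI : NeZero (2 * p) := ⟨by omega⟩
  have htne : d - e ≠ 0 := sub_ne_zero.mpr hde
  refine ⟨fun k => if k.val % 2 = 0 then (((k.val / 2 : ℕ) : ZMod p) * (d - e), false)
    else (((k.val / 2 : ℕ) : ZMod p) * (d - e) + d, true), ?_, ?_⟩
  · rw [Fintype.bijective_iff_injective_and_card]
    refine ⟨?_, by simp [ZMod.card]; ring⟩
    intro k k' hkk
    beta_reduce at hkk
    have hk := ZMod.val_lt k
    have hk' := ZMod.val_lt k'
    apply val_inj'
    by_cases h1 : k.val % 2 = 0 <;> by_cases h2 : k'.val % 2 = 0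
    · rw [if_pos h1, if_pos h2, Prod.mk.injEq] at hkk
      have := mul_right_cancel₀ htne hkk.1
      have := cast_mod_p_inj (by omega) (by omega) this
      omega
    · rw [if_pos h1, if_neg h2, Prod.mk.injEq] at hkk
      exact Bool.noConfusion hkk.2
    · rw [if_neg h1, if_pos h2, Prod.mk.injEq] at hkk
      exact Bool.noConfusion hkk.2
    · rw [if_neg h1, if_neg h2, Prod.mk.injEq] at hkk
      have := mul_right_cancel₀ htne (add_right_cancel hkk.1)
      have := cast_mod_p_inj (by omega) (by omega) this
      omega
  · intro k
    beta_reduce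
    have hk := ZMod.val_lt k
    have hv := val_succ k
    by_cases hw : k.val + 1 = 2 * p
    · -- wrap around : k.val = 2p - 1, odd
      rw [if_pos hw] at hv
      have hodd' : k.val % 2 = 1 := by rcases hodd with ⟨m, hm⟩; omega
      have hdiv : k.val / 2 = p - 1 := by omega
      have hc1 : (if k.val % 2 = 0 then (((k.val / 2 : ℕ) : ZMod p) * (d - e), false)
          else (((k.val / 2 : ℕ) : ZMod p) * (d - e) + d, true))
          = ((e : ZMod p), true) := by
        rw [if_neg (by omega), hdiv, Prod.mk.injEq]
        refine ⟨?_, rfl⟩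
        rw [Nat.cast_sub (by omega), ZMod.natCast_self, Nat.cast_one]
        ring
      have hc2 : (if (k+1).val % 2 = 0 then ((((k+1).val / 2 : ℕ) : ZMod p) * (d - e), false)
          else ((((k+1).val / 2 : ℕ) : ZMod p) * (d - e) + d, true))
          = ((0 : ZMod p), false) := by
        rw [hv]
        norm_num
      rw [hc1, hc2]
      right
      exact ⟨0, by rw [zero_add, Sym2.eq_swap]⟩
    · rw [if_neg hw] at hv
      by_cases h1 : k.val % 2 = 0
      · -- Gm d edge
        have h2 : (k + 1).val % 2 = 1 := by omega
        have hdiv : (k + 1).val / 2 = k.val / 2 := by omega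
        rw [if_pos h1, if_neg (by omega), hdiv]
        left
        exact ⟨((k.val / 2 : ℕ) : ZMod p) * (d - e), rfl⟩
      · -- Gm e edge
        have h2 : (k + 1).val % 2 = 0 := by omega
        have hdiv : (k + 1).val / 2 = k.val / 2 + 1 := by omega
        rw [if_neg h1, if_pos (by omega), hdiv]
        right
        refine ⟨((k.val / 2 + 1 : ℕ) : ZMod p) * (d - e), ?_⟩
        rw [Sym2.eq_swap]
        congr 2
        push_cast
        ring
-- chunk5 : FG cycle
lemma modeq_resolve_sym {q a b : ℕ} (hq : 0 < q) (ha : a < 2 * q) (hb : b < 2 * q)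
    (h : a % q = b % q) : a = b ∨ a = b + q ∨ b = a + q := by
  rcases le_total b a with hle | hle
  · have := modeq_resolve hq hle (by omega) h
    omega
  · have := modeq_resolve hq hle (by omega) h.symm
    omega

lemma cast_nat_ne_zero {a : ℕ} (ha : a % p ≠ 0) : ((a : ℕ) : ZMod p) ≠ 0 := by
  intro h
  apply ha
  have h0 : ((a : ℕ) : ZMod p) = ((0 : ℕ) : ZMod p) := by simpa using h
  rw [ZMod.natCast_eq_natCast_iff'] at h0
  simpa using h0

lemma cast_sum_mod {a b : ℕ} (h : ((a : ℕ) : ZMod p) = ((b : ℕ) : ZMod p)) :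
    a % p = b % p := by rwa [ZMod.natCast_eq_natCast_iff'] at h

lemma add_ne_sub' (hfact : Fact p.Prime) (h2 : (2 : ZMod p) ≠ 0) {i z : ZMod p} (hz : z ≠ 0) :
    i + z ≠ i - z := by
  intro h
  have h0 : (2 : ZMod p) * z = 0 := by linear_combination h
  rcases mul_eq_zero.mp h0 with h' | h'
  · exact h2 h'
  · exact hz h'

lemma FG_cycle (hp : p.Prime) (hodd : Odd p) (i : ZMod p) {d : ZMod p} (hd : d ≠ 0) :
    ∃ c : ZMod (2 * p) → ZMod p × Bool, Function.Bijective c ∧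
      ∀ k, s(c k, c (k + 1)) ∈ Fm p i ∪ Gm p d := by
  haveI hfact := Fact.mk hp
  have hp3 : 3 ≤ p := odd_prime_ge3 hp hodd
  have hp2 : p % 2 = 1 := by rcases hodd with ⟨m, hm⟩; omega
  haveI : NeZero p := ⟨by omega⟩
  haveI : NeZero (2 * p) := ⟨by omega⟩
  have h2 : (2 : ZMod p) ≠ 0 := two_ne_zero' hp hodd
  refine ⟨fun k => (if k.val % 4 < 2 then i + (((k.val + 1) / 2 : ℕ) : ZMod p) * d
      else i - (((k.val + 1) / 2 : ℕ) : ZMod p) * d,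
      decide (k.val % 4 = 1 ∨ k.val % 4 = 2)), ?_, ?_⟩
  · rw [Fintype.bijective_iff_injective_and_card]
    refine ⟨?_, by simp [ZMod.card, Nat.mul_comm]⟩
    intro k k' hkk
    beta_reduce at hkk
    rw [Prod.mk.injEq] at hkk
    obtain ⟨hval, hside⟩ := hkk
    rw [decide_eq_decide] at hside
    have hk := ZMod.val_lt k
    have hk' := ZMod.val_lt k'
    apply val_inj'
    have hss : ((k.val % 4 = 1 ∨ k.val % 4 = 2) ∧ (k'.val % 4 = 1 ∨ k'.val % 4 = 2))
        ∨ (¬(k.val % 4 = 1 ∨ k.val % 4 = 2) ∧ ¬(k'.val % 4 = 1 ∨ k'.val % 4 = 2)) := by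
      rcases Classical.em (k.val % 4 = 1 ∨ k.val % 4 = 2) with hP | hP
      · exact Or.inl ⟨hP, hside.mp hP⟩
      · exact Or.inr ⟨hP, fun h => hP (hside.mpr h)⟩
    by_cases hs1 : k.val % 4 < 2 <;> by_cases hs2 : k'.val % 4 < 2
    · rw [if_pos hs1, if_pos hs2] at hval
      have hq := cast_sum_mod (mul_right_cancel₀ hd (add_left_cancel hval))
      have := modeq_resolve_sym (by omega) (by omega) (by omega) hq
      omega
    · rw [if_pos hs1, if_neg hs2] at hval
      have h0 : ((((k.val + 1) / 2 : ℕ) : ZMod p) + (((k'.val + 1) / 2 : ℕ) : ZMod p)) * d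
          = 0 := by linear_combination hval
      have hzero : (((k.val + 1) / 2 + (k'.val + 1) / 2 : ℕ) : ZMod p) = ((0 : ℕ) : ZMod p) := by
        push_cast
        rcases mul_eq_zero.mp h0 with h' | h'
        · exact h'
        · exact absurd h' hd
      have hq := cast_sum_mod hzero
      rw [Nat.zero_mod] at hq
      have := modeq_resolve (q := p) (a := (k.val + 1) / 2 + (k'.val + 1) / 2) (b := 0)
        (by omega) (by omega) (by omega) (by simpa using hq)
      omega
    · rw [if_neg hs1, if_pos hs2] at hval
      have h0 : ((((k.val + 1) / 2 : ℕ) : ZMod p) + (((k'.val + 1) / 2 : ℕ) : ZMod p)) * d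
          = 0 := by linear_combination - hval
      have hzero : (((k.val + 1) / 2 + (k'.val + 1) / 2 : ℕ) : ZMod p) = ((0 : ℕ) : ZMod p) := by
        push_cast
        rcases mul_eq_zero.mp h0 with h' | h'
        · exact h'
        · exact absurd h' hd
      have hq := cast_sum_mod hzero
      rw [Nat.zero_mod] at hq
      have := modeq_resolve (q := p) (a := (k.val + 1) / 2 + (k'.val + 1) / 2) (b := 0)
        (by omega) (by omega) (by omega) (by simpa using hq)
      omega
    · rw [if_neg hs1, if_neg hs2] at hval
      have hq := cast_sum_mod (mul_right_cancel₀ hd (sub_right_inj.mp hval))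
      have := modeq_resolve_sym (by omega) (by omega) (by omega) hq
      omega
  · intro k
    beta_reduce
    have hk := ZMod.val_lt k
    have hv := val_succ k
    by_cases hw : k.val + 1 = 2 * p
    · -- wrap: k.val = 2p - 1, ≡ 1 mod 4
      rw [if_pos hw] at hv
      have h41 : k.val % 4 = 1 := by omega
      rw [hv, if_pos (by omega : k.val % 4 < 2), if_pos (by norm_num : (0:ℕ) % 4 < 2)]
      rw [show (k.val + 1) / 2 = p from by omega, ZMod.natCast_self,
        decide_eq_true (Or.inl h41), decide_eq_false (by norm_num : ¬((0:ℕ) % 4 = 1 ∨ (0:ℕ) % 4 = 2))]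
      left
      right
      rw [Set.mem_singleton_iff, Sym2.eq_swap]
      norm_num
    · rw [if_neg hw] at hv
      have h4 : k.val % 4 = 0 ∨ k.val % 4 = 1 ∨ k.val % 4 = 2 ∨ k.val % 4 = 3 := by omega
      rcases h4 with h40 | h41 | h42 | h43
      · -- Gm d edge, ascending
        rw [hv, if_pos (by omega : k.val % 4 < 2), if_pos (by omega : (k.val + 1) % 4 < 2),
          decide_eq_false (by omega : ¬(k.val % 4 = 1 ∨ k.val % 4 = 2)),
          decide_eq_true (show (k.val+1) % 4 = 1 ∨ (k.val+1) % 4 = 2 from by omega)]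
        right
        refine ⟨i + (((k.val + 1) / 2 : ℕ) : ZMod p) * d, ?_⟩
        rw [show (k.val + 1 + 1) / 2 = (k.val + 1) / 2 + 1 from by omega]
        congr 2
        push_cast
        ring
      · -- Fm i edge within side 1
        rw [hv, if_pos (by omega : k.val % 4 < 2), if_neg (by omega : ¬((k.val + 1) % 4 < 2)),
          decide_eq_true (show k.val % 4 = 1 ∨ k.val % 4 = 2 from by omega),
          decide_eq_true (show (k.val+1) % 4 = 1 ∨ (k.val+1) % 4 = 2 from by omega),
          show (k.val + 1 + 1) / 2 = (k.val + 1) / 2 from by omega]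
        left
        left
        refine ⟨i + (((k.val + 1) / 2 : ℕ) : ZMod p) * d,
          i - (((k.val + 1) / 2 : ℕ) : ZMod p) * d, true, rfl, by ring, ?_⟩
        refine add_ne_sub' hfact h2 (mul_ne_zero (cast_nat_ne_zero ?_) hd)
        rw [Nat.mod_eq_of_lt (by omega)]
        omega
      · -- Gm d edge, descending
        rw [hv, if_neg (by omega : ¬(k.val % 4 < 2)), if_neg (by omega : ¬((k.val + 1) % 4 < 2)),
          decide_eq_true (show k.val % 4 = 1 ∨ k.val % 4 = 2 from by omega),
          decide_eq_false (by omega : ¬((k.val+1) % 4 = 1 ∨ (k.val+1) % 4 = 2)),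
          show (k.val + 1 + 1) / 2 = (k.val + 1) / 2 + 1 from by omega]
        right
        refine ⟨i - (((k.val + 1) / 2 + 1 : ℕ) : ZMod p) * d, ?_⟩
        rw [Sym2.eq_swap]
        congr 2
        push_cast
        ring
      · -- Fm i edge within side 0
        rw [hv, if_neg (by omega : ¬(k.val % 4 < 2)), if_pos (by omega : (k.val + 1) % 4 < 2),
          decide_eq_false (by omega : ¬(k.val % 4 = 1 ∨ k.val % 4 = 2)),
          decide_eq_false (by omega : ¬((k.val+1) % 4 = 1 ∨ (k.val+1) % 4 = 2)),
          show (k.val + 1 + 1) / 2 = (k.val + 1) / 2 from by omega]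
        left
        left
        refine ⟨i - (((k.val + 1) / 2 : ℕ) : ZMod p) * d,
          i + (((k.val + 1) / 2 : ℕ) : ZMod p) * d, false, rfl, by ring, ?_⟩
        refine (add_ne_sub' hfact h2 (mul_ne_zero (cast_nat_ne_zero ?_) hd)).symm
        rw [Nat.mod_eq_of_lt (by omega)]
        omega
-- chunk6 : FF cycle
lemma FF_cycle (hp : p.Prime) (hodd : Odd p) {i j : ZMod p} (hij : i ≠ j) :
    ∃ c : ZMod (2 * p) → ZMod p × Bool, Function.Bijective c ∧
      ∀ k, s(c k, c (k + 1)) ∈ Fm p i ∪ Fm p j := by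
  haveI hfact := Fact.mk hp
  have hp3 : 3 ≤ p := odd_prime_ge3 hp hodd
  have hp2 : p % 2 = 1 := by rcases hodd with ⟨m, hm⟩; omega
  haveI : NeZero p := ⟨by omega⟩
  haveI : NeZero (2 * p) := ⟨by omega⟩
  have h2 : (2 : ZMod p) ≠ 0 := two_ne_zero' hp hodd
  have ht : j - i ≠ 0 := sub_ne_zero.mpr hij.symm
  refine ⟨fun k => (if k.val % 2 = 0 then i + ((k.val : ℕ) : ZMod p) * (j - i)
      else i - (((k.val : ℕ) : ZMod p) - 1) * (j - i),
      decide (1 ≤ k.val ∧ k.val ≤ p)), ?_, ?_⟩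
  · rw [Fintype.bijective_iff_injective_and_card]
    refine ⟨?_, by simp [ZMod.card, Nat.mul_comm]⟩
    intro k k' hkk
    beta_reduce at hkk
    rw [Prod.mk.injEq] at hkk
    obtain ⟨hval, hside⟩ := hkk
    rw [decide_eq_decide] at hside
    have hk := ZMod.val_lt k
    have hk' := ZMod.val_lt k'
    apply val_inj'
    have hss : ((1 ≤ k.val ∧ k.val ≤ p) ∧ (1 ≤ k'.val ∧ k'.val ≤ p))
        ∨ (¬(1 ≤ k.val ∧ k.val ≤ p) ∧ ¬(1 ≤ k'.val ∧ k'.val ≤ p)) := by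
      rcases Classical.em (1 ≤ k.val ∧ k.val ≤ p) with hP | hP
      · exact Or.inl ⟨hP, hside.mp hP⟩
      · exact Or.inr ⟨hP, fun h => hP (hside.mpr h)⟩
    by_cases hs1 : k.val % 2 = 0 <;> by_cases hs2 : k'.val % 2 = 0
    · rw [if_pos hs1, if_pos hs2] at hval
      have hq := cast_sum_mod (mul_right_cancel₀ ht (add_left_cancel hval))
      have := modeq_resolve_sym (by omega) (by omega) (by omega) hq
      omega
    · rw [if_pos hs1, if_neg hs2] at hval
      have h0 : (((k.val : ℕ) : ZMod p) + ((k'.val : ℕ) : ZMod p) - 1) * (j - i) = 0 := by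
        linear_combination hval
      have hzero : ((k.val + k'.val : ℕ) : ZMod p) = ((1 : ℕ) : ZMod p) := by
        push_cast
        rcases mul_eq_zero.mp h0 with h' | h'
        · linear_combination h'
        · exact absurd h' ht
      have hq := cast_sum_mod hzero
      rw [Nat.mod_eq_of_lt (by omega : 1 < p)] at hq
      have := modeq_resolve (q := p) (a := k.val + k'.val) (b := 1)
        (by omega) (by omega) (by omega) (by rw [hq, Nat.mod_eq_of_lt (by omega : 1 < p)])
      omega
    · rw [if_neg hs1, if_pos hs2] at hval
      have h0 : (((k.val : ℕ) : ZMod p) + ((k'.val : ℕ) : ZMod p) - 1) * (j - i) = 0 := by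
        linear_combination - hval
      have hzero : ((k.val + k'.val : ℕ) : ZMod p) = ((1 : ℕ) : ZMod p) := by
        push_cast
        rcases mul_eq_zero.mp h0 with h' | h'
        · linear_combination h'
        · exact absurd h' ht
      have hq := cast_sum_mod hzero
      rw [Nat.mod_eq_of_lt (by omega : 1 < p)] at hq
      have := modeq_resolve (q := p) (a := k.val + k'.val) (b := 1)
        (by omega) (by omega) (by omega) (by rw [hq, Nat.mod_eq_of_lt (by omega : 1 < p)])
      omega
    · rw [if_neg hs1, if_neg hs2] at hval
      have hq := cast_sum_mod (sub_left_inj.mp (mul_right_cancel₀ ht (sub_right_inj.mp hval)))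
      have := modeq_resolve_sym (by omega) (by omega) (by omega) hq
      omega
  · intro k
    beta_reduce
    have hk := ZMod.val_lt k
    have hv := val_succ k
    by_cases hw : k.val + 1 = 2 * p
    · -- wrap : k.val = 2p - 1, odd
      rw [if_pos hw] at hv
      have hcast : ((k.val : ℕ) : ZMod p) = -1 := by
        rw [show k.val = 2 * p - 1 from by omega, Nat.cast_sub (by omega), Nat.cast_mul,
          ZMod.natCast_self, Nat.cast_ofNat, Nat.cast_one]
        ring
      rw [hv, if_neg (by omega : ¬(k.val % 2 = 0)), if_pos (by norm_num : (0:ℕ) % 2 = 0),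
        decide_eq_false (by omega : ¬(1 ≤ k.val ∧ k.val ≤ p)),
        decide_eq_false (by norm_num : ¬(1 ≤ 0 ∧ 0 ≤ p)), hcast]
      right
      left
      refine ⟨i - (-1 - 1) * (j - i), i + ((0 : ℕ) : ZMod p) * (j - i), false, rfl, ?_, ?_⟩
      · push_cast
        ring
      · intro habs
        have h0 : (2 : ZMod p) * (j - i) = 0 := by
          push_cast at habs
          linear_combination habs
        rcases mul_eq_zero.mp h0 with h' | h'
        · exact h2 h'
        · exact ht h'
    · rw [if_neg hw] at hv
      by_cases hpar : k.val % 2 = 0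
      · -- even: Fm i edge
        rw [hv, if_pos hpar, if_neg (by omega : ¬((k.val + 1) % 2 = 0)),
          show ((k.val + 1 : ℕ) : ZMod p) - 1 = ((k.val : ℕ) : ZMod p) from by push_cast; ring]
        by_cases hn0 : k.val = 0
        · -- cross edge of Fm i
          rw [hn0, decide_eq_false (by norm_num : ¬(1 ≤ 0 ∧ 0 ≤ p)),
            decide_eq_true (show 1 ≤ 0 + 1 ∧ 0 + 1 ≤ p from by omega)]
          left
          right
          rw [Set.mem_singleton_iff]
          norm_num
        · by_cases hle : k.val ≤ p
          · -- within, sides true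
            rw [decide_eq_true (show 1 ≤ k.val ∧ k.val ≤ p from by omega),
              decide_eq_true (show 1 ≤ k.val + 1 ∧ k.val + 1 ≤ p from by omega)]
            left
            left
            refine ⟨i + ((k.val : ℕ) : ZMod p) * (j - i), i - ((k.val : ℕ) : ZMod p) * (j - i),
              true, rfl, by ring, ?_⟩
            refine add_ne_sub' hfact h2 (mul_ne_zero (cast_nat_ne_zero ?_) ht)
            rw [Nat.mod_eq_of_lt (by omega)]
            omega
          · -- within, sides false
            rw [decide_eq_false (by omega : ¬(1 ≤ k.val ∧ k.val ≤ p)),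
              decide_eq_false (by omega : ¬(1 ≤ k.val + 1 ∧ k.val + 1 ≤ p))]
            left
            left
            refine ⟨i + ((k.val : ℕ) : ZMod p) * (j - i), i - ((k.val : ℕ) : ZMod p) * (j - i),
              false, rfl, by ring, ?_⟩
            refine add_ne_sub' hfact h2 (mul_ne_zero (cast_nat_ne_zero ?_) ht)
            rw [Nat.mod_eq_sub_mod (by omega), Nat.mod_eq_of_lt (by omega)]
            omega
      · -- odd: Fm j edge
        rw [hv, if_neg hpar, if_pos (by omega : (k.val + 1) % 2 = 0)]
        by_cases hnp : k.val = p
        · -- cross edge of Fm j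
          have hc0 : ((k.val : ℕ) : ZMod p) = 0 := by rw [hnp, ZMod.natCast_self]
          have hc1 : ((k.val + 1 : ℕ) : ZMod p) = 1 := by
            rw [hnp]
            push_cast [ZMod.natCast_self]
            ring
          rw [hc0, hc1, decide_eq_true (show 1 ≤ k.val ∧ k.val ≤ p from by omega),
            decide_eq_false (by omega : ¬(1 ≤ k.val + 1 ∧ k.val + 1 ≤ p))]
          right
          right
          rw [Set.mem_singleton_iff, Sym2.eq_swap]
          congr 2 <;> ring
        · by_cases hle : k.val ≤ p
          · -- within side 1 : k.val ≤ p - 2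
            rw [decide_eq_true (show 1 ≤ k.val ∧ k.val ≤ p from by omega),
              decide_eq_true (show 1 ≤ k.val + 1 ∧ k.val + 1 ≤ p from by omega)]
            right
            left
            refine ⟨i - (((k.val : ℕ) : ZMod p) - 1) * (j - i),
              i + ((k.val + 1 : ℕ) : ZMod p) * (j - i), true, rfl, ?_, ?_⟩
            · push_cast
              ring
            · intro habs
              have h0 : (2 : ZMod p) * (((k.val : ℕ) : ZMod p) * (j - i)) = 0 := by
                push_cast at habs
                linear_combination - habs
              rcases mul_eq_zero.mp h0 with h' | h'
              · exact h2 h'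
              · rcases mul_eq_zero.mp h' with h'' | h''
                · exact cast_nat_ne_zero (by rw [Nat.mod_eq_of_lt (by omega)]; omega) h''
                · exact ht h''
          · -- within side 0 : p + 2 ≤ k.val
            rw [decide_eq_false (by omega : ¬(1 ≤ k.val ∧ k.val ≤ p)),
              decide_eq_false (by omega : ¬(1 ≤ k.val + 1 ∧ k.val + 1 ≤ p))]
            right
            left
            refine ⟨i - (((k.val : ℕ) : ZMod p) - 1) * (j - i),
              i + ((k.val + 1 : ℕ) : ZMod p) * (j - i), false, rfl, ?_, ?_⟩
            · push_cast
              ring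
            · intro habs
              have h0 : (2 : ZMod p) * (((k.val : ℕ) : ZMod p) * (j - i)) = 0 := by
                push_cast at habs
                linear_combination - habs
              rcases mul_eq_zero.mp h0 with h' | h'
              · exact h2 h'
              · rcases mul_eq_zero.mp h' with h'' | h''
                · refine cast_nat_ne_zero ?_ h''
                  rw [Nat.mod_eq_sub_mod (by omega), Nat.mod_eq_of_lt (by omega)]
                  omega
                · exact ht h''
-- chunk7 : W-level indexed family
/-- the index function selecting the matchings -/
def msel (p : ℕ) (k : Fin (2 * p - 1)) : Set (Sym2 (ZMod p × Bool)) :=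
  if (k : ℕ) < p then Fm p (((k : ℕ) : ℕ) : ZMod p)
  else Gm p ((((k : ℕ) - p + 1 : ℕ) : ℕ) : ZMod p)

lemma msel_perfect (hp : p.Prime) (hodd : Odd p) (k : Fin (2 * p - 1)) :
    IsPerfectMatchingSet (completeGraph (ZMod p × Bool)) (msel p k) := by
  rw [msel]
  split_ifs
  · exact Fm_perfect hp hodd _
  · exact Gm_perfect hp _

lemma msel_disjoint (hp : p.Prime) (hodd : Odd p) {k k' : Fin (2 * p - 1)} (hkk : k ≠ k') :
    Disjoint (msel p k) (msel p k') := by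
  have hp3 : 3 ≤ p := odd_prime_ge3 hp hodd
  have hk := k.isLt
  have hk' := k'.isLt
  have hvne : (k : ℕ) ≠ (k' : ℕ) := fun h => hkk (Fin.ext h)
  rw [msel, msel]
  split_ifs with h1 h2 h2
  · exact Fm_disj_Fm hp hodd (fun h => hvne (cast_mod_p_inj h1 h2 h))
  · exact Fm_disj_Gm (cast_nat_ne_zero (by rw [Nat.mod_eq_of_lt (by omega)]; omega))
  · exact (Fm_disj_Gm (cast_nat_ne_zero (by rw [Nat.mod_eq_of_lt (by omega)]; omega))).symm
  · exact Gm_disj_Gm (fun h => hvne (by have := cast_mod_p_inj (by omega) (by omega) h; omega))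

lemma msel_union (hp : p.Prime) (hodd : Odd p) :
    (⋃ k, msel p k) = (completeGraph (ZMod p × Bool)).edgeSet := by
  have hp3 : 3 ≤ p := odd_prime_ge3 hp hodd
  haveI : NeZero p := ⟨by omega⟩
  apply Set.Subset.antisymm
  · intro e he
    rw [Set.mem_iUnion] at he
    obtain ⟨k, hk⟩ := he
    have := msel_perfect hp hodd k
    exact this.1.1 hk
  · intro e he
    rw [Set.mem_iUnion]
    rcases mem_type hp hodd e he with ⟨i, hi⟩ | ⟨d, hd0, hd⟩
    · refine ⟨⟨i.val, by have := ZMod.val_lt i; omega⟩, ?_⟩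
      rw [msel]
      have hlt : (((⟨i.val, by have := ZMod.val_lt i; omega⟩ : Fin (2 * p - 1)) : ℕ)) < p := by
        simp only []
        exact ZMod.val_lt i
      rw [if_pos hlt]
      simpa only [ZMod.natCast_rightInverse i] using hi
    · have hd1 : 1 ≤ d.val := by
        rcases Nat.eq_zero_or_pos d.val with h | h
        · exact absurd (by rw [← ZMod.natCast_rightInverse d, h, Nat.cast_zero]) hd0
        · exact h
      have hdlt : d.val < p := ZMod.val_lt d
      refine ⟨⟨d.val + p - 1, by omega⟩, ?_⟩
      rw [msel]
      have hge : ¬(((⟨d.val + p - 1, by omega⟩ : Fin (2 * p - 1)) : ℕ) < p) := by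
        simp only []
        omega
      rw [if_neg hge]
      have : ((⟨d.val + p - 1, by omega⟩ : Fin (2 * p - 1)) : ℕ) - p + 1 = d.val := by
        simp only []
        omega
      rw [this, ZMod.natCast_rightInverse d]
      exact hd

lemma msel_cycle (hp : p.Prime) (hodd : Odd p) {k k' : Fin (2 * p - 1)} (hkk : k ≠ k') :
    ∃ c : ZMod (2 * p) → ZMod p × Bool, Function.Bijective c ∧
      ∀ m, s(c m, c (m + 1)) ∈ msel p k ∪ msel p k' := by
  have hp3 : 3 ≤ p := odd_prime_ge3 hp hodd
  have hk := k.isLt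
  have hk' := k'.isLt
  have hvne : (k : ℕ) ≠ (k' : ℕ) := fun h => hkk (Fin.ext h)
  rw [msel, msel]
  split_ifs with h1 h2 h2
  · exact FF_cycle hp hodd (fun h => hvne (cast_mod_p_inj h1 h2 h))
  · exact FG_cycle hp hodd _ (cast_nat_ne_zero (by rw [Nat.mod_eq_of_lt (by omega)]; omega))
  · obtain ⟨c, hc, he⟩ := FG_cycle hp hodd (((k' : ℕ) : ZMod p))
      (cast_nat_ne_zero (a := ((k : ℕ) - p + 1 : ℕ)) (by rw [Nat.mod_eq_of_lt (by omega)]; omega))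
    exact ⟨c, hc, fun m => by rw [Set.union_comm]; exact he m⟩
  · exact GG_cycle hp hodd (fun h => hvne (by have := cast_mod_p_inj (by omega) (by omega) h; omega))
-- chunk8 : transport and odd assembly
section Transport
variable {V V' : Type*}

lemma perfect_transport (φ : V ≃ V') {M : Set (Sym2 V)}
    (h : IsPerfectMatchingSet (completeGraph V) M) :
    IsPerfectMatchingSet (completeGraph V') (Sym2.map φ '' M) := by
  obtain ⟨⟨hsub, hpair⟩, hcov⟩ := h
  refine ⟨⟨?_, ?_⟩, ?_⟩
  · rintro e' ⟨e, he, rfl⟩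
    have hee := hsub he
    induction e using Sym2.ind with
    | _ a b =>
      rw [SimpleGraph.mem_edgeSet] at hee
      rw [Sym2.map_pair_eq, SimpleGraph.mem_edgeSet]
      exact fun hh => hee (φ.injective hh)
  · rintro e1' ⟨e1, he1, rfl⟩ e2' ⟨e2, he2, rfl⟩ hne v' hv1 hv2
    have hne' : e1 ≠ e2 := fun h => hne (by rw [h])
    rw [Sym2.mem_map] at hv1 hv2
    obtain ⟨a1, ha1, hva1⟩ := hv1
    obtain ⟨a2, ha2, hva2⟩ := hv2
    have : a1 = a2 := φ.injective (hva1.trans hva2.symm)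
    subst this
    exact hpair e1 he1 e2 he2 hne' a1 ha1 ha2
  · intro v'
    obtain ⟨e, he, hv⟩ := hcov (φ.symm v')
    refine ⟨Sym2.map φ e, ⟨e, he, rfl⟩, ?_⟩
    rw [Sym2.mem_map]
    exact ⟨φ.symm v', hv, φ.apply_symm_apply v'⟩

lemma edgeSet_transport (φ : V ≃ V') :
    Sym2.map φ '' (completeGraph V).edgeSet = (completeGraph V').edgeSet := by
  apply Set.Subset.antisymm
  · rintro e' ⟨e, he, rfl⟩
    induction e using Sym2.ind with
    | _ a b =>
      rw [SimpleGraph.mem_edgeSet] at he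
      rw [Sym2.map_pair_eq, SimpleGraph.mem_edgeSet]
      exact fun hh => he (φ.injective hh)
  · intro e' he'
    induction e' using Sym2.ind with
    | _ a b =>
      rw [SimpleGraph.mem_edgeSet] at he'
      refine ⟨s(φ.symm a, φ.symm b), ?_, ?_⟩
      · rw [SimpleGraph.mem_edgeSet]
        exact fun hh => he' (by rw [← φ.apply_symm_apply a, ← φ.apply_symm_apply b, hh])
      · rw [Sym2.map_pair_eq, φ.apply_symm_apply, φ.apply_symm_apply]

end Transport

lemma kotzig_odd {p : ℕ} (hp : p.Prime) (hodd : Odd p) :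
    ∃ M : Fin (2 * p - 1) → Set (Sym2 (Fin (2 * p))),
      (∀ i, IsPerfectMatchingSet (completeGraph (Fin (2 * p))) (M i)) ∧
      (∀ i j, i ≠ j → Disjoint (M i) (M j)) ∧
      (⋃ i, M i) = (completeGraph (Fin (2 * p))).edgeSet ∧
      (∀ i j, i ≠ j →
        ∃ (u : Fin (2 * p)) (w : (completeGraph (Fin (2 * p))).Walk u u),
          w.IsHamiltonianCycle ∧
          ∀ e : Sym2 (Fin (2 * p)), e ∈ w.edges ↔ e ∈ M i ∪ M j) := by
  have hp3 : 3 ≤ p := odd_prime_ge3 hp hodd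
  haveI : NeZero p := ⟨by omega⟩
  let φ : (ZMod p × Bool) ≃ Fin (2 * p) :=
    Fintype.equivOfCardEq (by simp [ZMod.card, Nat.mul_comm])
  refine ⟨fun k => Sym2.map φ '' (msel p k), ?_, ?_, ?_, ?_⟩
  · exact fun k => perfect_transport φ (msel_perfect hp hodd k)
  · exact fun k k' hkk => Set.disjoint_image_of_injective (Sym2.map.injective φ.injective)
      (msel_disjoint hp hodd hkk)
  · rw [← Set.image_iUnion, msel_union hp hodd, edgeSet_transport]
  · intro k k' hkk
    obtain ⟨c, hc, he⟩ := msel_cycle hp hodd hkk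
    refine ham_cycle_of_zmod_cycle (n := 2 * p) (by omega) _ _
      (perfect_transport φ (msel_perfect hp hodd k))
      (perfect_transport φ (msel_perfect hp hodd k'))
      (fun m => φ (c m)) (φ.bijective.comp hc) ?_
    intro m
    rw [← Sym2.map_pair_eq, ← Set.image_union]
    exact ⟨_, he m, rfl⟩
-- chunk9 : p = 2
def Mk2 (v : ZMod 2 × ZMod 2) : Set (Sym2 (ZMod 2 × ZMod 2)) := {e | ∃ x, e = s(x, x + v)}

instance (v : ZMod 2 × ZMod 2) (e : Sym2 (ZMod 2 × ZMod 2)) : Decidable (e ∈ Mk2 v) :=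
  inferInstanceAs (Decidable (∃ x, e = s(x, x + v)))

instance (v w : ZMod 2 × ZMod 2) (e : Sym2 (ZMod 2 × ZMod 2)) :
    Decidable (e ∈ Mk2 v ∪ Mk2 w) :=
  inferInstanceAs (Decidable (e ∈ Mk2 v ∨ e ∈ Mk2 w))

def vsel : Fin 3 → ZMod 2 × ZMod 2 := ![(0, 1), (1, 0), (1, 1)]

def cyc2 (v w : ZMod 2 × ZMod 2) : ZMod 4 → ZMod 2 × ZMod 2 := fun m =>
  if m.val = 0 then 0 else if m.val = 1 then v else if m.val = 2 then v + w else w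

lemma kotzig_two :
    ∃ M : Fin (2 * 2 - 1) → Set (Sym2 (Fin (2 * 2))),
      (∀ i, IsPerfectMatchingSet (completeGraph (Fin (2 * 2))) (M i)) ∧
      (∀ i j, i ≠ j → Disjoint (M i) (M j)) ∧
      (⋃ i, M i) = (completeGraph (Fin (2 * 2))).edgeSet ∧
      (∀ i j, i ≠ j →
        ∃ (u : Fin (2 * 2)) (w : (completeGraph (Fin (2 * 2))).Walk u u),
          w.IsHamiltonianCycle ∧
          ∀ e : Sym2 (Fin (2 * 2)), e ∈ w.edges ↔ e ∈ M i ∪ M j) := by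
  let φ : (ZMod 2 × ZMod 2) ≃ Fin (2 * 2) := Fintype.equivOfCardEq (by simp [ZMod.card])
  have hperf : ∀ k : Fin (2 * 2 - 1),
      IsPerfectMatchingSet (completeGraph (ZMod 2 × ZMod 2)) (Mk2 (vsel k)) := by
    intro k
    refine ⟨⟨?_, ?_⟩, ?_⟩
    · intro e he
      rw [completeGraph_eq_top, edgeSet_top]
      revert he
      revert e
      fin_cases k <;> decide
    · fin_cases k <;> decide
    · fin_cases k <;> simp only [CoveredBy] <;> decide
  refine ⟨fun k => Sym2.map φ '' (Mk2 (vsel k)), ?_, ?_, ?_, ?_⟩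
  · exact fun k => perfect_transport φ (hperf k)
  · intro k k' hkk
    apply Set.disjoint_image_of_injective (Sym2.map.injective φ.injective)
    rw [Set.disjoint_left]
    fin_cases k <;> fin_cases k' <;>
      first
      | exact absurd rfl hkk
      | decide
  · rw [← Set.image_iUnion]
    have hU : (⋃ k : Fin (2 * 2 - 1), Mk2 (vsel k))
        = (completeGraph (ZMod 2 × ZMod 2)).edgeSet := by
      ext e
      rw [Set.mem_iUnion, completeGraph_eq_top, edgeSet_top]
      exact (by decide :
        ∀ e : Sym2 (ZMod 2 × ZMod 2), (∃ k : Fin 3, e ∈ Mk2 (vsel k)) ↔ ¬e.IsDiag) e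
    rw [hU, edgeSet_transport]
  · intro k k' hkk
    have hcyc : ∃ c : ZMod (2 * 2) → ZMod 2 × ZMod 2, Function.Bijective c ∧
        ∀ m, s(c m, c (m + 1)) ∈ Mk2 (vsel k) ∪ Mk2 (vsel k') := by
      fin_cases k <;> fin_cases k' <;>
        first
        | exact absurd rfl hkk
        | exact ⟨cyc2 (vsel 0) (vsel 1), by decide, by decide⟩
        | exact ⟨cyc2 (vsel 0) (vsel 2), by decide, by decide⟩
        | exact ⟨cyc2 (vsel 1) (vsel 0), by decide, by decide⟩
        | exact ⟨cyc2 (vsel 1) (vsel 2), by decide, by decide⟩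
        | exact ⟨cyc2 (vsel 2) (vsel 0), by decide, by decide⟩
        | exact ⟨cyc2 (vsel 2) (vsel 1), by decide, by decide⟩
    obtain ⟨c, hc, he⟩ := hcyc
    refine ham_cycle_of_zmod_cycle (n := 2 * 2) (by norm_num) _ _
      (perfect_transport φ (hperf k)) (perfect_transport φ (hperf k'))
      (fun m => φ (c m)) (φ.bijective.comp hc) ?_
    intro m
    rw [← Sym2.map_pair_eq, ← Set.image_union]
    exact ⟨_, he m, rfl⟩

end KotzigAux

/-- **Theorem (Kotzig).** For every prime `p`, the complete graph `K_{2p}` can be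
decomposed into `2p - 1` perfect matchings such that the union of any two of these
matchings forms a Hamiltonian cycle of `K_{2p}`. -/
theorem kotzig_perfect_one_factorization (p : ℕ) (hp : p.Prime) :
    ∃ M : Fin (2 * p - 1) → Set (Sym2 (Fin (2 * p))),
      (∀ i, IsPerfectMatchingSet (completeGraph (Fin (2 * p))) (M i)) ∧
      (∀ i j, i ≠ j → Disjoint (M i) (M j)) ∧
      (⋃ i, M i) = (completeGraph (Fin (2 * p))).edgeSet ∧
      (∀ i j, i ≠ j →
        ∃ (u : Fin (2 * p)) (w : (completeGraph (Fin (2 * p))).Walk u u),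
          w.IsHamiltonianCycle ∧
          ∀ e : Sym2 (Fin (2 * p)), e ∈ w.edges ↔ e ∈ M i ∪ M j) := by
  rcases eq_or_ne p 2 with rfl | hne
  · exact KotzigAux.kotzig_two
  · exact KotzigAux.kotzig_odd hp (hp.odd_of_ne_two hne)
end
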